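/- arXiv:1204.3869 — 4 statements merged into one kernel-verified Lean document; each statement's English description precedes it below -/
import Mathlib

section
/- The set 𝔅(X)-indexed family {Q_B : B ∈ 𝔅(X)} is a basis of the vector space 𝒫(X). -/
noncomputable section

variable {r N : ℕ}

/-- `p_u`, the degree-one polynomial associated with the vector `u ∈ ℝ^r`. -/
def linPoly {r : ℕ} (u : Fin r → ℝ) : MvPolynomial (Fin r) ℝ :=
  ∑ i, MvPolynomial.C (u i) * MvPolynomial.X i

/-- `p_Y = ∏_{i ∈ Y} p_{X i}` for a sublist `Y` of the list `X`. -/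
def prodPoly {r N : ℕ} (X : Fin N → Fin r → ℝ) (Y : Finset (Fin N)) : MvPolynomial (Fin r) ℝ :=
  ∏ i ∈ Y, linPoly (X i)

/-- The pairing `⟨p, f⟩ = (p(∂/∂t₁,…,∂/∂t_r) f)(0)`, written via coefficients:
`⟨p,f⟩ = ∑_α α! · p_α · f_α`. -/
def pairing {r : ℕ} (p f : MvPolynomial (Fin r) ℝ) : ℝ :=
  ∑ α ∈ p.support, (∏ i, ((α i).factorial : ℝ)) * p.coeff α * f.coeff α

lemma pairing_zero {r : ℕ} (q : MvPolynomial (Fin r) ℝ) : pairing q 0 = 0 := by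
  simp [pairing]

lemma pairing_add {r : ℕ} (q f g : MvPolynomial (Fin r) ℝ) :
    pairing q (f + g) = pairing q f + pairing q g := by
  unfold pairing
  rw [← Finset.sum_add_distrib]
  exact Finset.sum_congr rfl fun α _ => by rw [MvPolynomial.coeff_add]; ring

lemma pairing_smul {r : ℕ} (q : MvPolynomial (Fin r) ℝ) (c : ℝ) (f : MvPolynomial (Fin r) ℝ) :
    pairing q (c • f) = c * pairing q f := by
  unfold pairing
  rw [Finset.mul_sum]
  exact Finset.sum_congr rfl fun α _ => by rw [MvPolynomial.coeff_smul, smul_eq_mul]; ring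

/-- The kernel (Macaulay inverse system) of an ideal `I`:
all polynomials annihilated (in the sense of the pairing) by every element of `I`. -/
def kerIdeal {r : ℕ} (I : Ideal (MvPolynomial (Fin r) ℝ)) :
    Submodule ℝ (MvPolynomial (Fin r) ℝ) where
  carrier := {f | ∀ q ∈ I, pairing q f = 0}
  add_mem' := fun hf hg q hq => by
    rw [pairing_add, hf q hq, hg q hq, add_zero]
  zero_mem' := fun q _ => pairing_zero q
  smul_mem' := fun c f hf q hq => by
    rw [pairing_smul, hf q hq, mul_zero]

section Lists

variable {M : Type*} [AddCommGroup M] [Module ℝ M]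

/-- `B ⊆ G` is (the index set of) a sublist of the list `v` restricted to the ground set `G`
that is a basis of the ambient space. -/
def basesOn (v : Fin N → M) (G : Finset (Fin N)) : Set (Finset (Fin N)) :=
  {B | B ⊆ G ∧ LinearIndependent ℝ ((B : Set (Fin N)).restrict v) ∧
    Submodule.span ℝ (v '' (B : Set (Fin N))) = ⊤}

/-- `j` is externally active with respect to the basis `B`:
`v j ∈ span {v e : e ∈ B, e ≤ j}` and `j ∉ B`. -/
def isExtActive (v : Fin N → M) (B : Finset (Fin N)) (j : Fin N) : Prop :=
  j ∉ B ∧ v j ∈ Submodule.span ℝ (v '' {e : Fin N | e ∈ B ∧ e ≤ j})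

open Classical in
/-- The set `E(B)` of externally active elements (within the ground set `G`). -/
def extSetOn (v : Fin N → M) (G B : Finset (Fin N)) : Finset (Fin N) :=
  G.filter (fun j => isExtActive v B j)

/-- `C` is a cocircuit w.r.t. the collection of bases `𝔅`: an inclusion-minimal
sublist of the ground set `G` intersecting every basis in `𝔅`. -/
def isCocircuitOn (G : Finset (Fin N)) (𝔅 : Set (Finset (Fin N))) (C : Finset (Fin N)) : Prop :=
  C ⊆ G ∧ (∀ B ∈ 𝔅, (C ∩ B).Nonempty) ∧
    ∀ C' ⊆ C, (∀ B ∈ 𝔅, (C' ∩ B).Nonempty) → C' = C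

/-- A set of bases `𝔅` of the list `v` has the forward exchange property. -/
def forwardExchange (v : Fin N → M) (𝔅 : Set (Finset (Fin N))) : Prop :=
  ∀ B ∈ 𝔅, ∀ b ∈ B, ∀ j : Fin N,
    v j ∈ Submodule.span ℝ (v '' {e : Fin N | e ∈ B ∧ e ≤ b}) →
    v j ∉ Submodule.span ℝ (v '' {e : Fin N | e ∈ B ∧ e < b}) →
    ¬ isExtActive v B j →
    insert j (B.erase b) ∈ 𝔅

end Lists

/-- The ideal `𝒥` generated by the cocircuit polynomials `p_C`. -/
def Jideal (X : Fin N → Fin r → ℝ) (G : Finset (Fin N)) (𝔅 : Set (Finset (Fin N))) :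
    Ideal (MvPolynomial (Fin r) ℝ) :=
  Ideal.span {p | ∃ C : Finset (Fin N), isCocircuitOn G 𝔅 C ∧ p = prodPoly X C}

/-- The generalised `𝒟`-space: the kernel of the cocircuit ideal. -/
def Dspace (X : Fin N → Fin r → ℝ) (G : Finset (Fin N)) (𝔅 : Set (Finset (Fin N))) :
    Submodule ℝ (MvPolynomial (Fin r) ℝ) :=
  kerIdeal (Jideal X G 𝔅)

/-- `Q_B := p_{X∖(B ∪ E(B))}` (within the ground set `G`). -/
def QB (X : Fin N → Fin r → ℝ) (G B : Finset (Fin N)) : MvPolynomial (Fin r) ℝ :=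
  prodPoly X (G \ (B ∪ extSetOn X G B))

/-- The central `𝒫`-space: the span of `p_Y` over sublists `Y` of `G` whose complement spans. -/
def PspaceOn (X : Fin N → Fin r → ℝ) (G : Finset (Fin N)) :
    Submodule ℝ (MvPolynomial (Fin r) ℝ) :=
  Submodule.span ℝ {p | ∃ Y : Finset (Fin N), Y ⊆ G ∧
    Submodule.span ℝ (X '' ((G \ Y : Finset (Fin N)) : Set (Fin N))) = ⊤ ∧ p = prodPoly X Y}

/-- The generalised `𝒫`-space `𝒫(X,𝔅') = span {Q_B : B ∈ 𝔅'}`. -/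
def PspaceB (X : Fin N → Fin r → ℝ) (G : Finset (Fin N)) (𝔅 : Set (Finset (Fin N))) :
    Submodule ℝ (MvPolynomial (Fin r) ℝ) :=
  Submodule.span ℝ {p | ∃ B ∈ 𝔅, p = QB X G B}

/-- The directional derivative `D_u = ∑ i, uᵢ ∂/∂tᵢ` as a linear map. -/
def dirDeriv {r : ℕ} (u : Fin r → ℝ) :
    MvPolynomial (Fin r) ℝ →ₗ[ℝ] MvPolynomial (Fin r) ℝ :=
  ∑ i, u i • (MvPolynomial.pderiv i).toLinearMap

end

noncomputable section Aux

open MvPolynomial Submodule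

/-- `linPoly` as a linear map. -/
def linPolyL (r : ℕ) : (Fin r → ℝ) →ₗ[ℝ] MvPolynomial (Fin r) ℝ where
  toFun := linPoly
  map_add' u v := by
    simp only [linPoly, Pi.add_apply, map_add, add_mul, Finset.sum_add_distrib]
  map_smul' c u := by
    simp only [linPoly, Pi.smul_apply, smul_eq_mul, map_mul, RingHom.id_apply,
      Finset.smul_sum, MvPolynomial.smul_eq_C_mul, mul_assoc]

lemma linPoly_coeff {r : ℕ} (u : Fin r → ℝ) (i : Fin r) :
    (linPoly u).coeff (Finsupp.single i 1) = u i := by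
  simp only [linPoly, MvPolynomial.coeff_sum, MvPolynomial.coeff_C_mul, MvPolynomial.coeff_X']
  rw [Finset.sum_eq_single i] <;> simp +contextual [Finsupp.single_left_inj]

lemma linPoly_eq_zero_iff {r : ℕ} (u : Fin r → ℝ) : linPoly u = 0 ↔ u = 0 := by
  constructor
  · intro h
    funext i
    have := linPoly_coeff u i
    rw [h] at this
    simpa using this.symm
  · rintro rfl
    simp [linPoly]

lemma linPoly_zero {r : ℕ} : linPoly (0 : Fin r → ℝ) = 0 := (linPoly_eq_zero_iff 0).2 rfl

end Aux
noncomputable section Contr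

open MvPolynomial Submodule

variable {r : ℕ} (v : Fin (r + 1) → ℝ) (i₀ : Fin (r + 1))

/-- The projection `ℝ^{r+1} → ℝ^r` with kernel spanned by `v` (when `v i₀ ≠ 0`). -/
def contrMap : (Fin (r + 1) → ℝ) →ₗ[ℝ] (Fin r → ℝ) :=
  LinearMap.pi fun j => LinearMap.proj (i₀.succAbove j) -
    (v (i₀.succAbove j) / v i₀) • LinearMap.proj i₀

lemma contrMap_apply (u : Fin (r + 1) → ℝ) (j : Fin r) :
    contrMap v i₀ u j = u (i₀.succAbove j) - v (i₀.succAbove j) / v i₀ * u i₀ := rfl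

variable (hv : v i₀ ≠ 0)

include hv

lemma contrMap_self : contrMap v i₀ v = 0 := by
  funext j
  rw [contrMap_apply]
  field_simp
  simp

lemma contrMap_ker (u : Fin (r + 1) → ℝ) (h : contrMap v i₀ u = 0) :
    u = (u i₀ / v i₀) • v := by
  funext i
  rcases eq_or_ne i i₀ with rfl | hne
  · simp only [Pi.smul_apply, smul_eq_mul]
    field_simp
  · obtain ⟨j, rfl⟩ := Fin.exists_succAbove_eq hne
    have := congrFun h j
    rw [contrMap_apply] at this
    simp only [Pi.zero_apply] at this
    simp only [Pi.smul_apply, smul_eq_mul]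
    linear_combination this

lemma contrMap_ker_eq : LinearMap.ker (contrMap v i₀) = span ℝ {v} := by
  apply le_antisymm
  · intro u hu
    rw [LinearMap.mem_ker] at hu
    rw [contrMap_ker v i₀ hv u hu]
    exact smul_mem _ _ (subset_span rfl)
  · rw [span_le, Set.singleton_subset_iff]
    exact contrMap_self v i₀ hv

omit hv in
lemma contrMap_surj : Function.Surjective (contrMap v i₀) := by
  rw [← LinearMap.range_eq_top, eq_top_iff, ← (Pi.basisFun ℝ (Fin r)).span_eq, span_le]
  rintro - ⟨j, rfl⟩
  refine ⟨Pi.single (i₀.succAbove j) 1, ?_⟩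
  funext j'
  rw [contrMap_apply]
  have h1 : Pi.single (M := fun _ : Fin (r + 1) => ℝ) (i₀.succAbove j) 1 i₀ = 0 :=
    Pi.single_eq_of_ne (Fin.succAbove_ne i₀ j).symm 1
  rw [h1, Pi.basisFun_apply]
  rcases eq_or_ne j j' with rfl | hne
  · simp
  · rw [Pi.single_eq_of_ne (fun h => hne (i₀.succAbove_right_injective h).symm),
      Pi.single_eq_of_ne (Ne.symm hne)]
    ring

/-- Key span transfer through the contraction map. -/
lemma contrMap_mem_span (S : Set (Fin (r + 1) → ℝ)) (u : Fin (r + 1) → ℝ) :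
    contrMap v i₀ u ∈ span ℝ (contrMap v i₀ '' S) ↔ u ∈ span ℝ (insert v S) := by
  rw [← Submodule.map_span, span_insert]
  constructor
  · intro h
    have h2 : u ∈ Submodule.comap (contrMap v i₀) (Submodule.map (contrMap v i₀) (span ℝ S)) :=
      h
    rw [Submodule.comap_map_eq, contrMap_ker_eq v i₀ hv] at h2
    rw [sup_comm]
    exact h2
  · intro h
    have : contrMap v i₀ u ∈ Submodule.map (contrMap v i₀) (span ℝ {v} ⊔ span ℝ S) :=
      ⟨u, h, rfl⟩
    rw [Submodule.map_sup, Submodule.map_span, Set.image_singleton,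
      contrMap_self v i₀ hv, span_zero_singleton, bot_sup_eq] at this
    exact this

lemma contrMap_span_top (S : Set (Fin (r + 1) → ℝ)) :
    span ℝ (contrMap v i₀ '' S) = ⊤ ↔ span ℝ (insert v S) = ⊤ := by
  constructor
  · intro h
    rw [eq_top_iff]
    intro u _
    rw [← contrMap_mem_span v i₀ hv S u, h]
    trivial
  · intro h
    rw [← Submodule.map_span, eq_top_iff]
    intro w _
    obtain ⟨u, rfl⟩ := contrMap_surj v i₀ w
    have hu : u ∈ span ℝ (insert v S) := h ▸ trivial
    rw [span_insert] at hu
    have : contrMap v i₀ u ∈ Submodule.map (contrMap v i₀) (span ℝ {v} ⊔ span ℝ S) :=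
      ⟨u, hu, rfl⟩
    rwa [Submodule.map_sup, Submodule.map_span, Set.image_singleton,
      contrMap_self v i₀ hv, span_zero_singleton, bot_sup_eq] at this

end Contr
noncomputable section ContrHom

open MvPolynomial Submodule

variable {r : ℕ} (v : Fin (r + 1) → ℝ) (i₀ : Fin (r + 1))

/-- Restriction of polynomials to the hyperplane `⟨v, s⟩ = 0` (suitably parametrised),
an algebra homomorphism matching `contrMap` on linear polynomials. -/
def contrHom : MvPolynomial (Fin (r + 1)) ℝ →ₐ[ℝ] MvPolynomial (Fin r) ℝ :=
  aeval (Fin.insertNth i₀ (-(∑ j, C (v (i₀.succAbove j) / v i₀) * X j)) fun j => X j)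

lemma contrHom_linPoly (u : Fin (r + 1) → ℝ) :
    contrHom v i₀ (linPoly u) = linPoly (contrMap v i₀ u) := by
  simp only [contrHom, linPoly, map_sum, map_mul, aeval_C, aeval_X, algebraMap_eq]
  rw [Fin.sum_univ_succAbove _ i₀]
  simp only [Fin.insertNth_apply_same, Fin.insertNth_apply_succAbove]
  rw [mul_neg, Finset.mul_sum, neg_add_eq_sub, ← Finset.sum_sub_distrib]
  refine Finset.sum_congr rfl fun j _ => ?_
  rw [contrMap_apply, map_sub, map_mul]
  ring

lemma contrHom_prodPoly {N : ℕ} (Xv : Fin N → Fin (r + 1) → ℝ) (Y : Finset (Fin N)) :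
    contrHom v i₀ (prodPoly Xv Y) = prodPoly (fun n => contrMap v i₀ (Xv n)) Y := by
  rw [prodPoly, map_prod, prodPoly]
  exact Finset.prod_congr rfl fun n _ => contrHom_linPoly v i₀ (Xv n)

end ContrHom
noncomputable section Indep

open MvPolynomial Submodule

lemma extSetOn_erase {N : ℕ} {M : Type*} [AddCommGroup M] [Module ℝ M]
    (v : Fin N → M) (G B : Finset (Fin N)) (g : Fin N) :
    extSetOn v (G.erase g) B = (extSetOn v G B).erase g := by
  classical
  simp only [extSetOn]
  rw [Finset.filter_erase]

theorem indep_key {N : ℕ} (G : Finset (Fin N)) :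
    ∀ (r : ℕ) (X : Fin N → Fin r → ℝ) (S : Finset (Finset (Fin N))) (c : Finset (Fin N) → ℝ),
      (∀ B ∈ S, B ∈ basesOn X G) → ∑ B ∈ S, c B • QB X G B = 0 → ∀ B ∈ S, c B = 0 := by
  classical
  induction G using Finset.strongInduction with
  | _ G IH =>
  intro r X S c hS hsum B₀ hB₀
  rcases G.eq_empty_or_nonempty with rfl | hG
  · -- empty ground set
    have hBempty : ∀ B ∈ S, B = ∅ := fun B hB => Finset.subset_empty.1 (hS B hB).1
    have hB₀e := hBempty B₀ hB₀
    subst hB₀e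
    have hSsub : S = {∅} := by
      apply Finset.eq_singleton_iff_unique_mem.2
      exact ⟨hB₀, fun B hB => hBempty B hB⟩
    rw [hSsub, Finset.sum_singleton] at hsum
    have hQ : QB X ∅ (∅ : Finset (Fin N)) = 1 := by
      simp [QB, prodPoly]
    rw [hQ, MvPolynomial.smul_eq_C_mul, mul_one] at hsum
    exact (map_eq_zero_iff _ (MvPolynomial.C_injective _ _)).1 hsum
  · -- nonempty ground set: g = min G
    set g := G.min' hG with hgdef
    have hgG : g ∈ G := G.min'_mem hG
    have hmin : ∀ e ∈ G, g ≤ e := fun e he => G.min'_le e he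
    by_cases hXg : X g = 0
    · -- case (a): X g = 0, delete g
      have hgnB : ∀ B ∈ S, g ∉ B := by
        intro B hB hgB
        exact (hS B hB).2.1.ne_zero ⟨g, hgB⟩
          (show ((B : Set (Fin N)).restrict X) ⟨g, hgB⟩ = 0 from hXg)
      have hgE : ∀ B ∈ S, g ∈ extSetOn X G B := by
        intro B hB
        refine Finset.mem_filter.2 ⟨hgG, hgnB B hB, ?_⟩
        rw [hXg]; exact zero_mem _
      have hQ : ∀ B ∈ S, QB X G B = QB X (G.erase g) B := by
        intro B hB
        rw [QB, QB, extSetOn_erase]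
        congr 1
        ext j
        by_cases hj : j = g
        · subst hj
          simp [hgE B hB]
        · simp only [Finset.mem_sdiff, Finset.mem_union, Finset.mem_erase, hj]
          tauto
      have hS' : ∀ B ∈ S, B ∈ basesOn X (G.erase g) := by
        intro B hB
        obtain ⟨h1, h2, h3⟩ := hS B hB
        exact ⟨Finset.subset_erase.2 ⟨h1, hgnB B hB⟩, h2, h3⟩
      refine IH (G.erase g) (Finset.erase_ssubset hgG) r X S c hS' ?_ B₀ hB₀
      rw [← hsum]
      exact (Finset.sum_congr rfl fun B hB => by rw [hQ B hB]).symm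
    · -- case (b): X g ≠ 0, contract g
      rcases r with _ | r
      · exact absurd (Subsingleton.elim _ _) hXg
      obtain ⟨i₀, hi₀⟩ : ∃ i, X g i ≠ 0 := by
        by_contra h
        push_neg at h
        exact hXg (funext h)
      set v := X g with hvdef
      set X' : Fin N → Fin r → ℝ := fun n => contrMap v i₀ (X n) with hX'def
      -- g is never externally active
      have hgE : ∀ B : Finset (Fin N), B ⊆ G → g ∉ B → g ∉ extSetOn X G B := by
        intro B hBG hgB hmem
        have h2 := (Finset.mem_filter.1 hmem).2.2
        have hempty : {e : Fin N | e ∈ B ∧ e ≤ g} = (∅ : Set (Fin N)) := by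
          ext e
          simp only [Set.mem_setOf_eq, Set.mem_empty_iff_false, iff_false, not_and]
          intro heB hle
          exact hgB (le_antisymm hle (hmin e (hBG heB)) ▸ heB)
        rw [hempty] at h2
        simp only [Set.image_empty, Submodule.span_empty, Submodule.mem_bot] at h2
        exact hXg h2
      -- external activity transfer under contraction
      have hext : ∀ B : Finset (Fin N), g ∈ B → ∀ j ∈ G, j ∉ B →
          (isExtActive X' (B.erase g) j ↔ isExtActive X B j) := by
        intro B hgB j hjG hjB
        have hjBe : j ∉ B.erase g := fun h => hjB (Finset.mem_of_mem_erase h)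
        have hset : {e : Fin N | e ∈ B ∧ e ≤ j} =
            insert g {e : Fin N | e ∈ B.erase g ∧ e ≤ j} := by
          ext e
          simp only [Set.mem_setOf_eq, Set.mem_insert_iff, Finset.mem_erase]
          constructor
          · rintro ⟨heB, hle⟩
            by_cases he : e = g
            · exact Or.inl he
            · exact Or.inr ⟨⟨he, heB⟩, hle⟩
          · rintro (rfl | ⟨⟨-, heB⟩, hle⟩)
            · exact ⟨hgB, hmin j hjG⟩
            · exact ⟨heB, hle⟩
        unfold isExtActive
        rw [iff_true_intro hjBe, iff_true_intro hjB, true_and, true_and]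
        have himg : X' '' {e : Fin N | e ∈ B.erase g ∧ e ≤ j} =
            contrMap v i₀ '' (X '' {e : Fin N | e ∈ B.erase g ∧ e ≤ j}) :=
          (Set.image_image _ _ _).symm
        rw [himg]
        have : X' j = contrMap v i₀ (X j) := rfl
        rw [this, contrMap_mem_span v i₀ hi₀, ← Set.image_insert_eq, ← hset]
      -- bases transfer under contraction
      have hbase : ∀ B ∈ S, g ∈ B → B.erase g ∈ basesOn X' (G.erase g) := by
        intro B hB hgB
        obtain ⟨hBG, hli, hsp⟩ := hS B hB
        refine ⟨Finset.erase_subset_erase _ hBG, ?_, ?_⟩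
        · rw [show (((B.erase g : Finset (Fin N)) : Set (Fin N)).restrict X') =
            X' ∘ (↑) from rfl, linearIndependent_comp_subtype_iff, linearIndepOn_iff]
          intro l hl hl0
          have hli' : ∀ l ∈ Finsupp.supported ℝ ℝ (B : Set (Fin N)),
              Finsupp.linearCombination ℝ X l = 0 → l = 0 :=
            (linearIndependent_comp_subtype_iff.trans linearIndepOn_iff).1 hli
          have hker : contrMap v i₀ (Finsupp.linearCombination ℝ X l) = 0 := by
            rw [← hl0]
            exact Finsupp.apply_linearCombination ℝ (contrMap v i₀) X l
          have := contrMap_ker v i₀ hi₀ _ hker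
          set t := Finsupp.linearCombination ℝ X l i₀ / v i₀ with htdef
          have hcomb : Finsupp.linearCombination ℝ X (l - Finsupp.single g t) = 0 := by
            rw [map_sub, this, Finsupp.linearCombination_single, sub_self]
          have hsupp : (l - Finsupp.single g t) ∈ Finsupp.supported ℝ ℝ (B : Set (Fin N)) := by
            rw [Finsupp.mem_supported]
            intro x hx
            have hx' := Finsupp.mem_support_iff.1 (Finset.mem_coe.1 hx)
            by_cases hxg : x = g
            · exact Finset.mem_coe.2 (hxg ▸ hgB)
            · have hxl : l x ≠ 0 := by
                intro h0
                apply hx'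
                rw [Finsupp.sub_apply, h0, Finsupp.single_apply, if_neg (fun h => hxg h.symm),
                  sub_zero]
              have := (Finsupp.mem_supported ℝ l).1 hl
                (Finset.mem_coe.2 (Finsupp.mem_support_iff.2 hxl))
              exact Finset.mem_coe.2
                (Finset.mem_of_mem_erase (Finset.mem_coe.1 this))
          have hlz := hli' _ hsupp hcomb
          have hlg : l g = 0 := by
            by_contra h
            exact (Finset.notMem_erase g B) (Finset.mem_coe.1
              ((Finsupp.mem_supported ℝ l).1 hl (Finset.mem_coe.2 (Finsupp.mem_support_iff.2 h))))
          ext x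
          by_cases hxg : x = g
          · rw [hxg, hlg]; rfl
          · have := congrFun (congrArg (⇑) hlz) x
            rw [Finsupp.sub_apply, Finsupp.single_apply, if_neg (fun h => hxg h.symm),
              sub_zero] at this
            exact this
        · have himg : X' '' ↑(B.erase g) = contrMap v i₀ '' (X '' ↑(B.erase g)) :=
            (Set.image_image _ _ _).symm
          rw [himg, contrMap_span_top v i₀ hi₀, ← Set.image_insert_eq]
          rw [Finset.coe_erase, Set.insert_diff_singleton, Set.insert_eq_of_mem (Finset.mem_coe.2 hgB)]
          exact hsp
      -- QB transfer for bases containing g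
      have hQBc : ∀ B ∈ S, g ∈ B →
          contrHom v i₀ (QB X G B) = QB X' (G.erase g) (B.erase g) := by
        intro B hB hgB
        rw [QB, contrHom_prodPoly, QB]
        show prodPoly X' _ = prodPoly X' _
        congr 1
        ext j
        by_cases hjG : j ∈ G
        · by_cases hjB : j ∈ B
          · simp only [Finset.mem_sdiff, Finset.mem_union]
            constructor
            · rintro ⟨-, hn⟩
              exact absurd (Or.inl hjB) hn
            · rintro ⟨hge, hn⟩
              exact absurd
                (Or.inl (Finset.mem_erase.2 ⟨(Finset.mem_erase.1 hge).1, hjB⟩)) hn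
          · have hjg : j ≠ g := fun h => hjB (h ▸ hgB)
            have hE : j ∈ extSetOn X' (G.erase g) (B.erase g) ↔ j ∈ extSetOn X G B := by
              simp only [extSetOn, Finset.mem_filter, Finset.mem_erase]
              rw [hext B hgB j hjG hjB]
              tauto
            simp only [Finset.mem_sdiff, Finset.mem_union]
            constructor
            · rintro ⟨-, hn⟩
              push_neg at hn
              refine ⟨Finset.mem_erase.2 ⟨hjg, hjG⟩, ?_⟩
              push_neg
              exact ⟨fun h => hjB (Finset.mem_of_mem_erase h), fun h => absurd (hE.1 h) hn.2⟩
            · rintro ⟨-, hn⟩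
              push_neg at hn
              refine ⟨hjG, ?_⟩
              push_neg
              exact ⟨hjB, fun h => hn.2 (hE.2 h)⟩
        · simp only [Finset.mem_sdiff, Finset.mem_union]
          constructor
          · rintro ⟨h, -⟩
            exact absurd h hjG
          · rintro ⟨h, -⟩
            exact absurd (Finset.mem_erase.1 h).2 hjG
      -- φ kills QB for bases avoiding g
      have hkill : ∀ B ∈ S, g ∉ B → contrHom v i₀ (QB X G B) = 0 := by
        intro B hB hgB
        rw [QB, contrHom_prodPoly]
        apply Finset.prod_eq_zero (i := g)
        · simp only [Finset.mem_sdiff, Finset.mem_union]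
          exact ⟨hgG, by push_neg; exact ⟨hgB, hgE B (hS B hB).1 hgB⟩⟩
        · show linPoly (contrMap v i₀ v) = 0
          rw [contrMap_self v i₀ hi₀, linPoly_zero]
      -- Step 1: contract and use the induction hypothesis
      have h1 : ∑ B ∈ S, c B • contrHom v i₀ (QB X G B) = 0 := by
        have := congrArg (contrHom v i₀) hsum
        rw [map_sum, map_zero] at this
        rw [← this]
        exact Finset.sum_congr rfl fun B _ => by rw [map_smul]
      have h2 : ∑ B ∈ S.filter (fun B => g ∈ B), c B • QB X' (G.erase g) (B.erase g) = 0 := by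
        rw [← h1, Finset.sum_filter]
        apply Finset.sum_congr rfl
        intro B hB
        by_cases hgB : g ∈ B
        · rw [if_pos hgB, hQBc B hB hgB]
        · rw [if_neg hgB, hkill B hB hgB, smul_zero]
      set S₁ := (S.filter (fun B => g ∈ B)).image (fun B => B.erase g) with hS₁def
      have hinj : ∀ B₁ ∈ S.filter (fun B => g ∈ B), ∀ B₂ ∈ S.filter (fun B => g ∈ B),
          B₁.erase g = B₂.erase g → B₁ = B₂ := by
        intro B₁ h₁ B₂ h₂ he
        have hg₁ := (Finset.mem_filter.1 h₁).2
        have hg₂ := (Finset.mem_filter.1 h₂).2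
        rw [← Finset.insert_erase hg₁, ← Finset.insert_erase hg₂, he]
      have h3 : ∑ A ∈ S₁, c (insert g A) • QB X' (G.erase g) A = 0 := by
        rw [hS₁def, Finset.sum_image hinj, ← h2]
        apply Finset.sum_congr rfl
        intro B hB
        rw [Finset.insert_erase (Finset.mem_filter.1 hB).2]
      have hc1 : ∀ B ∈ S, g ∈ B → c B = 0 := by
        intro B hB hgB
        have hmem : B.erase g ∈ S₁ :=
          Finset.mem_image.2 ⟨B, Finset.mem_filter.2 ⟨hB, hgB⟩, rfl⟩
        have := IH (G.erase g) (Finset.erase_ssubset hgG) r X' S₁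
          (fun A => c (insert g A))
          (fun A hA => by
            obtain ⟨B', hB', rfl⟩ := Finset.mem_image.1 hA
            exact hbase B' (Finset.mem_filter.1 hB').1 (Finset.mem_filter.1 hB').2)
          h3 (B.erase g) hmem
        have h' : c (insert g (B.erase g)) = 0 := this
        rwa [Finset.insert_erase hgB] at h'
      -- Step 2: delete and use the induction hypothesis
      have h4 : ∑ B ∈ S.filter (fun B => g ∉ B), c B • QB X G B = 0 := by
        rw [← hsum, Finset.sum_filter]
        apply (Finset.sum_congr rfl fun B hB => ?_).symm
        by_cases hgB : g ∈ B
        · rw [if_neg (by simp [hgB]), hc1 B hB hgB, zero_smul]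
        · rw [if_pos hgB]
      have hfac : ∀ B ∈ S, g ∉ B → QB X G B = linPoly v * QB X (G.erase g) B := by
        intro B hB hgB
        have hgEB := hgE B (hS B hB).1 hgB
        rw [QB, QB, extSetOn_erase, Finset.erase_eq_of_notMem hgEB]
        have hsets : G \ (B ∪ extSetOn X G B) =
            insert g ((G.erase g) \ (B ∪ extSetOn X G B)) := by
          ext j
          by_cases hj : j = g
          · subst hj
            simp only [Finset.mem_sdiff, Finset.mem_union, Finset.mem_insert, true_or,
              iff_true]
            exact ⟨hgG, by push_neg; exact ⟨hgB, hgEB⟩⟩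
          · simp only [Finset.mem_sdiff, Finset.mem_union, Finset.mem_insert, hj,
              Finset.mem_erase, false_or]
            tauto
        rw [hsets, prodPoly, Finset.prod_insert (by simp), ← prodPoly]
      have h5 : ∑ B ∈ S.filter (fun B => g ∉ B), c B • QB X (G.erase g) B = 0 := by
        have h6 : linPoly v * ∑ B ∈ S.filter (fun B => g ∉ B),
            c B • QB X (G.erase g) B = 0 := by
          rw [Finset.mul_sum, ← h4]
          apply Finset.sum_congr rfl
          intro B hB
          obtain ⟨hBS, hgB⟩ := Finset.mem_filter.1 hB
          rw [hfac B hBS hgB, mul_smul_comm]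
        rcases mul_eq_zero.1 h6 with h | h
        · exact absurd ((linPoly_eq_zero_iff v).1 h) hXg
        · exact h
      have hc2 : ∀ B ∈ S, g ∉ B → c B = 0 := by
        intro B hB hgB
        exact IH (G.erase g) (Finset.erase_ssubset hgG) (r + 1) X
          (S.filter (fun B => g ∉ B)) c
          (fun B' hB' => by
            obtain ⟨hB'S, hgB'⟩ := Finset.mem_filter.1 hB'
            obtain ⟨h1', h2', h3'⟩ := hS B' hB'S
            exact ⟨Finset.subset_erase.2 ⟨h1', hgB'⟩, h2', h3'⟩)
          h5 B (Finset.mem_filter.2 ⟨hB, hgB⟩)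
      by_cases hgB₀ : g ∈ B₀
      · exact hc1 B₀ hB₀ hgB₀
      · exact hc2 B₀ hB₀ hgB₀


end Indep
noncomputable section Greedy

open MvPolynomial Submodule

variable {N r : ℕ}

/-- The greedy (lexicographically first) basis contained in `S`. -/
def greedy (X : Fin N → Fin r → ℝ) (S : Finset (Fin N)) : Finset (Fin N) :=
  @Finset.filter _ (fun j => X j ∉ span ℝ (X '' {e : Fin N | e ∈ S ∧ e < j}))
    (Classical.decPred _) S

lemma mem_greedy {X : Fin N → Fin r → ℝ} {S : Finset (Fin N)} {j : Fin N} :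
    j ∈ greedy X S ↔ j ∈ S ∧ X j ∉ span ℝ (X '' {e : Fin N | e ∈ S ∧ e < j}) :=
  @Finset.mem_filter _ _ (Classical.decPred _) _ _

lemma greedy_subset (X : Fin N → Fin r → ℝ) (S : Finset (Fin N)) : greedy X S ⊆ S :=
  fun _ hj => (mem_greedy.1 hj).1

lemma greedy_mem_span (X : Fin N → Fin r → ℝ) (S : Finset (Fin N)) :
    ∀ j ∈ S, X j ∈ span ℝ (X '' {e : Fin N | e ∈ greedy X S ∧ e ≤ j}) := by
  classical
  have key : ∀ n : ℕ, ∀ j ∈ S, (j : ℕ) < n →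
      X j ∈ span ℝ (X '' {e : Fin N | e ∈ greedy X S ∧ e ≤ j}) := by
    intro n
    induction n with
    | zero => exact fun j _ h => absurd h (Nat.not_lt_zero _)
    | succ n IHn =>
      intro j hjS hjn
      by_cases hjB : j ∈ greedy X S
      · exact subset_span ⟨j, ⟨hjB, le_refl j⟩, rfl⟩
      · have hjsp : X j ∈ span ℝ (X '' {e : Fin N | e ∈ S ∧ e < j}) := by
          by_contra h
          exact hjB (mem_greedy.2 ⟨hjS, h⟩)
        refine span_le.2 ?_ hjsp
        rintro - ⟨e, ⟨heS, helt⟩, rfl⟩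
        have heval : (e : ℕ) < n := by
          have := Fin.lt_iff_val_lt_val.1 helt
          omega
        refine span_le.2 ?_ (IHn e heS heval)
        rintro - ⟨e', ⟨he'B, he'le⟩, rfl⟩
        exact subset_span ⟨e', ⟨he'B, le_trans he'le (le_of_lt helt)⟩, rfl⟩
  exact fun j hj => key ((j : ℕ) + 1) j hj (Nat.lt_succ_self _)

lemma greedy_indep (X : Fin N → Fin r → ℝ) (S : Finset (Fin N)) :
    LinearIndependent ℝ (((greedy X S : Finset (Fin N)) : Set (Fin N)).restrict X) := by
  classical
  rw [show (((greedy X S : Finset (Fin N)) : Set (Fin N)).restrict X) =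
    X ∘ (Subtype.val) from rfl, linearIndependent_comp_subtype_iff, linearIndepOn_iff]
  intro l hl hl0
  by_contra hlne
  have hne : l.support.Nonempty := Finsupp.support_nonempty_iff.2 hlne
  set m := l.support.max' hne with hmdef
  have hmB : m ∈ greedy X S :=
    Finset.mem_coe.1 ((Finsupp.mem_supported ℝ l).1 hl
      (Finset.mem_coe.2 (l.support.max'_mem hne)))
  have hlm : l m ≠ 0 := Finsupp.mem_support_iff.1 (l.support.max'_mem hne)
  have hsum0 : ∑ i ∈ l.support, l i • X i = 0 := by
    rw [← hl0, Finsupp.linearCombination_apply, Finsupp.sum]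
  have hXm : X m ∈ span ℝ (X '' {e : Fin N | e ∈ S ∧ e < m}) := by
    have hm : m ∈ l.support := l.support.max'_mem hne
    have hsplit : l m • X m + ∑ i ∈ l.support.erase m, l i • X i = 0 := by
      rw [Finset.add_sum_erase _ (fun i => l i • X i) hm]
      exact hsum0
    have hXmeq : X m = (l m)⁻¹ • (-(∑ i ∈ l.support.erase m, l i • X i)) := by
      rw [← eq_neg_of_add_eq_zero_left hsplit, smul_smul, inv_mul_cancel₀ hlm, one_smul]
    rw [hXmeq]
    apply smul_mem
    apply neg_mem
    apply sum_mem
    intro i hi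
    apply smul_mem
    have hiB : i ∈ greedy X S :=
      Finset.mem_coe.1 ((Finsupp.mem_supported ℝ l).1 hl
        (Finset.mem_coe.2 (Finset.mem_of_mem_erase hi)))
    have hilt : i < m := lt_of_le_of_ne
      (l.support.le_max' i (Finset.mem_of_mem_erase hi)) (Finset.ne_of_mem_erase hi)
    exact subset_span ⟨i, ⟨greedy_subset X S hiB, hilt⟩, rfl⟩
  exact (mem_greedy.1 hmB).2 hXm

lemma greedy_spans (X : Fin N → Fin r → ℝ) (S : Finset (Fin N))
    (hS : span ℝ (X '' (S : Set (Fin N))) = ⊤) :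
    span ℝ (X '' ((greedy X S : Finset (Fin N)) : Set (Fin N))) = ⊤ := by
  rw [eq_top_iff, ← hS, span_le]
  rintro - ⟨j, hjS, rfl⟩
  refine span_le.2 ?_ (greedy_mem_span X S j (Finset.mem_coe.1 hjS))
  rintro - ⟨e, ⟨heB, -⟩, rfl⟩
  exact subset_span ⟨e, Finset.mem_coe.2 heB, rfl⟩

end Greedy
noncomputable section Spanning

open MvPolynomial Submodule

variable {N r : ℕ}

theorem prodPoly_mem_PspaceB (X : Fin N → Fin r → ℝ) :
    ∀ (n : ℕ) (Y : Finset (Fin N)), (∑ i ∈ Y, (i : ℕ)) ≤ n →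
      span ℝ (X '' ((Finset.univ \ Y : Finset (Fin N)) : Set (Fin N))) = ⊤ →
      prodPoly X Y ∈ PspaceB X Finset.univ (basesOn X Finset.univ) := by
  classical
  intro n
  induction n using Nat.strong_induction_on with
  | _ n IHn =>
  intro Y hYn hspan
  set S : Finset (Fin N) := Finset.univ \ Y with hSdef
  set B : Finset (Fin N) := greedy X S with hBdef
  have hBS : B ⊆ S := greedy_subset X S
  have hBnotY : ∀ b ∈ B, b ∉ Y := by
    intro b hb
    have := hBS hb
    rw [hSdef, Finset.mem_sdiff] at this
    exact this.2
  have hB : B ∈ basesOn X Finset.univ :=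
    ⟨Finset.subset_univ _, greedy_indep X S, greedy_spans X S hspan⟩
  by_cases hex : ∃ z ∈ Y, isExtActive X B z
  · -- exchange step
    obtain ⟨z, hzY, hzAct⟩ := hex
    set T : Finset (Fin N) := B.filter (· ≤ z) with hTdef
    have hTlt : ∀ b ∈ T, b < z := by
      intro b hb
      rw [hTdef, Finset.mem_filter] at hb
      exact lt_of_le_of_ne hb.2 (fun h => hBnotY b hb.1 (h ▸ hzY))
    have hTspan : X z ∈ span ℝ (Set.range fun b : ↥T => X ↑b) := by
      have h1 := hzAct.2
      have hset : {e : Fin N | e ∈ B ∧ e ≤ z} = (T : Set (Fin N)) := by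
        ext e
        simp [hTdef, Finset.mem_filter]
      rw [hset, Set.image_eq_range] at h1
      exact h1
    obtain ⟨cc, hcc⟩ := (mem_span_range_iff_exists_fun ℝ).1 hTspan
    have hlin : linPoly (X z) = ∑ b ∈ T.attach, cc b • linPoly (X ↑b) := by
      have hXz : X z = ∑ b ∈ T.attach, cc b • X ↑b := by
        rw [← hcc, Finset.univ_eq_attach]
      rw [show linPoly (X z) = linPolyL r (X z) from rfl, hXz, map_sum]
      exact Finset.sum_congr rfl fun b _ => by rw [map_smul]; rfl
    have hfac : prodPoly X Y = linPoly (X z) * prodPoly X (Y.erase z) :=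
      (Finset.mul_prod_erase Y _ hzY).symm
    have hexp : prodPoly X Y =
        ∑ b ∈ T.attach, cc b • prodPoly X (insert (↑b) (Y.erase z)) := by
      rw [hfac, hlin, Finset.sum_mul]
      refine Finset.sum_congr rfl fun b _ => ?_
      rw [smul_mul_assoc]
      congr 1
      exact (Finset.prod_insert (f := fun i => linPoly (X i))
        (fun h => hBnotY ↑b (Finset.mem_filter.1 b.2).1 (Finset.mem_of_mem_erase h))).symm
    rw [hexp]
    apply sum_mem
    intro b _
    by_cases hcb : cc b = 0
    · rw [hcb, zero_smul]
      exact zero_mem _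
    · apply smul_mem
      have hbltz : (b : Fin N) < z := hTlt ↑b b.2
      have hbY' : (b : Fin N) ∉ Y.erase z :=
        fun h => hBnotY ↑b (Finset.mem_filter.1 b.2).1 (Finset.mem_of_mem_erase h)
      have hmeas : (∑ i ∈ insert (↑b : Fin N) (Y.erase z), (i : ℕ)) < n := by
        have h1 : (∑ i ∈ Y, (i : ℕ)) = (z : ℕ) + ∑ i ∈ Y.erase z, (i : ℕ) :=
          (Finset.add_sum_erase _ _ hzY).symm
        have h2 : (∑ i ∈ insert (↑b : Fin N) (Y.erase z), (i : ℕ)) =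
            (↑b : ℕ) + ∑ i ∈ Y.erase z, (i : ℕ) := Finset.sum_insert hbY'
        have h3 : ((b : Fin N) : ℕ) < (z : ℕ) := hbltz
        omega
      refine IHn _ hmeas _ le_rfl ?_
      -- the new complement still spans
      rw [eq_top_iff, ← hB.2.2, span_le]
      have hmem' : ∀ w : Fin N, w ≠ ↑b → w ∉ Y.erase z →
          w ∈ ((Finset.univ \ insert (↑b : Fin N) (Y.erase z) : Finset (Fin N)) :
            Set (Fin N)) := by
        intro w h1 h2
        refine Finset.mem_coe.2 (Finset.mem_sdiff.2 ⟨Finset.mem_univ w, ?_⟩)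
        rw [Finset.mem_insert]
        push_neg
        exact ⟨h1, h2⟩
      rintro - ⟨e, heB, rfl⟩
      rw [SetLike.mem_coe]
      have heB' : e ∈ B := Finset.mem_coe.1 heB
      by_cases heb : e = ↑b
      · -- express X b via X z and the other elements of T
        subst heb
        have hsplit : cc b • X ↑b = X z - ∑ b' ∈ T.attach.erase b, cc b' • X ↑b' := by
          rw [← hcc, Finset.univ_eq_attach, ← Finset.add_sum_erase _ _ (Finset.mem_attach T b)]
          abel
        have hXb : X ↑b = (cc b)⁻¹ •
            (X z - ∑ b' ∈ T.attach.erase b, cc b' • X ↑b') := by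
          rw [← hsplit, smul_smul, inv_mul_cancel₀ hcb, one_smul]
        rw [hXb]
        apply smul_mem
        apply sub_mem
        · exact subset_span ⟨z, hmem' z (fun h => absurd (h ▸ hbltz) (lt_irrefl _))
            (Finset.notMem_erase z Y), rfl⟩
        · apply sum_mem
          intro b' hb'
          apply smul_mem
          refine subset_span ⟨↑b', hmem' ↑b' ?_ ?_, rfl⟩
          · exact fun h => (Finset.ne_of_mem_erase hb') (Subtype.ext h)
          · exact fun h => hBnotY ↑b' (Finset.mem_filter.1 b'.2).1 (Finset.mem_of_mem_erase h)
      · exact subset_span ⟨e, hmem' e heb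
          (fun h => hBnotY e heB' (Finset.mem_of_mem_erase h)), rfl⟩
  · -- base case: Y = univ \ (B ∪ E)
    have hYeq : Y = Finset.univ \ (B ∪ extSetOn X Finset.univ B) := by
      ext j
      simp only [Finset.mem_sdiff, Finset.mem_univ, true_and, Finset.mem_union]
      constructor
      · intro hjY
        push_neg
        refine ⟨fun h => hBnotY j h hjY, fun h => ?_⟩
        exact hex ⟨j, hjY, (Finset.mem_filter.1 h).2⟩
      · intro hjn
        push_neg at hjn
        by_contra hjY
        have hjS : j ∈ S := by
          rw [hSdef, Finset.mem_sdiff]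
          exact ⟨Finset.mem_univ j, hjY⟩
        refine hjn.2 (Finset.mem_filter.2 ⟨Finset.mem_univ j, ?_⟩)
        exact ⟨hjn.1, greedy_mem_span X S j hjS⟩
    rw [hYeq]
    exact subset_span ⟨B, hB, rfl⟩

end Spanning
/-- the family `{Q_B : B ∈ 𝔅(X)}` is a basis of `𝒫(X)`. -/
theorem statement0 {r N : ℕ} (X : Fin N → Fin r → ℝ)
    (hX : Submodule.span ℝ (Set.range X) = ⊤) :
    ∃ b : Module.Basis ↥(basesOn X Finset.univ) ℝ ↥(PspaceOn X Finset.univ),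
      ∀ B : ↥(basesOn X Finset.univ),
        (b B : MvPolynomial (Fin r) ℝ) = QB X Finset.univ B.1 := by
  classical
  have hBle : PspaceB X Finset.univ (basesOn X Finset.univ) ≤ PspaceOn X Finset.univ := by
    rw [PspaceB, Submodule.span_le]
    rintro - ⟨B, hB, rfl⟩
    rw [SetLike.mem_coe]
    apply Submodule.subset_span
    refine ⟨Finset.univ \ (B ∪ extSetOn X Finset.univ B), Finset.subset_univ _, ?_, rfl⟩
    rw [Finset.sdiff_sdiff_self_left, Finset.univ_inter, eq_top_iff, ← hB.2.2]
    apply Submodule.span_mono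
    apply Set.image_mono
    intro e he
    exact Finset.mem_coe.2 (Finset.mem_union_left _ (Finset.mem_coe.1 he))
  have hOle : PspaceOn X Finset.univ ≤ PspaceB X Finset.univ (basesOn X Finset.univ) := by
    rw [PspaceOn, Submodule.span_le]
    rintro - ⟨Y, hYuniv, hspan, rfl⟩
    rw [SetLike.mem_coe]
    exact prodPoly_mem_PspaceB X _ Y le_rfl hspan
  have hEq : PspaceOn X Finset.univ = PspaceB X Finset.univ (basesOn X Finset.univ) :=
    le_antisymm hOle hBle
  have hQmem : ∀ B : ↥(basesOn X Finset.univ),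
      QB X Finset.univ ↑B ∈ PspaceOn X Finset.univ :=
    fun B => hBle (Submodule.subset_span ⟨B.1, B.2, rfl⟩)
  set v : ↥(basesOn X Finset.univ) → ↥(PspaceOn X Finset.univ) :=
    fun B => ⟨QB X Finset.univ ↑B, hQmem B⟩ with hvdef
  have hamb : LinearIndependent ℝ
      (fun B : ↥(basesOn X Finset.univ) => QB X Finset.univ ↑B) := by
    rw [linearIndependent_iff']
    intro s gc hsum i his
    set S : Finset (Finset (Fin N)) := s.image Subtype.val with hSdef
    set c : Finset (Fin N) → ℝ :=
      fun A => if h : A ∈ basesOn X Finset.univ then gc ⟨A, h⟩ else 0 with hcdef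
    have hsum' : ∑ A ∈ S, c A • QB X Finset.univ A = 0 := by
      rw [hSdef, Finset.sum_image (fun a _ b _ h => Subtype.ext h)]
      rw [← hsum]
      refine Finset.sum_congr rfl fun B _ => ?_
      rw [hcdef]
      simp only [B.2, dif_pos]
    have hkey := indep_key Finset.univ r X S c
      (fun A hA => by
        obtain ⟨B', _, rfl⟩ := Finset.mem_image.1 hA
        exact B'.2)
      hsum' ↑i (Finset.mem_image_of_mem _ his)
    rw [hcdef] at hkey
    simpa only [i.2, dif_pos] using hkey
  have hli : LinearIndependent ℝ v :=
    hamb.of_comp (PspaceOn X Finset.univ).subtype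
  have hrange : (PspaceOn X Finset.univ).subtype '' (Set.range v) =
      {p | ∃ B ∈ basesOn X Finset.univ, p = QB X Finset.univ B} := by
    ext p
    constructor
    · rintro ⟨-, ⟨B, rfl⟩, rfl⟩
      exact ⟨B.1, B.2, rfl⟩
    · rintro ⟨B, hB, rfl⟩
      exact ⟨v ⟨B, hB⟩, ⟨⟨B, hB⟩, rfl⟩, rfl⟩
  have hspan_top : Submodule.span ℝ (Set.range v) = ⊤ := by
    apply Submodule.map_injective_of_injective
      (Submodule.injective_subtype (PspaceOn X Finset.univ))
    rw [Submodule.map_span, hrange, Submodule.map_subtype_top]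
    exact hEq.symm
  refine ⟨Module.Basis.mk hli hspan_top.ge, fun B => ?_⟩
  rw [Module.Basis.mk_apply]
end

section
/- Let B, D ∈ 𝔅(X) be distinct bases (as sublists of X) with the same number of externally active elements, |E(B)| = |E(D)|. Write D = (d_1,…,d_r) in the order inherited from X and set S_i^D := span(d_1,…,d_i) with S_0^D := {0}. Then there exists i ∈ {1,…,r} such that every x ∈ X∖E(D) with x ∈ S_i^D ∖ S_{i-1}^D satisfies x ∉ B ∪ E(B). -/
section Aux

open Classical

lemma aux_not_mem_span {r N : ℕ} {X : Fin N → Fin r → ℝ} {S : Finset (Fin N)}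
    (hli : LinearIndependent ℝ ((S : Set (Fin N)).restrict X)) {b : Fin N} (hb : b ∈ S)
    {T : Set (Fin N)} (hT : ∀ e ∈ T, e ∈ S ∧ e ≠ b) :
    X b ∉ Submodule.span ℝ (X '' T) := by
  have himg : X '' T =
      ((S : Set (Fin N)).restrict X) '' {e : (S : Set (Fin N)) | (e : Fin N) ∈ T} := by
    ext x
    constructor
    · rintro ⟨e, he, rfl⟩
      exact ⟨⟨e, (hT e he).1⟩, he, rfl⟩
    · rintro ⟨e, he, rfl⟩
      exact ⟨e, he, rfl⟩
  rw [himg]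
  have hbmem : (⟨b, hb⟩ : (S : Set (Fin N))) ∉ {e : (S : Set (Fin N)) | (e : Fin N) ∈ T} := by
    intro h
    exact (hT b h).2 rfl
  exact hli.notMem_span_image hbmem

lemma aux_card_basis {r N : ℕ} {X : Fin N → Fin r → ℝ} {S : Finset (Fin N)}
    (hS : S ∈ basesOn X Finset.univ) : S.card = r := by
  obtain ⟨-, hli, hsp⟩ := hS
  let bS : Module.Basis (S : Set (Fin N)) ℝ (Fin r → ℝ) :=
    Module.Basis.mk hli (by rw [show Set.range ((S : Set (Fin N)).restrict X) = X '' S from Set.range_domRestrict X _]; exact hsp.ge)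
  have h1 := Module.finrank_eq_card_basis bS
  have h2 : Module.finrank ℝ (Fin r → ℝ) = r := by simp
  rw [h2] at h1
  simpa using h1.symm

lemma aux_mem_ext {r N : ℕ} {X : Fin N → Fin r → ℝ} {S : Finset (Fin N)} {j : Fin N} :
    j ∈ extSetOn X Finset.univ S ↔ isExtActive X S j := by
  simp [extSetOn]

lemma aux_sub {N : ℕ} {S : Finset (Fin N)} {a b : Fin N} (hab : a ≤ b) :
    {e : Fin N | e ∈ S ∧ e ≤ a} ⊆ {e : Fin N | e ∈ S ∧ e ≤ b} :=
  fun _ he => ⟨he.1, le_trans he.2 hab⟩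

end Aux

/-- for distinct bases `B ≠ D` with `|E(B)| = |E(D)|` there is a step
`S_i^D ∖ S_{i-1}^D` of the flag of `D` avoiding `B ∪ E(B)` inside `X ∖ E(D)`. -/
theorem statement5 {r N : ℕ} (X : Fin N → Fin r → ℝ)
    (hX : Submodule.span ℝ (Set.range X) = ⊤)
    (B D : Finset (Fin N))
    (hB : B ∈ basesOn X Finset.univ) (hD : D ∈ basesOn X Finset.univ)
    (hne : B ≠ D)
    (hcard : (extSetOn X Finset.univ B).card = (extSetOn X Finset.univ D).card) :
    ∃ d ∈ D, ∀ j : Fin N, j ∉ extSetOn X Finset.univ D →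
      X j ∈ Submodule.span ℝ (X '' {e : Fin N | e ∈ D ∧ e ≤ d}) →
      X j ∉ Submodule.span ℝ (X '' {e : Fin N | e ∈ D ∧ e < d}) →
      j ∉ B ∧ j ∉ extSetOn X Finset.univ B := by
  classical
  have hBli : LinearIndependent ℝ ((B : Set (Fin N)).restrict X) := hB.2.1
  have hDli : LinearIndependent ℝ ((D : Set (Fin N)).restrict X) := hD.2.1
  by_contra hcon
  push_neg at hcon
  -- key: every element of D is in the span of the B-prefix up to it
  have key : ∀ n : ℕ, ∀ d : Fin N, d.val = n → d ∈ D →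
      X d ∈ Submodule.span ℝ (X '' {e : Fin N | e ∈ B ∧ e ≤ d}) := by
    intro n
    induction n using Nat.strong_induction_on with
    | _ n ih =>
      intro d hdn hdD
      obtain ⟨j, hjE, hj1, hj2, hj3⟩ := hcon d hdD
      have hjB : X j ∈ Submodule.span ℝ (X '' {e : Fin N | e ∈ B ∧ e ≤ j}) := by
        by_cases hjBmem : j ∈ B
        · exact Submodule.subset_span ⟨j, ⟨hjBmem, le_refl j⟩, rfl⟩
        · exact (aux_mem_ext.1 (hj3 hjBmem)).2
      have hjd : j ≤ d := by
        by_contra hlt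
        push_neg at hlt
        by_cases hjD : j ∈ D
        · exact aux_not_mem_span hDli hjD
            (T := {e : Fin N | e ∈ D ∧ e ≤ d})
            (fun e he => ⟨he.1, fun h => absurd hlt (not_lt.2 (h ▸ he.2))⟩) hj1
        · have hact : isExtActive X D j :=
            ⟨hjD, Submodule.span_mono (Set.image_mono
              (aux_sub hlt.le)) hj1⟩
          exact hjE (aux_mem_ext.2 hact)
      have hset : {e : Fin N | e ∈ D ∧ e ≤ d} = insert d {e : Fin N | e ∈ D ∧ e < d} := by
        ext e
        simp only [Set.mem_insert_iff, Set.mem_setOf_eq]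
        constructor
        · rintro ⟨heD, hed⟩
          rcases lt_or_eq_of_le hed with h | h
          · exact Or.inr ⟨heD, h⟩
          · exact Or.inl h
        · rintro (rfl | ⟨heD, hed⟩)
          · exact ⟨hdD, le_refl _⟩
          · exact ⟨heD, le_of_lt hed⟩
      rw [hset, Set.image_insert_eq, Submodule.mem_span_insert] at hj1
      obtain ⟨c, w, hw, heq⟩ := hj1
      have hc : c ≠ 0 := by
        rintro rfl
        rw [zero_smul, zero_add] at heq
        exact hj2 (heq ▸ hw)
      set M := Submodule.span ℝ (X '' {e : Fin N | e ∈ B ∧ e ≤ d}) with hM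
      have hjM : X j ∈ M := Submodule.span_mono (Set.image_mono
        (aux_sub hjd)) hjB
      have hwM : w ∈ M := by
        refine Submodule.span_le.2 ?_ hw
        rintro x ⟨e, ⟨heD, hed⟩, rfl⟩
        have hlt' : e.val < n := by rw [← hdn]; exact hed
        have hkey := ih e.val hlt' e rfl heD
        exact Submodule.span_mono (Set.image_mono
          (aux_sub (le_of_lt hed))) hkey
      have hXd : c⁻¹ • (X j - w) = X d := by
        rw [heq, add_sub_cancel_right, smul_smul, inv_mul_cancel₀ hc, one_smul]
      rw [← hXd]
      exact M.smul_mem _ (M.sub_mem hjM hwM)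
  -- D ∪ E(D) ⊆ B ∪ E(B)
  have hsub : D ∪ extSetOn X Finset.univ D ⊆ B ∪ extSetOn X Finset.univ B := by
    intro j hj
    have hjspan : X j ∈ Submodule.span ℝ (X '' {e : Fin N | e ∈ B ∧ e ≤ j}) := by
      rcases Finset.mem_union.1 hj with hjD | hjE
      · exact key j.val j rfl hjD
      · have hact : isExtActive X D j := aux_mem_ext.1 hjE
        refine Submodule.span_le.2 ?_ hact.2
        rintro x ⟨e, ⟨heD, hej⟩, rfl⟩
        exact Submodule.span_mono (Set.image_mono
          (aux_sub hej)) (key e.val e rfl heD)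
    by_cases hjB : j ∈ B
    · exact Finset.mem_union_left _ hjB
    · exact Finset.mem_union_right _ (aux_mem_ext.2 ⟨hjB, hjspan⟩)
  -- equal cardinalities
  have hdisj : ∀ S : Finset (Fin N), Disjoint S (extSetOn X Finset.univ S) := by
    intro S
    rw [Finset.disjoint_right]
    intro a ha
    exact (aux_mem_ext.1 ha).1
  have hcards : (B ∪ extSetOn X Finset.univ B).card = (D ∪ extSetOn X Finset.univ D).card := by
    rw [Finset.card_union_of_disjoint (hdisj B), Finset.card_union_of_disjoint (hdisj D),
      hcard, aux_card_basis hB, aux_card_basis hD]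
  have heqset : D ∪ extSetOn X Finset.univ D = B ∪ extSetOn X Finset.univ B :=
    Finset.eq_of_subset_of_card_le hsub (le_of_eq hcards)
  -- minimal element of the symmetric difference yields a contradiction
  have hTne : ((B \ D) ∪ (D \ B)).Nonempty := by
    by_contra h
    rw [Finset.not_nonempty_iff_eq_empty, Finset.union_eq_empty] at h
    refine hne (Finset.Subset.antisymm ?_ ?_)
    · intro x hx
      by_contra hxD
      exact absurd (Finset.mem_sdiff.2 ⟨hx, hxD⟩) (by simp [h.1])
    · intro x hx
      by_contra hxB
      exact absurd (Finset.mem_sdiff.2 ⟨hx, hxB⟩) (by simp [h.2])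
  set T := (B \ D) ∪ (D \ B) with hT
  set b := T.min' hTne with hb
  have hbT : b ∈ T := T.min'_mem hTne
  have hmin : ∀ e ∈ T, b ≤ e := fun e he => T.min'_le e he
  rcases Finset.mem_union.1 hbT with hbs | hbs
  · obtain ⟨hbB, hbD⟩ := Finset.mem_sdiff.1 hbs
    have hbR : b ∈ D ∪ extSetOn X Finset.univ D := by
      rw [heqset]; exact Finset.mem_union_left _ hbB
    have hbact : isExtActive X D b := by
      rcases Finset.mem_union.1 hbR with h | h
      · exact absurd h hbD
      · exact aux_mem_ext.1 h
    refine aux_not_mem_span hBli hbB (T := {e : Fin N | e ∈ D ∧ e ≤ b}) ?_ hbact.2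
    intro e he
    have hne' : e ≠ b := fun h => hbD (h ▸ he.1)
    have helt : e < b := lt_of_le_of_ne he.2 hne'
    have heB : e ∈ B := by
      by_contra heB
      have heT : e ∈ T := Finset.mem_union_right _ (Finset.mem_sdiff.2 ⟨he.1, heB⟩)
      exact absurd (hmin e heT) (not_le.2 helt)
    exact ⟨heB, hne'⟩
  · obtain ⟨hbD, hbB⟩ := Finset.mem_sdiff.1 hbs
    have hbR : b ∈ B ∪ extSetOn X Finset.univ B := by
      rw [← heqset]; exact Finset.mem_union_left _ hbD
    have hbact : isExtActive X B b := by
      rcases Finset.mem_union.1 hbR with h | h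
      · exact absurd h hbB
      · exact aux_mem_ext.1 h
    refine aux_not_mem_span hDli hbD (T := {e : Fin N | e ∈ B ∧ e ≤ b}) ?_ hbact.2
    intro e he
    have hne' : e ≠ b := fun h => hbB (h ▸ he.1)
    have helt : e < b := lt_of_le_of_ne he.2 hne'
    have heD : e ∈ D := by
      by_contra heD
      have heT : e ∈ T := Finset.mem_union_left _ (Finset.mem_sdiff.2 ⟨he.1, heD⟩)
      exact absurd (hmin e heT) (not_le.2 helt)
    exact ⟨heD, hne'⟩
end

section
/- Let x ∈ X be neither a loop nor a coloop. Then the sequence 0 → 𝒫(X∖x) → 𝒫(X) → 𝒫(X/x) → 0 is exact, where the first map is multiplication by p_x and the second is the restriction to 𝒫(X) of Sym(π_x): multiplication by p_x maps 𝒫(X∖x) injectively into 𝒫(X), Sym(π_x) maps 𝒫(X) onto 𝒫(X/x), and the kernel of Sym(π_x) restricted to 𝒫(X) equals p_x·𝒫(X∖x). -/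
/-- `𝒫(X/x)`, realised inside `Sym(ℝ^r/ℝx) ≅ ℝ[s₁,…,s_r]/(p_x)`: the span of the
images of the polynomials `p_Y` for sublists `Y` of `X∖x` such that `(X/x)∖Y` spans
the quotient space `ℝ^r/ℝx`. -/
noncomputable def PspaceContr {r N : ℕ} (X : Fin N → Fin r → ℝ) (i0 : Fin N) :
    Submodule ℝ (MvPolynomial (Fin r) ℝ ⧸ Ideal.span {linPoly (X i0)}) :=
  Submodule.span ℝ {q | ∃ Y : Finset (Fin N), Y ⊆ Finset.univ.erase i0 ∧
    Submodule.span ℝ (((Submodule.span ℝ {X i0}).mkQ ∘ X) ''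
      ((Finset.univ.erase i0 \ Y : Finset (Fin N)) : Set (Fin N))) = ⊤ ∧
    q = Ideal.Quotient.mk (Ideal.span {linPoly (X i0)}) (prodPoly X Y)}

noncomputable section

section ZZ
open Submodule MvPolynomial

variable {r N : ℕ} {M : Type*} [AddCommGroup M] [Module ℝ M]

lemma zz_linPoly_add (u v : Fin r → ℝ) : linPoly (u + v) = linPoly u + linPoly v := by
  simp [linPoly, add_mul, Finset.sum_add_distrib, map_add]

lemma zz_linPoly_smul (c : ℝ) (u : Fin r → ℝ) : linPoly (c • u) = c • linPoly u := by
  simp [linPoly, MvPolynomial.smul_eq_C_mul, map_mul, Finset.mul_sum, mul_assoc]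

def zzLinPolyL (r : ℕ) : (Fin r → ℝ) →ₗ[ℝ] MvPolynomial (Fin r) ℝ where
  toFun := linPoly
  map_add' := zz_linPoly_add
  map_smul' := zz_linPoly_smul

lemma zz_linPoly_zero : linPoly (0 : Fin r → ℝ) = 0 := by simp [linPoly]

lemma zz_linPoly_sum (S : Finset (Fin N)) (c : Fin N → ℝ) (f : Fin N → Fin r → ℝ) :
    linPoly (∑ e ∈ S, c e • f e) = ∑ e ∈ S, c e • linPoly (f e) := by
  classical
  induction S using Finset.induction with
  | empty => simp [zz_linPoly_zero]
  | insert _ _ h ih =>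
    rw [Finset.sum_insert h, Finset.sum_insert h, zz_linPoly_add, zz_linPoly_smul, ih]

lemma zz_linPoly_coeff (u : Fin r → ℝ) (j : Fin r) :
    MvPolynomial.coeff (Finsupp.single j 1) (linPoly u) = u j := by
  classical
  simp [linPoly, MvPolynomial.coeff_sum, MvPolynomial.coeff_C_mul, MvPolynomial.coeff_X',
    Finsupp.single_left_inj]

lemma zz_linPoly_eq_zero {u : Fin r → ℝ} (h : linPoly u = 0) : u = 0 := by
  funext j
  have := zz_linPoly_coeff u j
  rw [h] at this
  simpa using this.symm

lemma zz_prodPoly_insert (X : Fin N → Fin r → ℝ) {e : Fin N} {Y : Finset (Fin N)} (he : e ∉ Y) :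
    prodPoly X (insert e Y) = linPoly (X e) * prodPoly X Y := Finset.prod_insert he

lemma zz_prodPoly_mul_erase (X : Fin N → Fin r → ℝ) {j : Fin N} {Y : Finset (Fin N)} (hj : j ∈ Y) :
    prodPoly X Y = linPoly (X j) * prodPoly X (Y.erase j) := (Finset.mul_prod_erase _ _ hj).symm

lemma zz_exists_coeffs (f : Fin N → M) (S : Finset (Fin N)) {v : M}
    (hv : v ∈ span ℝ (f '' ↑S)) : ∃ c : Fin N → ℝ, ∑ e ∈ S, c e • f e = v := by
  classical
  rw [show f '' ↑S = Set.range (fun e : ↑S => f e) from (Set.image_eq_range f ↑S)] at hv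
  obtain ⟨c, hc⟩ := (mem_span_range_iff_exists_fun ℝ).mp hv
  refine ⟨fun e => if he : e ∈ S then c ⟨e, he⟩ else 0, ?_⟩
  rw [← Finset.sum_attach S (fun e => (if he : e ∈ S then c ⟨e, he⟩ else 0) • f e)]
  rw [← hc]
  rw [show (Finset.univ : Finset ↑S) = S.attach from rfl]
  apply Finset.sum_congr rfl
  intro i _
  simp [i.2]

lemma zz_li_iff (v : Fin N → M) (B : Finset (Fin N)) :
    LinearIndependent ℝ ((B : Set (Fin N)).restrict v) ↔
      ∀ c : Fin N → ℝ, ∑ e ∈ B, c e • v e = 0 → ∀ e ∈ B, c e = 0 := by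
  classical
  constructor
  · intro h c hc e he
    refine linearIndependent_iff'.mp h Finset.univ (fun i => c i.1) ?_ ⟨e, he⟩ (Finset.mem_univ _)
    rw [← Finset.sum_attach B (fun e => c e • v e)] at hc
    exact hc
  · intro H
    rw [linearIndependent_iff']
    intro s g hg i hi
    set c : Fin N → ℝ := fun e => if h : e ∈ B then (if ⟨e, h⟩ ∈ s then g ⟨e, h⟩ else 0) else 0
      with hcdef
    have hsum : ∑ e ∈ B, c e • v e = 0 := by
      rw [← Finset.sum_attach B (fun e => c e • v e)]
      have : ∀ x : ↑B, c x.1 • v x.1 = if x ∈ s then g x • v x.1 else 0 := by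
        intro x
        by_cases hx : x ∈ s <;> simp [hcdef, x.2, hx]
      rw [Finset.sum_congr rfl (fun x _ => this x)]
      rw [Finset.sum_ite_mem]
      rw [show B.attach ∩ s = s by rw [show B.attach = Finset.univ from rfl, Finset.univ_inter]]
      exact hg
    have := H c hsum i.1 i.2
    simpa [hcdef, i.2, hi] using this

end ZZ

section Greedy
open Submodule
variable {N : ℕ} {M : Type*} [AddCommGroup M] [Module ℝ M]

lemma zz_span_image_mono (v : Fin N → M) {S S' : Finset (Fin N)} (h : S ⊆ S') :
    span ℝ (v '' ↑S) ≤ span ℝ (v '' ↑S') :=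
  span_mono (Set.image_mono (Finset.coe_subset.mpr h))

open Classical in
def zzGreedy (v : Fin N → M) (T : Finset (Fin N)) : Finset (Fin N) :=
  T.filter (fun j => v j ∉ span ℝ (v '' ↑(T.filter (· < j))))

open Classical in
lemma zz_mem_greedy (v : Fin N → M) (T : Finset (Fin N)) {j : Fin N} :
    j ∈ zzGreedy v T ↔ j ∈ T ∧ v j ∉ span ℝ (v '' ↑(T.filter (· < j))) := by
  simp [zzGreedy, Finset.mem_filter]

lemma zz_greedy_subset (v : Fin N → M) (T : Finset (Fin N)) : zzGreedy v T ⊆ T := by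
  intro j hj; exact ((zz_mem_greedy v T).mp hj).1

open Classical in
lemma zz_greedy_mem_span (v : Fin N → M) (T : Finset (Fin N)) :
    ∀ j ∈ T, v j ∈ span ℝ (v '' ↑((zzGreedy v T).filter (· ≤ j))) := by
  suffices h : ∀ n : ℕ, ∀ j ∈ T, j.1 < n →
      v j ∈ span ℝ (v '' ↑((zzGreedy v T).filter (· ≤ j))) by
    intro j hj; exact h (j.1+1) j hj (Nat.lt_succ_self _)
  intro n
  induction n with
  | zero => intro j hj h; omega
  | succ n ih =>
    intro j hj hjn
    by_cases hjB : j ∈ zzGreedy v T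
    · exact subset_span ⟨j, by simp [hjB], rfl⟩
    · have hnot : v j ∈ span ℝ (v '' ↑(T.filter (· < j))) := by
        by_contra hc
        exact hjB ((zz_mem_greedy v T).mpr ⟨hj, hc⟩)
      refine span_le.mpr ?_ hnot
      rintro _ ⟨e, he, rfl⟩
      simp only [Finset.coe_filter, Set.mem_setOf_eq, Finset.mem_coe] at he
      obtain ⟨heT, hej⟩ := he
      have h1 : v e ∈ span ℝ (v '' ↑((zzGreedy v T).filter (· ≤ e))) := by
        refine ih e heT ?_
        have : e.1 < j.1 := hej
        omega
      refine (zz_span_image_mono v ?_) h1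
      intro f hf
      simp only [Finset.mem_filter] at hf ⊢
      exact ⟨hf.1, le_trans hf.2 (le_of_lt hej)⟩

open Classical in
lemma zz_greedy_span (v : Fin N → M) (T : Finset (Fin N)) :
    span ℝ (v '' ↑(zzGreedy v T)) = span ℝ (v '' ↑T) := by
  apply le_antisymm (zz_span_image_mono v (zz_greedy_subset v T))
  rw [span_le]
  rintro _ ⟨e, he, rfl⟩
  have h1 := zz_greedy_mem_span v T e (by exact_mod_cast he)
  exact (zz_span_image_mono v (Finset.filter_subset _ _)) h1

open Classical in
lemma zz_greedy_li (v : Fin N → M) (T : Finset (Fin N)) :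
    LinearIndependent ℝ ((↑(zzGreedy v T) : Set (Fin N)).restrict v) := by
  rw [zz_li_iff]
  intro c hc
  by_contra hex
  push_neg at hex
  obtain ⟨e0, he0, hc0⟩ := hex
  set B := zzGreedy v T with hB
  set S := B.filter (fun e => c e ≠ 0) with hS
  have hSne : S.Nonempty := ⟨e0, by simp [hS, he0, hc0]⟩
  set j := S.max' hSne with hj
  have hjS : j ∈ S := S.max'_mem hSne
  have hjB : j ∈ B := (Finset.filter_subset _ _) hjS
  have hcj : c j ≠ 0 := by
    have := (Finset.mem_filter.mp hjS).2
    simpa using this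
  have hsum : ∑ e ∈ S, c e • v e = 0 := by
    rw [← hc]
    apply Finset.sum_subset (Finset.filter_subset _ _)
    intro x hx hxS
    have : c x = 0 := by
      by_contra h; exact hxS (Finset.mem_filter.mpr ⟨hx, by simpa using h⟩)
    simp [this]
  have hsum2 : c j • v j = - ∑ e ∈ S.erase j, c e • v e := by
    rw [← Finset.add_sum_erase S _ hjS] at hsum
    exact eq_neg_of_add_eq_zero_left hsum
  have hvj : v j = ∑ e ∈ S.erase j, (-((c j)⁻¹ * c e)) • v e := by
    have h2 := congrArg (fun w => (c j)⁻¹ • w) hsum2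
    simp only [smul_smul, inv_mul_cancel₀ hcj, one_smul, smul_neg, Finset.smul_sum] at h2
    rw [h2]
    rw [← Finset.sum_neg_distrib]
    apply Finset.sum_congr rfl
    intro e _
    rw [neg_smul]
  have hmem : v j ∈ span ℝ (v '' ↑(T.filter (· < j))) := by
    rw [hvj]
    apply sum_mem
    intro e he
    apply smul_mem
    apply subset_span
    refine ⟨e, ?_, rfl⟩
    have heB : e ∈ B := (Finset.filter_subset _ _) ((Finset.erase_subset _ _) he)
    have heT : e ∈ T := zz_greedy_subset v T heB
    have hle : e ≤ j := S.le_max' e ((Finset.erase_subset _ _) he)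
    have hne : e ≠ j := Finset.ne_of_mem_erase he
    simp only [Finset.coe_filter, Set.mem_setOf_eq]
    exact ⟨heT, lt_of_le_of_ne hle hne⟩
  exact ((zz_mem_greedy v T).mp hjB).2 hmem

end Greedy



section Upper
open Submodule
variable {r N : ℕ}

lemma zz_coe_filter_le {N : ℕ} (B : Finset (Fin N)) (j : Fin N) :
    (↑(B.filter (· ≤ j)) : Set (Fin N)) = {e : Fin N | e ∈ B ∧ e ≤ j} := by
  classical
  ext e; simp

open Classical in
def zzBases {r N : ℕ} (X : Fin N → Fin r → ℝ) (G : Finset (Fin N)) : Finset (Finset (Fin N)) :=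
  G.powerset.filter (fun B => LinearIndependent ℝ ((B : Set (Fin N)).restrict X) ∧
    Submodule.span ℝ (X '' ↑B) = ⊤)

open Classical in
lemma zz_mem_bases {X : Fin N → Fin r → ℝ} {G B : Finset (Fin N)} :
    B ∈ zzBases X G ↔ B ⊆ G ∧ LinearIndependent ℝ ((B : Set (Fin N)).restrict X) ∧
      Submodule.span ℝ (X '' ↑B) = ⊤ := by
  simp [zzBases, Finset.mem_powerset, Finset.mem_filter, and_assoc]

open Classical in
lemma zz_rewrite (X : Fin N → Fin r → ℝ) (G : Finset (Fin N)) :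
    ∀ n : ℕ, ∀ Y : Finset (Fin N), (∑ y ∈ Y, (y : ℕ)) < n → Y ⊆ G →
      span ℝ (X '' ↑(G \ Y)) = ⊤ →
      prodPoly X Y ∈ span ℝ
        ((fun B => prodPoly X (G \ (B ∪ extSetOn X G B))) '' ↑(zzBases X G)) := by
  intro n
  induction n with
  | zero => intro Y h; omega
  | succ n ih =>
    intro Y hmeas hYG hsp
    set T := G \ Y with hT
    set B := zzGreedy X T with hBdef
    have hBT : B ⊆ T := zz_greedy_subset X T
    have hBG : B ⊆ G := fun e he => (Finset.mem_sdiff.mp (hBT he)).1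
    have hBsp : span ℝ (X '' ↑B) = ⊤ := by rw [hBdef, zz_greedy_span]; exact hsp
    have hBbasis : B ∈ zzBases X G :=
      zz_mem_bases.mpr ⟨hBG, zz_greedy_li X T, hBsp⟩
    by_cases hcase : ∃ j ∈ Y, X j ∈ span ℝ (X '' ↑(B.filter (· ≤ j)))
    · obtain ⟨j, hjY, hjsp⟩ := hcase
      obtain ⟨c, hc⟩ := zz_exists_coeffs X (B.filter (· ≤ j)) hjsp
      set F := B.filter (· ≤ j) with hF
      have hrw : prodPoly X Y = ∑ e ∈ F, c e • prodPoly X (insert e (Y.erase j)) := by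
        rw [zz_prodPoly_mul_erase X hjY, ← hc, zz_linPoly_sum, Finset.sum_mul]
        apply Finset.sum_congr rfl
        intro e heF
        have heB : e ∈ B := (Finset.filter_subset _ _) heF
        have heY : e ∉ Y.erase j := fun h =>
          (Finset.mem_sdiff.mp (hBT heB)).2 ((Finset.erase_subset _ _) h)
        rw [zz_prodPoly_insert X heY, smul_mul_assoc]
      rw [hrw]
      apply sum_mem
      intro e heF
      have heB : e ∈ B := (Finset.filter_subset _ _) heF
      have heT : e ∈ T := hBT heB
      have hej : e ≠ j := by
        intro h; subst h
        exact (Finset.mem_sdiff.mp heT).2 hjY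
      have helt : (e : ℕ) < (j : ℕ) := by
        have h1 : e ≤ j := (Finset.mem_filter.mp heF).2
        have h2 : (e : ℕ) ≤ (j : ℕ) := h1
        have hne : (e : ℕ) ≠ (j : ℕ) := fun h => hej (Fin.ext h)
        omega
      have heYe : e ∉ Y.erase j := fun h =>
        (Finset.mem_sdiff.mp heT).2 ((Finset.erase_subset _ _) h)
      by_cases hce : c e = 0
      · rw [hce, zero_smul]; exact zero_mem _
      apply smul_mem
      set Y' := insert e (Y.erase j) with hY'
      have hsum_erase : (j : ℕ) + ∑ y ∈ Y.erase j, (y : ℕ) = ∑ y ∈ Y, (y : ℕ) :=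
        Finset.add_sum_erase Y _ hjY
      have hmeas' : (∑ y ∈ Y', (y : ℕ)) < n := by
        rw [hY', Finset.sum_insert heYe]; omega
      have hY'G : Y' ⊆ G := by
        intro y hy
        rcases Finset.mem_insert.mp hy with h | h
        · exact h ▸ (Finset.mem_sdiff.mp heT).1
        · exact hYG ((Finset.erase_subset _ _) h)
      have hXe : X e = (c e)⁻¹ • (X j - ∑ f ∈ F.erase e, c f • X f) := by
        have h1 : c e • X e + ∑ f ∈ F.erase e, c f • X f = X j := by
          rw [Finset.add_sum_erase F (fun f => c f • X f) heF]; exact hc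
        have h2 : c e • X e = X j - ∑ f ∈ F.erase e, c f • X f := by
          rw [← h1]; abel
        rw [← h2, smul_smul, inv_mul_cancel₀ hce, one_smul]
      have hsp' : span ℝ (X '' ↑(G \ Y')) = ⊤ := by
        rw [eq_top_iff, ← hsp, span_le]
        rintro _ ⟨t, ht, rfl⟩
        have htT : t ∈ T := by rw [hT]; exact_mod_cast ht
        by_cases hte : t = e
        · rw [hte, hXe]
          apply smul_mem
          apply sub_mem
          · apply subset_span
            refine ⟨j, ?_, rfl⟩
            simp only [Finset.coe_sdiff, Set.mem_diff, Finset.mem_coe]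
            refine ⟨hYG hjY, ?_⟩
            intro hjY'
            rcases Finset.mem_insert.mp hjY' with h | h
            · exact hej h.symm
            · exact (Finset.notMem_erase j Y) h
          · apply sum_mem
            intro f hf
            apply smul_mem
            apply subset_span
            have hfB : f ∈ B := (Finset.filter_subset _ _) ((Finset.erase_subset _ _) hf)
            have hfT : f ∈ T := hBT hfB
            refine ⟨f, ?_, rfl⟩
            simp only [Finset.coe_sdiff, Set.mem_diff, Finset.mem_coe]
            refine ⟨(Finset.mem_sdiff.mp hfT).1, ?_⟩
            intro hfY'
            rcases Finset.mem_insert.mp hfY' with h | h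
            · exact (Finset.ne_of_mem_erase hf) h
            · exact (Finset.mem_sdiff.mp hfT).2 ((Finset.erase_subset _ _) h)
        · apply subset_span
          refine ⟨t, ?_, rfl⟩
          simp only [Finset.coe_sdiff, Set.mem_diff, Finset.mem_coe]
          refine ⟨(Finset.mem_sdiff.mp htT).1, ?_⟩
          intro htY'
          rcases Finset.mem_insert.mp htY' with h | h
          · exact hte h
          · exact (Finset.mem_sdiff.mp htT).2 ((Finset.erase_subset _ _) h)
      exact ih Y' hmeas' hY'G hsp'
    · -- terminal case : Y = G \ (B ∪ extSetOn X G B)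
      push_neg at hcase
      have hYeq : Y = G \ (B ∪ extSetOn X G B) := by
        ext j
        simp only [Finset.mem_sdiff, Finset.mem_union]
        constructor
        · intro hjY
          refine ⟨hYG hjY, ?_⟩
          rintro (hjB | hjE)
          · exact (Finset.mem_sdiff.mp (hBT hjB)).2 hjY
          · have : isExtActive X B j := (Finset.mem_filter.mp (by
              simpa [extSetOn] using hjE)).2
            have h2 := this.2
            rw [← zz_coe_filter_le] at h2
            exact hcase j hjY h2
        · rintro ⟨hjG, hjnot⟩
          by_contra hjY
          have hjT : j ∈ T := Finset.mem_sdiff.mpr ⟨hjG, hjY⟩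
          have hjB : j ∉ B := fun h => hjnot (Or.inl h)
          have := zz_greedy_mem_span X T j hjT
          have hext : isExtActive X B j := by
            refine ⟨hjB, ?_⟩
            rw [← zz_coe_filter_le]
            exact this
          exact hjnot (Or.inr (by simpa [extSetOn] using ⟨hjG, hext⟩))
      apply subset_span
      exact ⟨B, by exact_mod_cast hBbasis, by rw [hYeq]⟩

open Classical in
theorem zz_upper (X : Fin N → Fin r → ℝ) (G : Finset (Fin N)) :
    Module.finrank ℝ (PspaceOn X G) ≤ (zzBases X G).card := by
  set f : Finset (Fin N) → MvPolynomial (Fin r) ℝ :=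
    fun B => prodPoly X (G \ (B ∪ extSetOn X G B)) with hf
  have h1 : PspaceOn X G ≤ span ℝ (↑((zzBases X G).image f)) := by
    rw [PspaceOn, span_le]
    rintro p ⟨Y, hYG, hsp, rfl⟩
    rw [Finset.coe_image]
    exact zz_rewrite X G (∑ y ∈ Y, (y : ℕ) + 1) Y (Nat.lt_succ_self _) hYG hsp
  have hfd : FiniteDimensional ℝ (span ℝ (↑((zzBases X G).image f) : Set (MvPolynomial (Fin r) ℝ))) :=
    FiniteDimensional.span_of_finite ℝ (Finset.finite_toSet _)
  calc Module.finrank ℝ (PspaceOn X G)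
      ≤ Module.finrank ℝ (span ℝ (↑((zzBases X G).image f) : Set (MvPolynomial (Fin r) ℝ))) :=
        Submodule.finrank_mono h1
    _ ≤ ((zzBases X G).image f).card := finrank_span_finset_le_card _
    _ ≤ (zzBases X G).card := Finset.card_image_le

end Upper

section Subst
open Submodule MvPolynomial

lemma zz_single_sum {r : ℕ} (v : Fin r → ℝ) : v = ∑ i, v i • (Pi.single i 1 : Fin r → ℝ) := by
  funext j
  classical
  simp only [Finset.sum_apply, Pi.smul_apply, Pi.single_apply, smul_eq_mul]
  rw [Finset.sum_congr rfl (fun i _ => by rw [mul_ite, mul_one, mul_zero])]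
  simp

lemma zz_linPoly_single {r : ℕ} (i : Fin r) : linPoly (Pi.single i (1:ℝ)) = MvPolynomial.X i := by
  classical
  rw [linPoly, Finset.sum_eq_single i]
  · simp
  · intro k _ hk
    rw [Pi.single_apply, if_neg hk]
    simp
  · intro h; exact absurd (Finset.mem_univ i) h

def zzSubst {r r' : ℕ} (A : (Fin r → ℝ) →ₗ[ℝ] (Fin r' → ℝ)) :
    MvPolynomial (Fin r) ℝ →ₐ[ℝ] MvPolynomial (Fin r') ℝ :=
  MvPolynomial.aeval (fun i => linPoly (A (Pi.single i 1)))

lemma zzSubst_linPoly {r r' : ℕ} (A : (Fin r → ℝ) →ₗ[ℝ] (Fin r' → ℝ)) (v : Fin r → ℝ) :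
    zzSubst A (linPoly v) = linPoly (A v) := by
  have h0 : linPoly v = ∑ i, v i • linPoly (Pi.single i (1:ℝ)) := by
    conv_lhs => rw [zz_single_sum v]
    exact zz_linPoly_sum Finset.univ v (fun i => Pi.single i 1)
  rw [h0, map_sum]
  have h1 : A v = ∑ i, v i • A (Pi.single i 1) := by
    conv_lhs => rw [zz_single_sum v]
    rw [map_sum]
    simp
  rw [h1, zz_linPoly_sum Finset.univ v (fun i => A (Pi.single i 1))]
  apply Finset.sum_congr rfl
  intro i _
  rw [map_smul]
  congr 1
  rw [zz_linPoly_single]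
  simp [zzSubst]

lemma zzSubst_prodPoly {r r' N : ℕ} (A : (Fin r → ℝ) →ₗ[ℝ] (Fin r' → ℝ))
    (X : Fin N → Fin r → ℝ) (Y : Finset (Fin N)) :
    zzSubst A (prodPoly X Y) = prodPoly (fun i => A (X i)) Y := by
  rw [prodPoly, map_prod, prodPoly]
  exact Finset.prod_congr rfl (fun i _ => zzSubst_linPoly A (X i))

def zzSubstE {r : ℕ} (A : (Fin r → ℝ) ≃ₗ[ℝ] (Fin r → ℝ)) :
    MvPolynomial (Fin r) ℝ ≃ₐ[ℝ] MvPolynomial (Fin r) ℝ := by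
  refine AlgEquiv.ofAlgHom (zzSubst A.toLinearMap) (zzSubst A.symm.toLinearMap) ?_ ?_
  · apply MvPolynomial.algHom_ext
    intro i
    rw [AlgHom.comp_apply, ← zz_linPoly_single i, zzSubst_linPoly, zzSubst_linPoly]
    simp
  · apply MvPolynomial.algHom_ext
    intro i
    rw [AlgHom.comp_apply, ← zz_linPoly_single i, zzSubst_linPoly, zzSubst_linPoly]
    simp

lemma zzSubstE_apply {r : ℕ} (A : (Fin r → ℝ) ≃ₗ[ℝ] (Fin r → ℝ)) (p : MvPolynomial (Fin r) ℝ) :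
    zzSubstE A p = zzSubst A.toLinearMap p := rfl

def zzTheta (m : ℕ) : MvPolynomial (Fin (m+1)) ℝ →ₐ[ℝ] MvPolynomial (Fin m) ℝ :=
  MvPolynomial.aeval (Fin.cases 0 MvPolynomial.X)

lemma zzTheta_X_zero (m : ℕ) : zzTheta m (MvPolynomial.X 0) = 0 := by
  simp [zzTheta]

lemma zzTheta_X_succ (m : ℕ) (i : Fin m) : zzTheta m (MvPolynomial.X i.succ) = MvPolynomial.X i := by
  simp [zzTheta]

lemma zzTheta_linPoly (m : ℕ) (u : Fin (m+1) → ℝ) :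
    zzTheta m (linPoly u) = linPoly (fun k => u k.succ) := by
  rw [linPoly, map_sum, Fin.sum_univ_succ]
  simp only [map_mul, zzTheta_X_zero, zzTheta_X_succ, mul_zero]
  rw [linPoly]
  simp only [zzTheta, MvPolynomial.aeval_C]
  simp [MvPolynomial.algebraMap_eq]

lemma zzTheta_surjective (m : ℕ) : Function.Surjective (zzTheta m) := by
  intro q
  refine ⟨MvPolynomial.rename Fin.succ q, ?_⟩
  rw [zzTheta, MvPolynomial.aeval_rename]
  have h : (Fin.cases 0 MvPolynomial.X ∘ Fin.succ : Fin m → MvPolynomial (Fin m) ℝ)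
      = MvPolynomial.X := by
    funext i; simp
  rw [h]
  simp [MvPolynomial.aeval_X_left]

lemma zzTheta_eq_zero_iff (m : ℕ) (p : MvPolynomial (Fin (m+1)) ℝ) :
    zzTheta m p = 0 ↔ (MvPolynomial.X 0 : MvPolynomial (Fin (m+1)) ℝ) ∣ p := by
  have hcomm : zzTheta m p = Polynomial.eval 0 ((MvPolynomial.finSuccEquiv ℝ m) p) := by
    have heq : (zzTheta m).toRingHom =
        (Polynomial.evalRingHom 0).comp ((MvPolynomial.finSuccEquiv ℝ m) : MvPolynomial (Fin (m+1)) ℝ →+* Polynomial (MvPolynomial (Fin m) ℝ)) := by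
      apply MvPolynomial.ringHom_ext
      · intro a
        have : (MvPolynomial.finSuccEquiv ℝ m) (MvPolynomial.C a)
            = Polynomial.C (MvPolynomial.C a) := by
          rw [MvPolynomial.finSuccEquiv_apply]; simp
        simp [zzTheta, this]
      · intro i
        induction i using Fin.cases with
        | zero => simp [zzTheta, MvPolynomial.finSuccEquiv_X_zero]
        | succ k => simp [zzTheta, MvPolynomial.finSuccEquiv_X_succ]
    have h2 := congrArg (fun f => f p) (congrArg DFunLike.coe heq)
    simpa using h2
  rw [hcomm, ← Polynomial.coeff_zero_eq_eval_zero, ← Polynomial.X_dvd_iff]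
  constructor
  · intro h
    have h2 := map_dvd (MvPolynomial.finSuccEquiv ℝ m).symm h
    rw [AlgEquiv.symm_apply_apply] at h2
    have h3 : (MvPolynomial.finSuccEquiv ℝ m).symm Polynomial.X = MvPolynomial.X 0 := by
      rw [← MvPolynomial.finSuccEquiv_X_zero, AlgEquiv.symm_apply_apply]
    rwa [h3] at h2
  · intro h
    have h2 := map_dvd (MvPolynomial.finSuccEquiv ℝ m) h
    rwa [MvPolynomial.finSuccEquiv_X_zero] at h2

end Subst

section Amap
open Submodule

variable {m : ℕ}

def zzAf (x : Fin (m+1) → ℝ) (j : Fin (m+1)) : (Fin (m+1) → ℝ) →ₗ[ℝ] (Fin (m+1) → ℝ) where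
  toFun v := fun k => if k = 0 then v j / x j
    else v (Equiv.swap 0 j k) - (v j / x j) * x (Equiv.swap 0 j k)
  map_add' v w := by
    funext k
    by_cases h : k = 0 <;> simp [h] <;> ring
  map_smul' c v := by
    funext k
    by_cases h : k = 0 <;> simp [h] <;> ring

def zzAg (x : Fin (m+1) → ℝ) (j : Fin (m+1)) : (Fin (m+1) → ℝ) →ₗ[ℝ] (Fin (m+1) → ℝ) where
  toFun w := fun i => if i = j then w 0 * x j else w (Equiv.swap 0 j i) + w 0 * x i
  map_add' v w := by
    funext i
    by_cases h : i = j <;> simp [h] <;> ring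
  map_smul' c v := by
    funext i
    by_cases h : i = j <;> simp [h] <;> ring

def zzA (x : Fin (m+1) → ℝ) (j : Fin (m+1)) (hxj : x j ≠ 0) :
    (Fin (m+1) → ℝ) ≃ₗ[ℝ] (Fin (m+1) → ℝ) := by
  refine LinearEquiv.ofLinear (zzAf x j) (zzAg x j) ?_ ?_
  · apply LinearMap.ext
    intro w
    funext k
    by_cases hk : k = 0
    · subst hk
      simp [zzAf, zzAg, mul_div_cancel_right₀ _ hxj]
    · have huk : Equiv.swap 0 j k ≠ j := by
        intro h
        exact hk (by simpa using (Equiv.swap 0 j).injective (h.trans (Equiv.swap_apply_left 0 j).symm))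
      simp only [zzAf, zzAg, LinearMap.coe_mk, AddHom.coe_mk, LinearMap.coe_comp,
        Function.comp_apply, LinearMap.id_coe, id_eq, if_neg hk, if_neg huk,
        Equiv.swap_apply_self, eq_self_iff_true, if_true]
      rw [mul_div_cancel_right₀ _ hxj]
      ring
  · apply LinearMap.ext
    intro v
    funext i
    by_cases hi : i = j
    · subst hi
      simp only [zzAg, zzAf, LinearMap.coe_mk, AddHom.coe_mk, LinearMap.coe_comp,
        Function.comp_apply, LinearMap.id_coe, id_eq, if_pos rfl, eq_self_iff_true, if_true]
      rw [div_mul_cancel₀ _ hxj]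
    · have hui : Equiv.swap 0 j i ≠ 0 := by
        intro h
        exact hi (by simpa using (Equiv.swap 0 j).injective (h.trans (Equiv.swap_apply_right 0 j).symm ▸ rfl))
      simp only [zzAg, zzAf, LinearMap.coe_mk, AddHom.coe_mk, LinearMap.coe_comp,
        Function.comp_apply, LinearMap.id_coe, id_eq, if_neg hi, if_neg hui,
        Equiv.swap_apply_self, eq_self_iff_true, if_true]
      ring

lemma zzA_x (x : Fin (m+1) → ℝ) (j : Fin (m+1)) (hxj : x j ≠ 0) :
    zzA x j hxj x = Pi.single 0 1 := by
  funext k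
  by_cases hk : k = 0
  · subst hk
    simp [zzA, zzAf, div_self hxj]
  · simp [zzA, zzAf, if_neg hk, Pi.single_apply, hk, div_self hxj]

def zzTailL (m : ℕ) : (Fin (m+1) → ℝ) →ₗ[ℝ] (Fin m → ℝ) where
  toFun v := fun k => v k.succ
  map_add' v w := rfl
  map_smul' c v := rfl

def zzW (x : Fin (m+1) → ℝ) (j : Fin (m+1)) (hxj : x j ≠ 0) :
    (Fin (m+1) → ℝ) →ₗ[ℝ] (Fin m → ℝ) :=
  (zzTailL m).comp (zzA x j hxj).toLinearMap

lemma zzW_x (x : Fin (m+1) → ℝ) (j : Fin (m+1)) (hxj : x j ≠ 0) :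
    zzW x j hxj x = 0 := by
  funext k
  simp [zzW, zzTailL, zzA_x x j hxj, Pi.single_apply, Fin.succ_ne_zero]

lemma zzW_surjective (x : Fin (m+1) → ℝ) (j : Fin (m+1)) (hxj : x j ≠ 0) :
    Function.Surjective (zzW x j hxj) := by
  intro w
  refine ⟨(zzA x j hxj).symm (Fin.cases 0 w), ?_⟩
  funext k
  simp [zzW, zzTailL]

lemma zzW_ker (x : Fin (m+1) → ℝ) (j : Fin (m+1)) (hxj : x j ≠ 0) :
    LinearMap.ker (zzW x j hxj) = span ℝ {x} := by
  apply le_antisymm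
  · intro v hv
    have hv' : ∀ k : Fin m, (zzA x j hxj v) k.succ = 0 := by
      intro k
      exact congrFun (LinearMap.mem_ker.mp hv) k
    have hAv : zzA x j hxj v = (zzA x j hxj v 0) • (Pi.single 0 1 : Fin (m+1) → ℝ) := by
      funext i
      induction i using Fin.cases with
      | zero => simp
      | succ k => simp [hv' k, Pi.single_apply, Fin.succ_ne_zero]
    have : v = (zzA x j hxj v 0) • x := by
      have h3 : (zzA x j hxj).symm ((Pi.single 0 1 : Fin (m+1) → ℝ)) = x := by
        rw [← zzA_x x j hxj, LinearEquiv.symm_apply_apply]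
      conv_lhs => rw [← LinearEquiv.symm_apply_apply (zzA x j hxj) v]
      rw [hAv, map_smul, h3]
      simp
    rw [this]
    exact smul_mem _ _ (subset_span rfl)
  · rw [span_le, Set.singleton_subset_iff]
    exact LinearMap.mem_ker.mpr (zzW_x x j hxj)

end Amap

section Sigma
open Submodule MvPolynomial
variable {m N : ℕ}

def zzSigma (x : Fin (m+1) → ℝ) (j : Fin (m+1)) (hxj : x j ≠ 0) :
    MvPolynomial (Fin (m+1)) ℝ →ₐ[ℝ] MvPolynomial (Fin m) ℝ :=
  (zzTheta m).comp (zzSubstE (zzA x j hxj)).toAlgHom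

lemma zzSigma_linPoly (x : Fin (m+1) → ℝ) (j : Fin (m+1)) (hxj : x j ≠ 0) (v : Fin (m+1) → ℝ) :
    zzSigma x j hxj (linPoly v) = linPoly (zzW x j hxj v) := by
  rw [zzSigma, AlgHom.comp_apply]
  rw [show (zzSubstE (zzA x j hxj)).toAlgHom (linPoly v)
    = linPoly (zzA x j hxj v) from zzSubst_linPoly _ v]
  rw [zzTheta_linPoly]
  rfl

lemma zzSigma_prodPoly (x : Fin (m+1) → ℝ) (j : Fin (m+1)) (hxj : x j ≠ 0)
    (X : Fin N → Fin (m+1) → ℝ) (Y : Finset (Fin N)) :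
    zzSigma x j hxj (prodPoly X Y) = prodPoly (fun i => zzW x j hxj (X i)) Y := by
  rw [prodPoly, map_prod, prodPoly]
  exact Finset.prod_congr rfl (fun i _ => zzSigma_linPoly x j hxj (X i))

lemma zzSigma_surjective (x : Fin (m+1) → ℝ) (j : Fin (m+1)) (hxj : x j ≠ 0) :
    Function.Surjective (zzSigma x j hxj) := by
  intro q
  obtain ⟨p, hp⟩ := zzTheta_surjective m q
  exact ⟨(zzSubstE (zzA x j hxj)).symm p, by
    rw [zzSigma, AlgHom.comp_apply]
    simpa using hp⟩

lemma zzSigma_eq_zero_iff (x : Fin (m+1) → ℝ) (j : Fin (m+1)) (hxj : x j ≠ 0)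
    (p : MvPolynomial (Fin (m+1)) ℝ) :
    zzSigma x j hxj p = 0 ↔ linPoly x ∣ p := by
  have hPhiX : zzSubstE (zzA x j hxj) (linPoly x) = MvPolynomial.X 0 := by
    rw [zzSubstE_apply, zzSubst_linPoly]
    rw [show (zzA x j hxj).toLinearMap x = (Pi.single 0 1 : Fin (m+1) → ℝ) from zzA_x x j hxj]
    exact zz_linPoly_single 0
  rw [zzSigma, AlgHom.comp_apply]
  rw [show (zzSubstE (zzA x j hxj)).toAlgHom p = zzSubstE (zzA x j hxj) p from rfl]
  rw [zzTheta_eq_zero_iff]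
  constructor
  · intro h
    have h2 := map_dvd (zzSubstE (zzA x j hxj)).symm h
    rw [AlgEquiv.symm_apply_apply, ← hPhiX, AlgEquiv.symm_apply_apply] at h2
    exact h2
  · intro h
    have h2 := map_dvd (zzSubstE (zzA x j hxj)) h
    rwa [hPhiX] at h2

lemma zzSigma_mem_ker_iff (x : Fin (m+1) → ℝ) (j : Fin (m+1)) (hxj : x j ≠ 0)
    (p : MvPolynomial (Fin (m+1)) ℝ) :
    zzSigma x j hxj p = 0 ↔ p ∈ Ideal.span {linPoly x} := by
  rw [Ideal.mem_span_singleton, zzSigma_eq_zero_iff]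

def zzQuotRH (x : Fin (m+1) → ℝ) (j : Fin (m+1)) (hxj : x j ≠ 0) :
    (MvPolynomial (Fin (m+1)) ℝ ⧸ Ideal.span {linPoly x}) →+* MvPolynomial (Fin m) ℝ :=
  Ideal.Quotient.lift (Ideal.span {linPoly x}) (zzSigma x j hxj).toRingHom
    (fun a ha => by
      rw [show ((zzSigma x j hxj).toRingHom a : MvPolynomial (Fin m) ℝ)
        = zzSigma x j hxj a from rfl]
      exact (zzSigma_mem_ker_iff x j hxj a).mpr ha)

lemma zzQuotRH_mk (x : Fin (m+1) → ℝ) (j : Fin (m+1)) (hxj : x j ≠ 0)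
    (p : MvPolynomial (Fin (m+1)) ℝ) :
    zzQuotRH x j hxj (Ideal.Quotient.mk (Ideal.span {linPoly x}) p) = zzSigma x j hxj p := by
  rw [zzQuotRH]
  exact Ideal.Quotient.lift_mk _ _ _

def zzQuotL (x : Fin (m+1) → ℝ) (j : Fin (m+1)) (hxj : x j ≠ 0) :
    (MvPolynomial (Fin (m+1)) ℝ ⧸ Ideal.span {linPoly x}) →ₗ[ℝ] MvPolynomial (Fin m) ℝ where
  toFun := zzQuotRH x j hxj
  map_add' := (zzQuotRH x j hxj).map_add
  map_smul' c q := by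
    obtain ⟨p, rfl⟩ := Ideal.Quotient.mk_surjective q
    show zzQuotRH x j hxj (c • Ideal.Quotient.mk _ p)
      = c • zzQuotRH x j hxj (Ideal.Quotient.mk _ p)
    have h1 : c • Ideal.Quotient.mk (Ideal.span {linPoly x}) p
        = Ideal.Quotient.mk (Ideal.span {linPoly x}) (c • p) := by
      have h2 := (Ideal.Quotient.mkₐ ℝ (Ideal.span {linPoly x})).toLinearMap.map_smul c p
      exact h2.symm
    rw [h1, zzQuotRH_mk, zzQuotRH_mk, map_smul]

lemma zzQuotL_mk (x : Fin (m+1) → ℝ) (j : Fin (m+1)) (hxj : x j ≠ 0)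
    (p : MvPolynomial (Fin (m+1)) ℝ) :
    zzQuotL x j hxj (Ideal.Quotient.mk (Ideal.span {linPoly x}) p) = zzSigma x j hxj p := by
  simp [zzQuotL, zzQuotRH]

lemma zzQuotL_bijective (x : Fin (m+1) → ℝ) (j : Fin (m+1)) (hxj : x j ≠ 0) :
    Function.Bijective (zzQuotL x j hxj) := by
  constructor
  · rw [← LinearMap.ker_eq_bot, eq_bot_iff]
    intro q hq
    obtain ⟨p, rfl⟩ := Ideal.Quotient.mk_surjective q
    rw [LinearMap.mem_ker, zzQuotL_mk] at hq
    rw [Submodule.mem_bot, Ideal.Quotient.eq_zero_iff_mem]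
    exact (zzSigma_mem_ker_iff x j hxj p).mp hq
  · intro q
    obtain ⟨p, hp⟩ := zzSigma_surjective x j hxj q
    exact ⟨Ideal.Quotient.mk _ p, by rw [zzQuotL_mk]; exact hp⟩

def zzQbar (x : Fin (m+1) → ℝ) (j : Fin (m+1)) (hxj : x j ≠ 0) :
    ((Fin (m+1) → ℝ) ⧸ span ℝ {x}) →ₗ[ℝ] (Fin m → ℝ) :=
  Submodule.liftQ _ (zzW x j hxj) (le_of_eq (zzW_ker x j hxj).symm)

lemma zzQbar_mk (x : Fin (m+1) → ℝ) (j : Fin (m+1)) (hxj : x j ≠ 0) (v : Fin (m+1) → ℝ) :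
    zzQbar x j hxj ((span ℝ {x}).mkQ v) = zzW x j hxj v := rfl

lemma zzQbar_injective (x : Fin (m+1) → ℝ) (j : Fin (m+1)) (hxj : x j ≠ 0) :
    Function.Injective (zzQbar x j hxj) := by
  rw [← LinearMap.ker_eq_bot]
  exact Submodule.ker_liftQ_eq_bot _ _ _ (le_of_eq (zzW_ker x j hxj))

lemma zzQbar_surjective (x : Fin (m+1) → ℝ) (j : Fin (m+1)) (hxj : x j ≠ 0) :
    Function.Surjective (zzQbar x j hxj) := by
  intro w
  obtain ⟨v, hv⟩ := zzW_surjective x j hxj w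
  exact ⟨(span ℝ {x}).mkQ v, by rw [zzQbar_mk]; exact hv⟩

lemma zz_span_top_iff (x : Fin (m+1) → ℝ) (j : Fin (m+1)) (hxj : x j ≠ 0)
    {N : ℕ} (f : Fin N → Fin (m+1) → ℝ) (S : Set (Fin N)) :
    span ℝ (((span ℝ {x}).mkQ ∘ f) '' S) = ⊤ ↔
      span ℝ ((fun i => zzW x j hxj (f i)) '' S) = ⊤ := by
  have himg : zzQbar x j hxj '' (((span ℝ {x}).mkQ ∘ f) '' S)
      = (fun i => zzW x j hxj (f i)) '' S := by
    rw [← Set.image_comp]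
    exact Set.image_congr (fun i _ => zzQbar_mk x j hxj (f i))
  constructor
  · intro h
    have h2 := congrArg (Submodule.map (zzQbar x j hxj)) h
    rw [Submodule.map_span, himg, Submodule.map_top, LinearMap.range_eq_top.mpr
      (zzQbar_surjective x j hxj)] at h2
    exact h2
  · intro h
    apply Submodule.map_injective_of_injective (zzQbar_injective x j hxj)
    rw [Submodule.map_span, himg, Submodule.map_top, LinearMap.range_eq_top.mpr
      (zzQbar_surjective x j hxj)]
    exact h

end Sigma

section Lower
open Submodule MvPolynomial
variable {r N m : ℕ}

lemma zz_genset_finite (X : Fin N → Fin r → ℝ) (G : Finset (Fin N)) :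
    {p : MvPolynomial (Fin r) ℝ | ∃ Y : Finset (Fin N), Y ⊆ G ∧
      span ℝ (X '' ((G \ Y : Finset (Fin N)) : Set (Fin N))) = ⊤ ∧ p = prodPoly X Y}.Finite := by
  apply Set.Finite.subset (Set.finite_range (prodPoly X))
  rintro p ⟨Y, _, _, rfl⟩
  exact ⟨Y, rfl⟩

lemma zz_fd (X : Fin N → Fin r → ℝ) (G : Finset (Fin N)) :
    FiniteDimensional ℝ (PspaceOn X G) := by
  rw [PspaceOn]
  exact FiniteDimensional.span_of_finite ℝ (zz_genset_finite X G)

lemma zz_one_mem (X : Fin N → Fin r → ℝ) (G : Finset (Fin N))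
    (h : span ℝ (X '' ↑G) = ⊤) : (1 : MvPolynomial (Fin r) ℝ) ∈ PspaceOn X G := by
  rw [PspaceOn]
  apply subset_span
  refine ⟨∅, Finset.empty_subset G, ?_, ?_⟩
  · rw [Finset.sdiff_empty]; exact h
  · rw [prodPoly, Finset.prod_empty]

lemma zz_one_le_finrank (X : Fin N → Fin r → ℝ) (G : Finset (Fin N))
    (h : span ℝ (X '' ↑G) = ⊤) : 1 ≤ Module.finrank ℝ (PspaceOn X G) := by
  haveI := zz_fd X G
  have h1 := zz_one_mem X G h
  haveI : Nontrivial (PspaceOn X G) := ⟨⟨⟨1, h1⟩, ⟨0, zero_mem _⟩, by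
    intro hq
    have h2 := congrArg Subtype.val hq
    simpa using h2⟩⟩
  have hone : (1 : MvPolynomial (Fin r) ℝ) ≠ 0 := one_ne_zero
  have hle : span ℝ {(1 : MvPolynomial (Fin r) ℝ)} ≤ PspaceOn X G := by
    rw [span_le, Set.singleton_subset_iff]
    exact h1
  have := Submodule.finrank_mono (s := span ℝ {(1 : MvPolynomial (Fin r) ℝ)}) hle
  rwa [finrank_span_singleton hone] at this

lemma zz_bases_card_le_one (X : Fin N → Fin r → ℝ) (G : Finset (Fin N))
    (h : ¬ ∃ i0 ∈ G, X i0 ≠ 0 ∧ span ℝ (X '' ↑(G.erase i0)) = ⊤) :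
    (zzBases X G).card ≤ 1 := by
  classical
  push_neg at h
  rw [Finset.card_le_one]
  have key : ∀ B ∈ zzBases X G,
      B = G.filter (fun c => ¬ (span ℝ (X '' ↑(G.erase c)) = ⊤)) := by
    intro B hB
    obtain ⟨hBG, hli, hsp⟩ := zz_mem_bases.mp hB
    ext b
    simp only [Finset.mem_filter]
    constructor
    · intro hbB
      refine ⟨hBG hbB, ?_⟩
      have hXb' := hli.ne_zero ⟨b, hbB⟩
      have hXb : X b ≠ 0 := fun hh => hXb' hh
      exact h b (hBG hbB) hXb
    · rintro ⟨hbG, hnsp⟩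
      by_contra hbB
      apply hnsp
      rw [eq_top_iff, ← hsp]
      apply zz_span_image_mono
      intro e he
      exact Finset.mem_erase.mpr ⟨fun hh => hbB (hh ▸ he), hBG he⟩
  intro a ha b hb
  rw [key a ha, key b hb]

lemma zz_P1 (X : Fin N → Fin r → ℝ) (G : Finset (Fin N)) (i0 : Fin N) (hi0 : i0 ∈ G) :
    ∀ p ∈ PspaceOn X (G.erase i0), linPoly (X i0) * p ∈ PspaceOn X G := by
  intro p hp
  have hle : PspaceOn X (G.erase i0) ≤
      Submodule.comap (LinearMap.mulLeft ℝ (linPoly (X i0))) (PspaceOn X G) := by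
    rw [PspaceOn, span_le]
    rintro q ⟨Y, hY, hsp, rfl⟩
    show linPoly (X i0) * prodPoly X Y ∈ PspaceOn X G
    have hi0Y : i0 ∉ Y := fun h => (Finset.mem_erase.mp (hY h)).1 rfl
    rw [PspaceOn]
    apply subset_span
    refine ⟨insert i0 Y, ?_, ?_, ?_⟩
    · intro y hy
      rcases Finset.mem_insert.mp hy with h | h
      · exact h ▸ hi0
      · exact (Finset.mem_erase.mp (hY h)).2
    · rw [show G \ insert i0 Y = (G.erase i0) \ Y by
        ext a
        simp only [Finset.mem_sdiff, Finset.mem_erase, Finset.mem_insert, not_or]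
        tauto]
      exact hsp
    · rw [zz_prodPoly_insert X hi0Y]
  exact hle hp

lemma zz_erase_basis (X : Fin N → Fin (m+1) → ℝ) (i0 : Fin N) (j : Fin (m+1))
    (hxj : X i0 j ≠ 0) (G : Finset (Fin N)) {B : Finset (Fin N)}
    (hB : B ∈ zzBases X G) (hi0B : i0 ∈ B) :
    B.erase i0 ∈ zzBases (fun i => zzW (X i0) j hxj (X i)) (G.erase i0) := by
  classical
  obtain ⟨hBG, hli, hsp⟩ := zz_mem_bases.mp hB
  set W := zzW (X i0) j hxj with hW
  set X' : Fin N → Fin m → ℝ := fun i => W (X i) with hX'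
  refine zz_mem_bases.mpr ⟨?_, ?_, ?_⟩
  · intro e he
    obtain ⟨hei0, heB⟩ := Finset.mem_erase.mp he
    exact Finset.mem_erase.mpr ⟨hei0, hBG heB⟩
  · rw [zz_li_iff]
    intro c hc e he
    have hWsum : W (∑ e ∈ B.erase i0, c e • X e) = 0 := by
      rw [map_sum]
      rw [Finset.sum_congr rfl (fun e _ => by rw [map_smul])]
      exact hc
    have hmem : (∑ e ∈ B.erase i0, c e • X e) ∈ span ℝ {X i0} := by
      rw [← zzW_ker (X i0) j hxj]
      exact LinearMap.mem_ker.mpr hWsum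
    obtain ⟨t, ht⟩ := Submodule.mem_span_singleton.mp hmem
    set c' : Fin N → ℝ := fun e => if e = i0 then -t else c e with hc'
    have hsum0 : ∑ e ∈ B, c' e • X e = 0 := by
      rw [← Finset.insert_erase hi0B, Finset.sum_insert (Finset.notMem_erase _ _)]
      have h1 : c' i0 = -t := by simp [hc']
      have h2 : ∑ e ∈ B.erase i0, c' e • X e = ∑ e ∈ B.erase i0, c e • X e := by
        apply Finset.sum_congr rfl
        intro e he2
        have : e ≠ i0 := Finset.ne_of_mem_erase he2
        simp [hc', this]
      rw [h1, h2, ← ht]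
      simp
    have hall := (zz_li_iff X B).mp hli c' hsum0
    have he2 := hall e (Finset.mem_of_mem_erase he)
    have hne : e ≠ i0 := Finset.ne_of_mem_erase he
    simp only [hc', if_neg hne] at he2
    exact he2
  · have h1 : span ℝ (X' '' ↑B) = ⊤ := by
      have himg : X' '' ↑B = W '' (X '' ↑B) := by
        rw [← Set.image_comp]; rfl
      rw [himg, ← Submodule.map_span, hsp, Submodule.map_top,
        LinearMap.range_eq_top.mpr (zzW_surjective (X i0) j hxj)]
    have h2 : (↑B : Set (Fin N)) = insert i0 ↑(B.erase i0) := by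
      ext a
      simp only [Set.mem_insert_iff, Finset.coe_erase, Set.mem_diff, Finset.mem_coe,
        Set.mem_singleton_iff]
      constructor
      · intro ha
        by_cases h : a = i0
        · exact Or.inl h
        · exact Or.inr ⟨ha, h⟩
      · rintro (h | h)
        · exact h ▸ hi0B
        · exact h.1
    rw [h2, Set.image_insert_eq] at h1
    have h3 : X' i0 = 0 := zzW_x (X i0) j hxj
    rw [h3, Submodule.span_insert_zero] at h1
    exact h1

lemma zz_bases_split (X : Fin N → Fin (m+1) → ℝ) (G : Finset (Fin N)) (i0 : Fin N)
    (j : Fin (m+1)) (hxj : X i0 j ≠ 0) :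
    (zzBases X G).card ≤ (zzBases X (G.erase i0)).card
      + (zzBases (fun i => zzW (X i0) j hxj (X i)) (G.erase i0)).card := by
  classical
  rw [← Finset.card_filter_add_card_filter_not (s := zzBases X G)
    (p := fun B => i0 ∈ B)]
  have h1 : ((zzBases X G).filter (fun B => i0 ∉ B)).card
      ≤ (zzBases X (G.erase i0)).card := by
    apply Finset.card_le_card
    intro B hB
    obtain ⟨hB1, hB2⟩ := Finset.mem_filter.mp hB
    obtain ⟨hBG, hli, hsp⟩ := zz_mem_bases.mp hB1
    refine zz_mem_bases.mpr ⟨?_, hli, hsp⟩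
    intro e he
    exact Finset.mem_erase.mpr ⟨fun h => hB2 (h ▸ he), hBG he⟩
  have h2 : ((zzBases X G).filter (fun B => i0 ∈ B)).card
      ≤ (zzBases (fun i => zzW (X i0) j hxj (X i)) (G.erase i0)).card := by
    apply Finset.card_le_card_of_injOn (fun B => B.erase i0)
    · intro B hB
      obtain ⟨hB1, hB2⟩ := Finset.mem_filter.mp hB
      exact zz_erase_basis X i0 j hxj G hB1 hB2
    · intro B1 hB1 B2 hB2 heq
      have h1' := (Finset.mem_filter.mp (by exact_mod_cast hB1)).2
      have h2' := (Finset.mem_filter.mp (by exact_mod_cast hB2)).2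
      have heq' : B1.erase i0 = B2.erase i0 := heq
      rw [← Finset.insert_erase h1', ← Finset.insert_erase h2', heq']
  omega

lemma zz_contr_le (X : Fin N → Fin (m+1) → ℝ) (G : Finset (Fin N)) (i0 : Fin N)
    (hi0 : i0 ∈ G) (j : Fin (m+1)) (hxj : X i0 j ≠ 0) :
    PspaceOn (fun i => zzW (X i0) j hxj (X i)) (G.erase i0)
      ≤ Submodule.map (zzSigma (X i0) j hxj).toLinearMap (PspaceOn X G) := by
  rw [PspaceOn, span_le]
  rintro q ⟨Y, hY, hsp, rfl⟩
  refine ⟨prodPoly X Y, ?_, by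
    rw [show (zzSigma (X i0) j hxj).toLinearMap (prodPoly X Y)
      = zzSigma (X i0) j hxj (prodPoly X Y) from rfl]
    exact (zzSigma_prodPoly _ _ _ X Y)⟩
  have hi0Y : i0 ∉ Y := fun h => (Finset.mem_erase.mp (hY h)).1 rfl
  rw [PspaceOn]
  apply subset_span
  refine ⟨Y, fun y hy => (Finset.mem_erase.mp (hY hy)).2, ?_, rfl⟩
  set W := zzW (X i0) j hxj with hW
  have hker : LinearMap.ker W ≤ span ℝ (X '' ↑(G \ Y)) := by
    rw [hW, zzW_ker, span_le, Set.singleton_subset_iff]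
    exact subset_span ⟨i0, Finset.mem_coe.mpr (Finset.mem_sdiff.mpr ⟨hi0, hi0Y⟩), rfl⟩
  have hmap : Submodule.map W (span ℝ (X '' ↑(G \ Y))) = ⊤ := by
    rw [Submodule.map_span, eq_top_iff, ← hsp, span_le]
    rintro _ ⟨e, he, rfl⟩
    apply subset_span
    have he2 := Finset.mem_sdiff.mp (Finset.mem_coe.mp he)
    exact ⟨X e, ⟨e, Finset.mem_coe.mpr (Finset.mem_sdiff.mpr
      ⟨(Finset.mem_erase.mp he2.1).2, he2.2⟩), rfl⟩, rfl⟩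
  have hcm := congrArg (Submodule.comap W) hmap
  rw [Submodule.comap_map_eq, Submodule.comap_top, sup_eq_left.mpr hker] at hcm
  exact hcm

lemma zz_lower_aux : ∀ n : ℕ, ∀ (N₀ r : ℕ) (X : Fin N₀ → Fin r → ℝ) (G : Finset (Fin N₀)),
    G.card ≤ n → span ℝ (X '' ↑G) = ⊤ →
    (zzBases X G).card ≤ Module.finrank ℝ (PspaceOn X G) := by
  intro n
  induction n with
  | zero =>
    intro N₀ r X G hcard hsp
    have hempty : G = ∅ := Finset.card_eq_zero.mp (Nat.le_zero.mp hcard)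
    have hno : ¬ ∃ i0 ∈ G, X i0 ≠ 0 ∧ span ℝ (X '' ↑(G.erase i0)) = ⊤ := by
      rintro ⟨i0, hi0, _⟩
      rw [hempty] at hi0
      exact absurd hi0 (Finset.notMem_empty i0)
    exact le_trans (zz_bases_card_le_one X G hno) (zz_one_le_finrank X G hsp)
  | succ n ih =>
    intro N₀ r X G hcard hsp
    by_cases hex : ∃ i0 ∈ G, X i0 ≠ 0 ∧ span ℝ (X '' ↑(G.erase i0)) = ⊤
    case neg =>
      exact le_trans (zz_bases_card_le_one X G hex) (zz_one_le_finrank X G hsp)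
    obtain ⟨i0, hi0G, hx0, hGsp'⟩ := hex
    cases r with
    | zero => exact absurd (funext fun k => k.elim0) hx0
    | succ m =>
    have hjex : ∃ j, X i0 j ≠ 0 := by
      by_contra hc; push_neg at hc; exact hx0 (funext hc)
    obtain ⟨j, hxj⟩ := hjex
    set x := X i0 with hxdef
    set W := zzW x j hxj with hWdef
    set X' : Fin N₀ → Fin m → ℝ := fun i => W (X i) with hX'
    set σl := (zzSigma x j hxj).toLinearMap with hσl
    set P := PspaceOn X G with hP
    set P' := PspaceOn X (G.erase i0) with hP'
    set P'' := PspaceOn X' (G.erase i0) with hP''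
    haveI : FiniteDimensional ℝ P := zz_fd X G
    haveI : FiniteDimensional ℝ P' := zz_fd _ _
    haveI : FiniteDimensional ℝ P'' := zz_fd _ _
    have hcard' : (G.erase i0).card ≤ n := by
      have := Finset.card_erase_of_mem hi0G
      have hpos : 1 ≤ G.card := Finset.card_pos.mpr ⟨i0, hi0G⟩
      omega
    have hsp'' : span ℝ (X' '' ↑(G.erase i0)) = ⊤ := by
      have himg : X' '' ↑(G.erase i0) = W '' (X '' ↑(G.erase i0)) := by
        rw [← Set.image_comp]; rfl
      rw [himg, ← Submodule.map_span, hGsp', Submodule.map_top,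
        LinearMap.range_eq_top.mpr (zzW_surjective x j hxj)]
    have ih' := ih N₀ m X' (G.erase i0) hcard' hsp''
    have ih'' := ih N₀ (m+1) X (G.erase i0) hcard' hGsp'
    rw [← hP''] at ih'
    rw [← hP'] at ih''
    set f := σl.domRestrict P with hfdef
    have hrn : Module.finrank ℝ (LinearMap.range f) + Module.finrank ℝ (LinearMap.ker f)
        = Module.finrank ℝ P := LinearMap.finrank_range_add_finrank_ker f
    have hrange : LinearMap.range f = Submodule.map σl P := LinearMap.range_domRestrict P σl
    haveI hfd2 : FiniteDimensional ℝ (Submodule.map σl P) := by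
      rw [hP, PspaceOn, Submodule.map_span]
      exact FiniteDimensional.span_of_finite ℝ ((zz_genset_finite X G).image _)
    have h2 : Module.finrank ℝ P'' ≤ Module.finrank ℝ (LinearMap.range f) := by
      rw [hrange]
      exact Submodule.finrank_mono (zz_contr_le X G i0 hi0G j hxj)
    set ℓ := linPoly x with hℓdef
    have hℓ : ℓ ≠ 0 := fun h => hx0 (zz_linPoly_eq_zero h)
    set mulL := LinearMap.mulLeft ℝ ℓ with hmulL
    have hinj : Function.Injective mulL := fun a b hab => by
      have : ℓ * a = ℓ * b := hab
      exact mul_left_cancel₀ hℓ this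
    set Msub := Submodule.map mulL P' with hMsub
    have hMP : Msub ≤ P := by
      rintro _ ⟨g, hg, rfl⟩
      exact zz_P1 X G i0 hi0G g hg
    have hMker : Msub ≤ LinearMap.ker σl := by
      rintro _ ⟨g, hg, rfl⟩
      rw [LinearMap.mem_ker]
      show zzSigma x j hxj (ℓ * g) = 0
      rw [map_mul, show zzSigma x j hxj ℓ = 0 by
        rw [hℓdef, zzSigma_linPoly, zzW_x, zz_linPoly_zero], zero_mul]
    have hMK : Msub ≤ P ⊓ LinearMap.ker σl := le_inf hMP hMker
    haveI : FiniteDimensional ℝ ((P ⊓ LinearMap.ker σl : Submodule ℝ (MvPolynomial (Fin (m+1)) ℝ))) :=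
      Submodule.finiteDimensional_of_le inf_le_left
    have h3 : Module.finrank ℝ Msub ≤ Module.finrank ℝ (LinearMap.ker f) := by
      have he : LinearMap.ker f = Submodule.comap P.subtype (LinearMap.ker σl) :=
        LinearMap.ker_domRestrict P σl
      have heq : Module.finrank ℝ (LinearMap.ker f)
          = Module.finrank ℝ (P ⊓ LinearMap.ker σl : Submodule ℝ (MvPolynomial (Fin (m+1)) ℝ)) := by
        rw [he]
        have hc : Submodule.comap P.subtype (LinearMap.ker σl)
            = Submodule.comap P.subtype (P ⊓ LinearMap.ker σl) := by
          rw [Submodule.comap_inf, Submodule.comap_subtype_self, top_inf_eq]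
        rw [hc]
        exact (Submodule.comapSubtypeEquivOfLe inf_le_left).finrank_eq
      rw [heq]
      exact Submodule.finrank_mono hMK
    have h4 : Module.finrank ℝ Msub = Module.finrank ℝ P' :=
      ((Submodule.equivMapOfInjective mulL hinj P').finrank_eq).symm
    have hbs : (zzBases X G).card ≤ (zzBases X (G.erase i0)).card
        + (zzBases X' (G.erase i0)).card := zz_bases_split X G i0 j hxj
    omega

end Lower




section Assemble
open Submodule MvPolynomial

variable {N m : ℕ}

lemma zz_univ_sdiff_insert {N : ℕ} (i0 : Fin N) (Y : Finset (Fin N)) (hi0Y : i0 ∉ Y) :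
    (Finset.univ \ Y : Finset (Fin N)) = insert i0 (Finset.univ.erase i0 \ Y) := by
  ext a
  simp only [Finset.mem_sdiff, Finset.mem_univ, true_and, Finset.mem_insert,
    Finset.mem_erase]
  constructor
  · intro ha
    by_cases h : a = i0
    · exact Or.inl h
    · exact Or.inr ⟨⟨h, trivial⟩, ha⟩
  · rintro (h | h)
    · exact h ▸ hi0Y
    · exact h.2

lemma zz_part3 (X : Fin N → Fin r → ℝ) (i0 : Fin N) :
    PspaceOn X Finset.univ ≤ Submodule.comap
      (Ideal.Quotient.mkₐ ℝ (Ideal.span {linPoly (X i0)})).toLinearMap (PspaceContr X i0) := by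
  rw [PspaceOn, span_le]
  rintro q ⟨Y, hYuniv, hsp, rfl⟩
  show Ideal.Quotient.mk (Ideal.span {linPoly (X i0)}) (prodPoly X Y) ∈ PspaceContr X i0
  by_cases hi0Y : i0 ∈ Y
  · have hzero : Ideal.Quotient.mk (Ideal.span {linPoly (X i0)}) (prodPoly X Y) = 0 := by
      rw [Ideal.Quotient.eq_zero_iff_mem, zz_prodPoly_mul_erase X hi0Y,
        Ideal.mem_span_singleton]
      exact dvd_mul_right _ _
    rw [hzero]
    exact zero_mem _
  · rw [PspaceContr]
    apply subset_span
    refine ⟨Y, ?_, ?_, rfl⟩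
    · intro y hy
      exact Finset.mem_erase.mpr ⟨fun h => hi0Y (h ▸ hy), Finset.mem_univ y⟩
    · have h1 := congrArg (Submodule.map (Submodule.span ℝ {X i0}).mkQ) hsp
      rw [Submodule.map_span, Submodule.map_top, Submodule.range_mkQ] at h1
      rw [← Set.image_comp] at h1
      rw [zz_univ_sdiff_insert i0 Y hi0Y] at h1
      rw [Finset.coe_insert, Set.image_insert_eq] at h1
      have h2 : ((Submodule.span ℝ {X i0}).mkQ ∘ X) i0 = 0 := by
        simp only [Function.comp_apply, Submodule.mkQ_apply, Submodule.Quotient.mk_eq_zero]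
        exact Submodule.mem_span_singleton_self _
      rw [h2, Submodule.span_insert_zero] at h1
      exact h1

lemma zz_part4 (X : Fin N → Fin r → ℝ) (i0 : Fin N) :
    PspaceContr X i0 ≤ Submodule.map
      (Ideal.Quotient.mkₐ ℝ (Ideal.span {linPoly (X i0)})).toLinearMap (PspaceOn X Finset.univ) := by
  rw [PspaceContr, span_le]
  rintro q ⟨Y, hY, hcond, rfl⟩
  have hi0Y : i0 ∉ Y := fun h => (Finset.mem_erase.mp (hY h)).1 rfl
  refine ⟨prodPoly X Y, ?_, rfl⟩
  rw [PspaceOn]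
  apply subset_span
  refine ⟨Y, Finset.subset_univ Y, ?_, rfl⟩
  set V := span ℝ (X '' ↑(Finset.univ \ Y)) with hV
  have hxV : X i0 ∈ V := by
    apply subset_span
    exact ⟨i0, by simp [hi0Y], rfl⟩
  have hDle : span ℝ (((Submodule.span ℝ {X i0}).mkQ ∘ X) ''
      ((Finset.univ.erase i0 \ Y : Finset (Fin N)) : Set (Fin N)))
      ≤ Submodule.map (Submodule.span ℝ {X i0}).mkQ V := by
    rw [span_le]
    rintro _ ⟨e, he, rfl⟩
    have he2 := Finset.mem_sdiff.mp (Finset.mem_coe.mp he)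
    refine ⟨X e, ?_, rfl⟩
    apply subset_span
    exact ⟨e, Finset.mem_coe.mpr (Finset.mem_sdiff.mpr ⟨Finset.mem_univ e, he2.2⟩), rfl⟩
  rw [hcond] at hDle
  have hmap : Submodule.map (Submodule.span ℝ {X i0}).mkQ V = ⊤ := top_le_iff.mp hDle
  have hcm := congrArg (Submodule.comap (Submodule.span ℝ {X i0}).mkQ) hmap
  rw [Submodule.comap_map_eq, Submodule.comap_top, Submodule.ker_mkQ] at hcm
  rw [sup_eq_left.mpr (by rw [span_le, Set.singleton_subset_iff]; exact hxV)] at hcm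
  exact hcm

lemma zz_contr_eq (X : Fin N → Fin (m+1) → ℝ) (i0 : Fin N) (j : Fin (m+1))
    (hxj : X i0 j ≠ 0) :
    Submodule.map (zzQuotL (X i0) j hxj) (PspaceContr X i0)
      = PspaceOn (fun i => zzW (X i0) j hxj (X i)) (Finset.univ.erase i0) := by
  apply le_antisymm
  · rw [PspaceContr, Submodule.map_span, span_le]
    rintro _ ⟨_, ⟨Y, hY, hcond, rfl⟩, rfl⟩
    rw [zzQuotL_mk, zzSigma_prodPoly]
    rw [PspaceOn]
    apply subset_span
    refine ⟨Y, hY, ?_, rfl⟩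
    exact (zz_span_top_iff (X i0) j hxj X _).mp hcond
  · rw [PspaceOn, span_le]
    rintro _ ⟨Y, hY, hcond, rfl⟩
    refine ⟨Ideal.Quotient.mk (Ideal.span {linPoly (X i0)}) (prodPoly X Y), ?_, ?_⟩
    · rw [PspaceContr]
      apply subset_span
      refine ⟨Y, hY, ?_, rfl⟩
      exact (zz_span_top_iff (X i0) j hxj X _).mpr hcond
    · rw [zzQuotL_mk, zzSigma_prodPoly]

end Assemble


end

/-- for `x ∈ X` neither a loop nor a coloop, the sequence
`0 → 𝒫(X∖x) → 𝒫(X) → 𝒫(X/x) → 0` (multiplication by `p_x`, then `Sym(π_x)`,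
the latter realised as the quotient map `ℝ[s] → ℝ[s]/(p_x) ≅ Sym(ℝ^r/ℝx)`)
is exact. -/
theorem statement7 {r N : ℕ} (X : Fin N → Fin r → ℝ)
    (hX : Submodule.span ℝ (Set.range X) = ⊤) (i0 : Fin N)
    (hloop : X i0 ≠ 0)
    (hcoloop : Submodule.span ℝ
      (X '' ((Finset.univ.erase i0 : Finset (Fin N)) : Set (Fin N))) = ⊤) :
    (∀ p ∈ PspaceOn X (Finset.univ.erase i0),
      linPoly (X i0) * p ∈ PspaceOn X Finset.univ) ∧
    (∀ p ∈ PspaceOn X (Finset.univ.erase i0), linPoly (X i0) * p = 0 → p = 0) ∧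
    (∀ p ∈ PspaceOn X Finset.univ,
      Ideal.Quotient.mk (Ideal.span {linPoly (X i0)}) p ∈ PspaceContr X i0) ∧
    (∀ q ∈ PspaceContr X i0, ∃ p ∈ PspaceOn X Finset.univ,
      Ideal.Quotient.mk (Ideal.span {linPoly (X i0)}) p = q) ∧
    (∀ p ∈ PspaceOn X Finset.univ,
      (Ideal.Quotient.mk (Ideal.span {linPoly (X i0)}) p = 0 ↔
        ∃ g ∈ PspaceOn X (Finset.univ.erase i0), p = linPoly (X i0) * g)) := by
  classical
  have hℓ : linPoly (X i0) ≠ 0 := fun h => hloop (zz_linPoly_eq_zero h)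
  refine ⟨?_, ?_, ?_, ?_, ?_⟩
  · -- Part 1
    exact zz_P1 X Finset.univ i0 (Finset.mem_univ i0)
  · -- Part 2
    intro p _ h
    rcases mul_eq_zero.mp h with h0 | h0
    · exact absurd h0 hℓ
    · exact h0
  · -- Part 3
    intro p hp
    exact zz_part3 X i0 hp
  · -- Part 4
    intro q hq
    obtain ⟨p, hp, hEq⟩ := zz_part4 X i0 hq
    exact ⟨p, hp, hEq⟩
  · -- Part 5
    cases r with
    | zero => exact absurd (funext fun k => k.elim0) hloop
    | succ m =>
      have hjex : ∃ j, X i0 j ≠ 0 := by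
        by_contra hc; push_neg at hc; exact hloop (funext hc)
      obtain ⟨j, hxj⟩ := hjex
      set I := Ideal.span {linPoly (X i0)} with hI
      set Lₗ := (Ideal.Quotient.mkₐ ℝ I).toLinearMap with hLl
      set P := PspaceOn X Finset.univ with hP
      set P' := PspaceOn X (Finset.univ.erase i0) with hP'
      set X' : Fin N → Fin m → ℝ := fun i => zzW (X i0) j hxj (X i) with hX'
      set P'' := PspaceOn X' (Finset.univ.erase i0) with hP''
      haveI : FiniteDimensional ℝ P := zz_fd X Finset.univ
      haveI : FiniteDimensional ℝ P' := zz_fd _ _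
      haveI : FiniteDimensional ℝ P'' := zz_fd _ _
      -- the quotient image of P is the contraction space
      have hmapContr : Submodule.map Lₗ P = PspaceContr X i0 :=
        le_antisymm (Submodule.map_le_iff_le_comap.mpr (zz_part3 X i0)) (zz_part4 X i0)
      -- dimension bookkeeping
      have hsp'' : Submodule.span ℝ (X' '' ↑(Finset.univ.erase i0)) = ⊤ := by
        have himg : X' '' ↑(Finset.univ.erase i0)
            = zzW (X i0) j hxj '' (X '' ↑(Finset.univ.erase i0)) := by
          rw [← Set.image_comp]; rfl
        rw [himg, ← Submodule.map_span, hcoloop, Submodule.map_top,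
          LinearMap.range_eq_top.mpr (zzW_surjective (X i0) j hxj)]
      have hlow' : (zzBases X (Finset.univ.erase i0)).card ≤ Module.finrank ℝ P' :=
        zz_lower_aux (Finset.univ.erase i0).card N (m+1) X (Finset.univ.erase i0)
          le_rfl hcoloop
      have hlow'' : (zzBases X' (Finset.univ.erase i0)).card ≤ Module.finrank ℝ P'' :=
        zz_lower_aux (Finset.univ.erase i0).card N m X' (Finset.univ.erase i0)
          le_rfl hsp''
      have hup : Module.finrank ℝ P ≤ (zzBases X Finset.univ).card := zz_upper X Finset.univ
      have hbs : (zzBases X Finset.univ).card ≤ (zzBases X (Finset.univ.erase i0)).card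
          + (zzBases X' (Finset.univ.erase i0)).card := zz_bases_split X Finset.univ i0 j hxj
      -- finrank of the contraction space
      have hContrRank : Module.finrank ℝ (PspaceContr X i0) = Module.finrank ℝ P'' := by
        have hE := zzQuotL_bijective (X i0) j hxj
        have h1 : Submodule.map (zzQuotL (X i0) j hxj) (PspaceContr X i0) = P'' :=
          zz_contr_eq X i0 j hxj
        have h2 := (Submodule.equivMapOfInjective (zzQuotL (X i0) j hxj) hE.1
          (PspaceContr X i0)).finrank_eq
        rw [← h1]
        exact h2
      -- rank-nullity on the restriction of the quotient map
      set f := Lₗ.domRestrict P with hfdef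
      have hrn : Module.finrank ℝ (LinearMap.range f) + Module.finrank ℝ (LinearMap.ker f)
          = Module.finrank ℝ P := LinearMap.finrank_range_add_finrank_ker f
      have hrange : LinearMap.range f = Submodule.map Lₗ P := LinearMap.range_domRestrict P Lₗ
      haveI : FiniteDimensional ℝ (Submodule.map Lₗ P) := by
        rw [hP, PspaceOn, Submodule.map_span]
        exact FiniteDimensional.span_of_finite ℝ ((zz_genset_finite X Finset.univ).image _)
      have hRangeRank : Module.finrank ℝ (LinearMap.range f) = Module.finrank ℝ P'' := by
        rw [hrange, hmapContr]
        have : FiniteDimensional ℝ (PspaceContr X i0) := by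
          rw [← hmapContr]; infer_instance
        exact hContrRank
      -- the multiplication submodule
      set mulL := LinearMap.mulLeft ℝ (linPoly (X i0)) with hmulL
      have hinj : Function.Injective mulL := fun a b hab => by
        have h2 : linPoly (X i0) * a = linPoly (X i0) * b := hab
        exact mul_left_cancel₀ hℓ h2
      set Msub := Submodule.map mulL P' with hMsub
      have hMP : Msub ≤ P := by
        rintro _ ⟨g, hg, rfl⟩
        exact zz_P1 X Finset.univ i0 (Finset.mem_univ i0) g hg
      have hMker : Msub ≤ LinearMap.ker Lₗ := by
        rintro _ ⟨g, hg, rfl⟩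
        rw [LinearMap.mem_ker]
        show Ideal.Quotient.mk I (linPoly (X i0) * g) = 0
        rw [Ideal.Quotient.eq_zero_iff_mem, hI, Ideal.mem_span_singleton]
        exact dvd_mul_right _ _
      have hMK : Msub ≤ P ⊓ LinearMap.ker Lₗ := le_inf hMP hMker
      haveI : FiniteDimensional ℝ
          ((P ⊓ LinearMap.ker Lₗ : Submodule ℝ (MvPolynomial (Fin (m+1)) ℝ))) :=
        Submodule.finiteDimensional_of_le inf_le_left
      have hKerRank : Module.finrank ℝ (LinearMap.ker f)
          = Module.finrank ℝ (P ⊓ LinearMap.ker Lₗ :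
            Submodule ℝ (MvPolynomial (Fin (m+1)) ℝ)) := by
        have he : LinearMap.ker f = Submodule.comap P.subtype (LinearMap.ker Lₗ) :=
          LinearMap.ker_domRestrict P Lₗ
        rw [he]
        have hc : Submodule.comap P.subtype (LinearMap.ker Lₗ)
            = Submodule.comap P.subtype (P ⊓ LinearMap.ker Lₗ) := by
          rw [Submodule.comap_inf, Submodule.comap_subtype_self, top_inf_eq]
        rw [hc]
        exact (Submodule.comapSubtypeEquivOfLe inf_le_left).finrank_eq
      have hMrank : Module.finrank ℝ Msub = Module.finrank ℝ P' :=
        ((Submodule.equivMapOfInjective mulL hinj P').finrank_eq).symm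
      -- conclude M = K
      have hKfin : Module.finrank ℝ (P ⊓ LinearMap.ker Lₗ :
          Submodule ℝ (MvPolynomial (Fin (m+1)) ℝ)) ≤ Module.finrank ℝ Msub := by
        omega
      have hMeq : Msub = P ⊓ LinearMap.ker Lₗ :=
        Submodule.eq_of_le_of_finrank_le hMK hKfin
      -- final extraction
      intro p hp
      constructor
      · intro h0
        have hpK : p ∈ P ⊓ LinearMap.ker Lₗ := by
          refine ⟨hp, ?_⟩
          show Lₗ p = 0
          exact h0
        rw [← hMeq] at hpK
        obtain ⟨g, hg, hEq⟩ := hpK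
        exact ⟨g, hg, hEq.symm⟩
      · rintro ⟨g, hg, rfl⟩
        rw [Ideal.Quotient.eq_zero_iff_mem, Ideal.mem_span_singleton]
        exact dvd_mul_right _ _
end

section
/- For every nonempty subset 𝔅' ⊆ 𝔅(X), dim 𝒟(X,𝔅') ≥ |𝔅'|. -/
/-! ### Auxiliary development for statement9 -/

noncomputable section S9aux
open MvPolynomial Finset
set_option linter.unusedSectionVars false
set_option synthInstance.maxHeartbeats 1000000
set_option maxHeartbeats 1600000

namespace S9

variable {r : ℕ}

/-- `α! = ∏ i (α i)!` as a real number. -/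
def fact (α : Fin r →₀ ℕ) : ℝ := ∏ i, ((α i).factorial : ℝ)

lemma fact_pos (α : Fin r →₀ ℕ) : 0 < fact α :=
  Finset.prod_pos fun i _ => by positivity

lemma fact_ne_zero (α : Fin r →₀ ℕ) : fact α ≠ 0 := (fact_pos α).ne'

/-- `θ^α`. -/
def pw (θ : Fin r → ℝ) (α : Fin r →₀ ℕ) : ℝ := ∏ i, θ i ^ α i

/-- total degree of an exponent vector. -/
def degA (α : Fin r →₀ ℕ) : ℕ := ∑ i, α i

lemma degA_sum (α : Fin r →₀ ℕ) : (α.sum fun _ e => e) = degA α := by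
  rw [Finsupp.sum]
  exact Finset.sum_subset (Finset.subset_univ _)
    (fun i _ hi => Finsupp.notMem_support_iff.mp hi)

lemma degA_eq (α : Fin r →₀ ℕ) : degA α = α.degree := by
  unfold degA Finsupp.degree
  exact (Finset.sum_subset (Finset.subset_univ _)
    (fun i _ hi => Finsupp.notMem_support_iff.mp hi)).symm

lemma pairing_eq_sum_of_subset {p f : MvPolynomial (Fin r) ℝ} {s : Finset (Fin r →₀ ℕ)}
    (hs : p.support ⊆ s) :
    pairing p f = ∑ α ∈ s, (∏ i, ((α i).factorial : ℝ)) * p.coeff α * f.coeff α := by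
  unfold pairing
  exact Finset.sum_subset hs (fun α _ hα => by
    rw [MvPolynomial.notMem_support_iff.mp hα]; ring)

lemma pairing_zero_left (f : MvPolynomial (Fin r) ℝ) : pairing 0 f = 0 := by
  simp [pairing]

lemma pairing_add_left (p q f : MvPolynomial (Fin r) ℝ) :
    pairing (p + q) f = pairing p f + pairing q f := by
  rw [pairing_eq_sum_of_subset (MvPolynomial.support_add),
    pairing_eq_sum_of_subset (Finset.subset_union_left (s₂ := q.support)),
    pairing_eq_sum_of_subset (Finset.subset_union_right (s₁ := p.support)),
    ← Finset.sum_add_distrib]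
  exact Finset.sum_congr rfl fun α _ => by rw [coeff_add]; ring

lemma pairing_smul_left (c : ℝ) (p f : MvPolynomial (Fin r) ℝ) :
    pairing (c • p) f = c * pairing p f := by
  rcases eq_or_ne c 0 with rfl | hc
  · rw [zero_smul, pairing_zero_left, zero_mul]
  · unfold pairing
    rw [MvPolynomial.support_smul_eq hc, Finset.mul_sum]
    exact Finset.sum_congr rfl fun α _ => by rw [coeff_smul]; simp only [smul_eq_mul]; ring

/-- pairing as a linear map in the second argument. -/
def pairingL (p : MvPolynomial (Fin r) ℝ) : MvPolynomial (Fin r) ℝ →ₗ[ℝ] ℝ where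
  toFun f := pairing p f
  map_add' f g := pairing_add p f g
  map_smul' c f := by simp [pairing_smul]

lemma pairing_homog_ne {p f : MvPolynomial (Fin r) ℝ} {k d : ℕ}
    (hp : p.IsHomogeneous k) (hf : f.IsHomogeneous d) (hkd : k ≠ d) :
    pairing p f = 0 := by
  unfold pairing
  apply Finset.sum_eq_zero
  intro α hα
  have h1 : α.degree = k := by
    by_contra h
    exact (MvPolynomial.mem_support_iff.mp hα) (hp.coeff_eq_zero h)
  have h2 : f.coeff α = 0 := hf.coeff_eq_zero (by rw [h1]; exact hkd)
  rw [h2]; ring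

/-- truncated-exponential homogeneous piece: `∑_{|α|=d} θ^α/α! · X^α`. -/
def edeg (d : ℕ) (θ : Fin r → ℝ) : MvPolynomial (Fin r) ℝ :=
  ∑ α ∈ Finset.finsuppAntidiag (Finset.univ : Finset (Fin r)) d,
    monomial α (pw θ α / fact α)

lemma coeff_edeg (d : ℕ) (θ : Fin r → ℝ) (β : Fin r →₀ ℕ) :
    coeff β (edeg d θ) = if degA β = d then pw θ β / fact β else 0 := by
  unfold edeg
  rw [MvPolynomial.coeff_sum]
  simp only [MvPolynomial.coeff_monomial]
  rw [Finset.sum_ite_eq' (Finset.finsuppAntidiag Finset.univ d) β (fun α => pw θ α / fact α)]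
  congr 1
  simp only [Finset.mem_finsuppAntidiag, eq_iff_iff]
  constructor
  · rintro ⟨h1, _⟩; exact h1
  · intro h; exact ⟨h, Finset.subset_univ _⟩

lemma isHomog_edeg (d : ℕ) (θ : Fin r → ℝ) : (edeg d θ).IsHomogeneous d := by
  apply MvPolynomial.IsHomogeneous.sum
  intro α hα
  apply MvPolynomial.isHomogeneous_monomial
  rw [← degA_eq]
  exact (Finset.mem_finsuppAntidiag.mp hα).1

/-- `∑_{α ∈ supp p, |α| = d} p_α θ^α`. -/
def SD (d : ℕ) (p : MvPolynomial (Fin r) ℝ) (θ : Fin r → ℝ) : ℝ :=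
  ∑ α ∈ p.support.filter (fun α => degA α = d), p.coeff α * pw θ α

lemma pairing_edeg (d : ℕ) (p : MvPolynomial (Fin r) ℝ) (θ : Fin r → ℝ) :
    pairing p (edeg d θ) = SD d p θ := by
  unfold pairing SD
  rw [Finset.sum_filter]
  apply Finset.sum_congr rfl
  intro α _
  rw [coeff_edeg]
  split_ifs with h
  · rw [div_eq_mul_inv]
    have : (∏ i, ((α i).factorial : ℝ)) = fact α := rfl
    rw [this]
    field_simp [fact_ne_zero α]
  · ring

lemma SD_eq_zero_high {p : MvPolynomial (Fin r) ℝ} {d : ℕ} (h : p.totalDegree < d)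
    (θ : Fin r → ℝ) : SD d p θ = 0 := by
  apply Finset.sum_eq_zero
  intro α hα
  rcases Finset.mem_filter.mp hα with ⟨hα1, hα2⟩
  exfalso
  have := MvPolynomial.le_totalDegree hα1
  rw [degA_sum] at this
  omega

lemma eval_eq_sum_SD (p : MvPolynomial (Fin r) ℝ) (θ : Fin r → ℝ) {D : ℕ}
    (hD : p.totalDegree ≤ D) :
    eval θ p = ∑ d ∈ Finset.range (D + 1), SD d p θ := by
  unfold SD
  rw [Finset.sum_fiberwise_of_maps_to (g := degA) (fun α hα => by
    have := MvPolynomial.le_totalDegree hα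
    rw [degA_sum] at this
    exact Finset.mem_range.mpr (by omega))]
  rw [MvPolynomial.eval_eq']
  rfl

section Family

variable {ι : Type*} [Fintype ι]

/-- `∑_i a_i · E_d(θ_i)`. -/
def wE (θs : ι → Fin r → ℝ) (d : ℕ) (a : ι → ℝ) : MvPolynomial (Fin r) ℝ :=
  ∑ i, a i • edeg d (θs i)

lemma isHomog_wE (θs : ι → Fin r → ℝ) (d : ℕ) (a : ι → ℝ) :
    (wE θs d a).IsHomogeneous d := by
  rw [← MvPolynomial.mem_homogeneousSubmodule]
  exact Submodule.sum_mem _ fun i _ => Submodule.smul_mem _ _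
    ((MvPolynomial.mem_homogeneousSubmodule _ _).mpr (isHomog_edeg d (θs i)))

lemma pairing_wE (θs : ι → Fin r → ℝ) (d : ℕ) (a : ι → ℝ) (p : MvPolynomial (Fin r) ℝ) :
    pairing p (wE θs d a) = ∑ i, a i * SD d p (θs i) := by
  unfold wE
  show (pairingL p) (∑ i, a i • edeg d (θs i)) = _
  rw [map_sum (pairingL p)]
  apply Finset.sum_congr rfl
  intro i _
  show pairing p (a i • edeg d (θs i)) = _
  rw [pairing_smul, pairing_edeg]

lemma coeff_wE (θs : ι → Fin r → ℝ) (d : ℕ) (a : ι → ℝ) (β : Fin r →₀ ℕ) :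
    coeff β (wE θs d a) =
      if degA β = d then (∑ i, a i * pw (θs i) β) / fact β else 0 := by
  unfold wE
  rw [MvPolynomial.coeff_sum]
  simp only [MvPolynomial.coeff_smul, coeff_edeg, smul_eq_mul]
  split_ifs with h
  · rw [Finset.sum_div]
    exact Finset.sum_congr rfl fun i _ => by rw [mul_div_assoc]
  · simp

lemma sum_pw_eq_zero {θs : ι → Fin r → ℝ} {a : ι → ℝ}
    (h : ∀ d, wE θs d a = 0) (β : Fin r →₀ ℕ) :
    ∑ i, a i * pw (θs i) β = 0 := by
  have h2 := congrArg (coeff β) (h (degA β))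
  rw [coeff_wE, if_pos rfl, MvPolynomial.coeff_zero] at h2
  exact (div_eq_zero_iff.mp h2).resolve_right (fact_ne_zero β)

lemma sum_eval_eq_zero {θs : ι → Fin r → ℝ} {a : ι → ℝ}
    (h : ∀ d, wE θs d a = 0) (p : MvPolynomial (Fin r) ℝ) :
    ∑ i, a i * eval (θs i) p = 0 := by
  have : ∀ i, eval (θs i) p = ∑ α ∈ p.support, p.coeff α * pw (θs i) α := by
    intro i; rw [MvPolynomial.eval_eq']; rfl
  simp only [this, Finset.mul_sum]
  rw [Finset.sum_comm]
  apply Finset.sum_eq_zero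
  intro α _
  have := sum_pw_eq_zero h α
  calc ∑ i, a i * (p.coeff α * pw (θs i) α)
      = p.coeff α * ∑ i, a i * pw (θs i) α := by
        rw [Finset.mul_sum]; exact Finset.sum_congr rfl fun i _ => by ring
    _ = 0 := by rw [this, mul_zero]

lemma separation [DecidableEq ι] {θs : ι → Fin r → ℝ} (hinj : Function.Injective θs) (a : ι → ℝ)
    (h : ∀ d, wE θs d a = 0) : a = 0 := by
  by_contra ha
  rcases Function.ne_iff.mp ha with ⟨i₀, hi₀⟩
  have hex : ∀ x : {y : ι // y ∈ Finset.univ.erase i₀}, ∃ j, θs x.1 j ≠ θs i₀ j := by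
    intro x
    have : θs x.1 ≠ θs i₀ := fun hh => (Finset.mem_erase.mp x.2).1 (hinj hh)
    exact Function.ne_iff.mp this
  choose J hJ using hex
  set p : MvPolynomial (Fin r) ℝ :=
    ∏ x ∈ (Finset.univ.erase i₀).attach, (X (J x) - C (θs x.1 (J x))) with hp
  have heval0 : ∀ k, k ≠ i₀ → eval (θs k) p = 0 := by
    intro k hk
    rw [hp, map_prod]
    apply Finset.prod_eq_zero (Finset.mem_attach _ ⟨k, Finset.mem_erase.mpr ⟨hk, Finset.mem_univ _⟩⟩)
    simp
  have hevali₀ : eval (θs i₀) p ≠ 0 := by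
    rw [hp, map_prod]
    apply Finset.prod_ne_zero_iff.mpr
    intro x _
    simp only [map_sub, MvPolynomial.eval_X, MvPolynomial.eval_C]
    exact sub_ne_zero.mpr (Ne.symm (hJ x))
  have hsum := sum_eval_eq_zero h p
  rw [Finset.sum_eq_single_of_mem i₀ (Finset.mem_univ _) (fun k _ hk => by
    rw [heval0 k hk, mul_zero])] at hsum
  exact hi₀ ((mul_eq_zero.mp hsum).resolve_right hevali₀)

end Family

section Membership

variable {N : ℕ}

lemma eval_linPoly (u : Fin r → ℝ) (θ : Fin r → ℝ) :
    eval θ (linPoly u) = ∑ k, u k * θ k := by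
  unfold linPoly
  rw [map_sum]
  simp

lemma isHomog_linPoly (u : Fin r → ℝ) : (linPoly u).IsHomogeneous 1 :=
  MvPolynomial.IsHomogeneous.sum _ _ _ fun i _ => MvPolynomial.isHomogeneous_C_mul_X _ _

lemma isHomog_prodPoly (X : Fin N → Fin r → ℝ) (C : Finset (Fin N)) :
    (prodPoly X C).IsHomogeneous C.card := by
  have := MvPolynomial.IsHomogeneous.prod C (fun j => linPoly (X j)) (fun _ => 1)
    (fun j _ => isHomog_linPoly (X j))
  rw [Finset.sum_const, smul_eq_mul, mul_one] at this
  exact this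

lemma isHomog_totalDegree_le {p : MvPolynomial (Fin r) ℝ} {n : ℕ}
    (h : p.IsHomogeneous n) : p.totalDegree ≤ n := by
  apply Finset.sup_le
  intro α hα
  rw [degA_sum, degA_eq]
  by_contra hne
  exact (MvPolynomial.mem_support_iff.mp hα) (h.coeff_eq_zero (fun hh => hne (le_of_eq hh)))

lemma pairing_finset_sum_left {κ : Type*} (s : Finset κ) (g : κ → MvPolynomial (Fin r) ℝ)
    (f : MvPolynomial (Fin r) ℝ) :
    pairing (∑ k ∈ s, g k) f = ∑ k ∈ s, pairing (g k) f := by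
  induction s using Finset.cons_induction with
  | empty => simpa using pairing_zero_left f
  | cons k s hk ih => rw [Finset.sum_cons, Finset.sum_cons, pairing_add_left, ih]

variable (X : Fin N → Fin r → ℝ) (cc : Fin N → ℝ)

/-- the affine product `∏_{j∈C} (⟨X_j, s⟩ - c_j)`. -/
def tprod (Co : Finset (Fin N)) : MvPolynomial (Fin r) ℝ :=
  ∏ j ∈ Co, (linPoly (X j) - MvPolynomial.C (cc j))

lemma eval_tprod_zero (Co : Finset (Fin N)) (θ : Fin r → ℝ) {j₀ : Fin N} (hj₀ : j₀ ∈ Co)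
    (hz : ∑ k, X j₀ k * θ k = cc j₀) :
    eval θ (tprod X cc Co) = 0 := by
  unfold tprod
  rw [map_prod]
  apply Finset.prod_eq_zero hj₀
  rw [map_sub, eval_linPoly, MvPolynomial.eval_C, hz, sub_self]

lemma tprod_expand (Co : Finset (Fin N)) :
    tprod X cc Co = ∑ S ∈ Co.powerset, (∏ j ∈ Co \ S, (-(cc j))) • prodPoly X S := by
  unfold tprod prodPoly
  have : ∀ j ∈ Co, linPoly (X j) - MvPolynomial.C (cc j)
      = linPoly (X j) + MvPolynomial.C (-(cc j)) := by
    intro j _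
    rw [map_neg, sub_eq_add_neg]
  rw [Finset.prod_congr rfl this, Finset.prod_add]
  apply Finset.sum_congr rfl
  intro S _
  rw [← map_prod (MvPolynomial.C : ℝ →+* MvPolynomial (Fin r) ℝ), mul_comm, MvPolynomial.C_mul']

/-- Key computation: homogeneous case. -/
lemma pairing_homog_mul_prod {ι : Type*} [Fintype ι] (θs : ι → Fin r → ℝ)
    (Bs : ι → Finset (Fin N))
    (hθc : ∀ i, ∀ b ∈ Bs i, ∑ k, X b k * θs i k = cc b)
    {q : MvPolynomial (Fin r) ℝ} {e₀ : ℕ} (hq : q.IsHomogeneous e₀)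
    (C : Finset (Fin N)) {d : ℕ} (hd : e₀ + C.card = d)
    (hcov : ∀ i : ι, ∃ j ∈ C, j ∈ Bs i)
    (a : ι → ℝ) (hlow : ∀ e, e < d → wE θs e a = 0) :
    pairing (q * prodPoly X C) (wE θs d a) = 0 := by
  set P := q * tprod X cc C with hP
  have hPdeg : P.totalDegree ≤ d := by
    rw [hP, tprod_expand, Finset.mul_sum]
    apply le_trans (MvPolynomial.totalDegree_finset_sum _ _)
    apply Finset.sup_le
    intro S hS
    rw [mul_smul_comm]
    apply le_trans (MvPolynomial.totalDegree_smul_le _ _)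
    apply le_trans (isHomog_totalDegree_le (hq.mul (isHomog_prodPoly X S)))
    have hcard : S.card ≤ C.card := Finset.card_le_card (Finset.mem_powerset.mp hS)
    omega
  have hPev : ∀ i, eval (θs i) P = 0 := by
    intro i
    rcases hcov i with ⟨j₀, hj₀C, hj₀B⟩
    rw [hP, map_mul, eval_tprod_zero X cc C _ hj₀C (hθc i j₀ hj₀B), mul_zero]
  have E3 : ∑ e ∈ Finset.range (d + 1), pairing P (wE θs e a) = 0 := by
    have : ∀ e ∈ Finset.range (d+1), pairing P (wE θs e a) = ∑ i, a i * SD e P (θs i) :=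
      fun e _ => pairing_wE θs e a P
    rw [Finset.sum_congr rfl this, Finset.sum_comm]
    apply Finset.sum_eq_zero
    intro i _
    calc ∑ e ∈ Finset.range (d+1), a i * SD e P (θs i)
        = a i * ∑ e ∈ Finset.range (d+1), SD e P (θs i) := by rw [Finset.mul_sum]
      _ = a i * eval (θs i) P := by rw [← eval_eq_sum_SD P (θs i) hPdeg]
      _ = 0 := by rw [hPev i, mul_zero]
  rw [Finset.sum_range_succ, Finset.sum_eq_zero (fun e he => by
    rw [hlow e (Finset.mem_range.mp he), pairing_zero]), zero_add] at E3
  -- replace P by q * prodPoly X C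
  rw [hP, tprod_expand, Finset.mul_sum] at E3
  have expand : ∀ S ∈ C.powerset, q * ((∏ j ∈ C \ S, (-(cc j))) • prodPoly X S)
      = (∏ j ∈ C \ S, (-(cc j))) • (q * prodPoly X S) := fun S _ => mul_smul_comm _ _ _
  rw [Finset.sum_congr rfl expand, pairing_finset_sum_left] at E3
  rw [Finset.sum_eq_single_of_mem C (Finset.mem_powerset_self C) (fun S hS hSne => by
    rw [pairing_smul_left, pairing_homog_ne (hq.mul (isHomog_prodPoly X S)) (isHomog_wE θs d a)
      (by have h1 := Finset.card_le_card (Finset.mem_powerset.mp hS)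
          have h2 : S.card ≠ C.card := fun hcc =>
            hSne (Finset.eq_of_subset_of_card_le (Finset.mem_powerset.mp hS) (le_of_eq hcc.symm))
          omega), mul_zero])] at E3
  rw [Finset.sdiff_self, Finset.prod_empty, one_smul] at E3
  exact E3

/-- Key computation: general multiplier. -/
lemma pairing_mul_prod {ι : Type*} [Fintype ι] (θs : ι → Fin r → ℝ)
    (Bs : ι → Finset (Fin N))
    (hθc : ∀ i, ∀ b ∈ Bs i, ∑ k, X b k * θs i k = cc b)
    (h : MvPolynomial (Fin r) ℝ) (C : Finset (Fin N)) (d : ℕ)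
    (hcov : ∀ i : ι, ∃ j ∈ C, j ∈ Bs i)
    (a : ι → ℝ) (hlow : ∀ e, e < d → wE θs e a = 0) :
    pairing (h * prodPoly X C) (wE θs d a) = 0 := by
  conv_lhs => rw [← MvPolynomial.sum_homogeneousComponent h]
  rw [Finset.sum_mul, pairing_finset_sum_left]
  apply Finset.sum_eq_zero
  intro e _
  by_cases hed : e + C.card = d
  · exact pairing_homog_mul_prod X cc θs Bs hθc
      (MvPolynomial.homogeneousComponent_isHomogeneous e h) C hed hcov a hlow
  · exact pairing_homog_ne
      ((MvPolynomial.homogeneousComponent_isHomogeneous e h).mul (isHomog_prodPoly X C))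
      (isHomog_wE θs d a) hed

lemma mem_kerIdeal_iff (I : Ideal (MvPolynomial (Fin r) ℝ)) (f : MvPolynomial (Fin r) ℝ) :
    f ∈ kerIdeal I ↔ ∀ q ∈ I, pairing q f = 0 := Iff.rfl

/-- The key membership result: lowest-order pieces belong to `𝒟(X, 𝔅')`. -/
lemma wE_mem_Dspace {ι : Type*} [Fintype ι] (θs : ι → Fin r → ℝ)
    (𝔅' : Set (Finset (Fin N))) (Bs : ι → Finset (Fin N))
    (hθc : ∀ i, ∀ b ∈ Bs i, ∑ k, X b k * θs i k = cc b)
    (hBs : ∀ i, Bs i ∈ 𝔅')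
    (d : ℕ) (a : ι → ℝ) (hlow : ∀ e, e < d → wE θs e a = 0) :
    wE θs d a ∈ Dspace X Finset.univ 𝔅' := by
  rw [Dspace, mem_kerIdeal_iff]
  intro q hq
  have key : ∀ q ∈ Jideal X Finset.univ 𝔅', ∀ h, pairing (h * q) (wE θs d a) = 0 := by
    intro q hq
    refine Submodule.span_induction ?_ ?_ ?_ ?_ hq
    · rintro p ⟨C, hC, rfl⟩ h
      apply pairing_mul_prod X cc θs Bs hθc h C d _ a hlow
      intro i
      rcases hC.2.1 (Bs i) (hBs i) with ⟨j, hj⟩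
      rcases Finset.mem_inter.mp hj with ⟨hj1, hj2⟩
      exact ⟨j, hj1, hj2⟩
    · intro h
      rw [mul_zero, pairing_zero_left]
    · intro x y _ _ hx hy h
      rw [mul_add, pairing_add_left, hx h, hy h, add_zero]
    · intro c x _ hx h
      rw [smul_eq_mul, ← mul_assoc]
      exact hx (h * c)
  have := key q hq 1
  rwa [one_mul] at this

end Membership

section Core

variable {N : ℕ} {ι : Type*} [Fintype ι]

/-- `wE` as a linear map in `a`. -/
def wL (θs : ι → Fin r → ℝ) (d : ℕ) : (ι → ℝ) →ₗ[ℝ] MvPolynomial (Fin r) ℝ where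
  toFun a := wE θs d a
  map_add' a b := by
    unfold wE
    rw [← Finset.sum_add_distrib]
    exact Finset.sum_congr rfl fun i _ => by rw [Pi.add_apply, add_smul]
  map_smul' m a := by
    unfold wE
    rw [RingHom.id_apply, Finset.smul_sum]
    exact Finset.sum_congr rfl fun i _ => by rw [Pi.smul_apply, smul_smul, smul_eq_mul]

/-- Core induction: from a subspace of coefficient vectors whose moments separate,
produce that many independent elements of `𝒟`. -/
lemma core (θs : ι → Fin r → ℝ) (X : Fin N → Fin r → ℝ) (cc : Fin N → ℝ)
    (𝔅' : Set (Finset (Fin N))) (Bs : ι → Finset (Fin N))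
    (hθc : ∀ i, ∀ b ∈ Bs i, ∑ k, X b k * θs i k = cc b)
    (hBs : ∀ i, Bs i ∈ 𝔅') :
    ∀ (n : ℕ) (A : Submodule ℝ (ι → ℝ)) (dstar : ℕ),
    Module.finrank ℝ A = n →
    (∀ a ∈ A, ∀ e, e < dstar → wE θs e a = 0) →
    (∀ a ∈ A, a ≠ 0 → ∃ e, wE θs e a ≠ 0) →
    ∃ f : Fin n → MvPolynomial (Fin r) ℝ, LinearIndependent ℝ f ∧
      (∀ k, f k ∈ Dspace X Finset.univ 𝔅') ∧
      (∀ k, ∃ e, dstar ≤ e ∧ (f k).IsHomogeneous e) := by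
  intro n
  induction n using Nat.strong_induction_on with
  | _ n ih =>
    intro A dstar hrank hlow hsep
    classical
    by_cases hA : A = ⊥
    · have hn : n = 0 := by rw [← hrank, hA, finrank_bot]
      subst hn
      exact ⟨Fin.elim0, linearIndependent_empty_type, fun k => k.elim0, fun k => k.elim0⟩
    · obtain ⟨a₀, ha₀A, ha₀ne⟩ := (Submodule.ne_bot_iff A).mp hA
      have hex : ∃ e, ∃ a ∈ A, wE θs e a ≠ 0 := by
        obtain ⟨e, he⟩ := hsep a₀ ha₀A ha₀ne
        exact ⟨e, a₀, ha₀A, he⟩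
      set d₀ := Nat.find hex with hd₀
      obtain ⟨b₀, hb₀A, hb₀ne⟩ := Nat.find_spec hex
      have hmin : ∀ e, e < d₀ → ∀ a ∈ A, wE θs e a = 0 := by
        intro e he a ha
        by_contra hcon
        exact Nat.find_min hex he ⟨a, ha, hcon⟩
      have hd₀star : dstar ≤ d₀ := by
        by_contra hcon
        exact hb₀ne (hlow b₀ hb₀A d₀ (by omega))
      set F : A →ₗ[ℝ] MvPolynomial (Fin r) ℝ := (wL θs d₀) ∘ₗ A.subtype with hF
      have hrn := LinearMap.finrank_range_add_finrank_ker F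
      set k := Module.finrank ℝ (LinearMap.range F) with hk
      set n' := Module.finrank ℝ (LinearMap.ker F) with hn'
      have hkpos : 0 < k := by
        rcases Nat.eq_zero_or_pos k with h0 | h
        · exfalso
          have hbot : LinearMap.range F = ⊥ := Submodule.finrank_eq_zero.mp (by rw [← hk]; exact h0)
          have hmem : wE θs d₀ b₀ ∈ LinearMap.range F := ⟨⟨b₀, hb₀A⟩, rfl⟩
          rw [hbot, Submodule.mem_bot] at hmem
          exact hb₀ne hmem
        · exact h
      -- the sub-subspace
      set A' : Submodule ℝ (ι → ℝ) := Submodule.map A.subtype (LinearMap.ker F) with hA'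
      have hA'rank : Module.finrank ℝ A' = n' := by
        rw [hA']
        exact (LinearEquiv.finrank_eq (Submodule.equivSubtypeMap A (LinearMap.ker F))).symm
      have hA'le : ∀ a ∈ A', a ∈ A ∧ wE θs d₀ a = 0 := by
        rintro a ⟨⟨x, hxA⟩, hxker, rfl⟩
        exact ⟨hxA, hxker⟩
      obtain ⟨f', hf'ind, hf'mem, hf'deg⟩ := ih n' (by omega) A' (d₀ + 1)
        hA'rank
        (fun a ha e he => by
          rcases Nat.lt_succ_iff_lt_or_eq.mp he with h | h
          · exact hmin e h a (hA'le a ha).1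
          · rw [h]; exact (hA'le a ha).2)
        (fun a ha => hsep a (hA'le a ha).1)
      -- basis of the range of F
      let bR := Module.finBasis ℝ (LinearMap.range F)
      have hcard : Module.finrank ℝ (LinearMap.range F) = k := rfl
      set g : Fin k → MvPolynomial (Fin r) ℝ :=
        fun j => ((bR (Fin.cast (by rw [hcard]) j)) : MvPolynomial (Fin r) ℝ) with hg
      have hgind : LinearIndependent ℝ g := by
        have h1 : LinearIndependent ℝ (fun j : Fin k => bR (Fin.cast (by rw [hcard]) j)) :=
          bR.linearIndependent.comp _ (fun x y h => by
            simpa using congrArg (Fin.cast hcard) h)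
        exact h1.map' (LinearMap.range F).subtype (Submodule.ker_subtype _)
      have hgprop : ∀ j, g j ∈ Dspace X Finset.univ 𝔅' ∧ (g j).IsHomogeneous d₀ := by
        intro j
        obtain ⟨⟨a, haA⟩, hFa⟩ := (bR (Fin.cast (by rw [hcard]) j)).2
        have : g j = wE θs d₀ a := by rw [hg]; exact hFa.symm
        rw [this]
        exact ⟨wE_mem_Dspace X cc θs 𝔅' Bs hθc hBs d₀ a (fun e he => hmin e he a haA),
          isHomog_wE θs d₀ a⟩
      -- combine
      have hdisj : Disjoint (Submodule.span ℝ (Set.range g))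
          (Submodule.span ℝ (Set.range f')) := by
        rw [Submodule.disjoint_def]
        intro x hx1 hx2
        have hxh : x ∈ MvPolynomial.homogeneousSubmodule (Fin r) ℝ d₀ := by
          refine Submodule.span_le.mpr ?_ hx1
          rintro y ⟨j, rfl⟩
          exact (MvPolynomial.mem_homogeneousSubmodule _ _).mpr (hgprop j).2
        have hxk : x ∈ LinearMap.ker (MvPolynomial.homogeneousComponent
            (σ := Fin r) (R := ℝ) d₀) := by
          refine Submodule.span_le.mpr ?_ hx2
          rintro y ⟨l, rfl⟩
          obtain ⟨e, hee, heh⟩ := hf'deg l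
          have := MvPolynomial.homogeneousComponent_of_mem (m := d₀)
            ((MvPolynomial.mem_homogeneousSubmodule _ _).mpr heh)
          simp only [SetLike.mem_coe, LinearMap.mem_ker, this]
          rw [if_neg (by omega)]
        have h1 := MvPolynomial.homogeneousComponent_of_mem (m := d₀) hxh
        rw [if_pos rfl] at h1
        rw [← h1]
        exact LinearMap.mem_ker.mp hxk
      have hsum : LinearIndependent ℝ (Sum.elim g f') :=
        hgind.sum_type hf'ind hdisj
      -- reindex
      have hkn : k + n' = n := by omega
      set eqv : Fin n ≃ Fin k ⊕ Fin n' := (finCongr hkn).symm.trans finSumFinEquiv.symm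
      refine ⟨Sum.elim g f' ∘ eqv, hsum.comp eqv eqv.injective, ?_, ?_⟩
      · intro kk
        rcases heq : eqv kk with j | l
        · simp only [Function.comp_apply, heq, Sum.elim_inl]
          exact (hgprop j).1
        · simp only [Function.comp_apply, heq, Sum.elim_inr]
          exact hf'mem l
      · intro kk
        rcases heq : eqv kk with j | l
        · exact ⟨d₀, hd₀star, by
            simp only [Function.comp_apply, heq, Sum.elim_inl]; exact (hgprop j).2⟩
        · obtain ⟨e, hee, heh⟩ := hf'deg l
          exact ⟨e, by omega, by
            simp only [Function.comp_apply, heq, Sum.elim_inr]; exact heh⟩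

end Core

section Points

variable {N : ℕ}

/-- Avoid finitely many kernels of nonzero functionals. -/
lemma avoid_functionals {V : Type*} [AddCommGroup V] [Module ℝ V] {κ : Type*} [DecidableEq κ]
    (s : Finset κ) (φ : κ → (V →ₗ[ℝ] ℝ)) (h : ∀ k ∈ s, φ k ≠ 0) :
    ∃ v : V, ∀ k ∈ s, φ k v ≠ 0 := by
  classical
  induction s using Finset.induction_on with
  | empty => exact ⟨0, by simp⟩
  | @insert k0 s hk0 ih =>
    obtain ⟨v, hv⟩ := ih (fun k hk => h k (Finset.mem_insert_of_mem hk))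
    have hk0ne : φ k0 ≠ 0 := h k0 (Finset.mem_insert_self _ _)
    have : ∃ u, φ k0 u ≠ 0 := by
      by_contra hc
      push_neg at hc
      exact hk0ne (LinearMap.ext fun x => hc x)
    obtain ⟨u, hu⟩ := this
    set bad : κ → ℝ := fun k' => if φ k' u = 0 then 0 else (-(φ k' v)/(φ k' u)) with hbad
    obtain ⟨t, ht⟩ := Infinite.exists_notMem_finset ((insert k0 s).image bad)
    refine ⟨v + t • u, ?_⟩
    intro k hk
    rw [map_add, map_smul, smul_eq_mul]
    by_cases hku : φ k u = 0
    · have hks : k ∈ s := by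
        rcases Finset.mem_insert.mp hk with rfl | hks
        · exact absurd hku hu
        · exact hks
      rw [hku, mul_zero, add_zero]
      exact hv k hks
    · intro hcon
      apply ht
      apply Finset.mem_image.mpr
      refine ⟨k, hk, ?_⟩
      rw [hbad]
      simp only [if_neg hku]
      field_simp
      linarith [hcon]

/-- the standard pairing as a linear map. -/
def dotL (u : Fin r → ℝ) : (Fin r → ℝ) →ₗ[ℝ] ℝ where
  toFun θ := ∑ k, u k * θ k
  map_add' a b := by
    simp only [Pi.add_apply, mul_add]
    rw [Finset.sum_add_distrib]
  map_smul' m a := by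
    simp only [Pi.smul_apply, smul_eq_mul, RingHom.id_apply]
    rw [Finset.mul_sum]
    exact Finset.sum_congr rfl fun k _ => by ring

variable (X : Fin N → Fin r → ℝ)

lemma theta_unique {B : Finset (Fin N)}
    (hspan : Submodule.span ℝ (X '' (B : Set (Fin N))) = ⊤)
    (θ : Fin r → ℝ) (h : ∀ b ∈ B, ∑ k, X b k * θ k = 0) : θ = 0 := by
  -- the functional v ↦ ∑ v k * θ k vanishes on the image, hence everywhere
  set ψ : (Fin r → ℝ) →ₗ[ℝ] ℝ := dotL θ with hψ
  have hker : Submodule.span ℝ (X '' (B : Set (Fin N))) ≤ LinearMap.ker ψ := by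
    rw [Submodule.span_le]
    rintro y ⟨b, hb, rfl⟩
    rw [SetLike.mem_coe, LinearMap.mem_ker, hψ]
    show ∑ k, θ k * X b k = 0
    rw [← h b hb]
    exact Finset.sum_congr rfl fun k _ => by ring
  rw [hspan, top_le_iff] at hker
  funext i
  have h0 := LinearMap.congr_fun (LinearMap.ker_eq_top.mp hker) (Pi.single i 1)
  simp only [LinearMap.zero_apply] at h0
  have h2 : ψ (Pi.single i 1) = θ i := by
    rw [hψ]
    show ∑ k, θ k * (Pi.single i (1:ℝ) : Fin r → ℝ) k = θ i
    rw [Finset.sum_eq_single i (fun k _ hk => by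
      rw [Pi.single_eq_of_ne hk, mul_zero]) (fun hi => absurd (Finset.mem_univ i) hi)]
    rw [Pi.single_eq_same, mul_one]
  rw [Pi.zero_apply, ← h2, h0]

lemma card_of_mem_basesOn {B : Finset (Fin N)} (hB : B ∈ basesOn X Finset.univ) :
    B.card = r := by
  obtain ⟨-, hind, hspan⟩ := hB
  have hrange : Set.range ((B : Set (Fin N)).restrict X) = X '' (B : Set (Fin N)) :=
    Set.range_restrict X (B : Set (Fin N))
  let bas : Module.Basis ↥(B : Set (Fin N)) ℝ (Fin r → ℝ) :=
    Module.Basis.mk hind (by rw [hrange, hspan])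
  have hcardB : Module.finrank ℝ (Fin r → ℝ) = Fintype.card ↥(B : Set (Fin N)) :=
    Module.finrank_eq_card_basis bas
  rw [Module.finrank_pi, Fintype.card_fin] at hcardB
  rw [hcardB]
  simp [Fintype.card_coe]

/-- For every basis `B` there is a linear solve map `c ↦ θ_B(c)`. -/
lemma exists_solveMap {B : Finset (Fin N)} (hB : B ∈ basesOn X Finset.univ) :
    ∃ L : (Fin N → ℝ) →ₗ[ℝ] (Fin r → ℝ),
      ∀ cc : Fin N → ℝ, ∀ b ∈ B, ∑ k, X b k * (L cc) k = cc b := by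
  classical
  obtain ⟨-, hind, hspan⟩ := hB
  -- basis of the ambient space given by the columns of B
  have hrange : Set.range ((B : Set (Fin N)).restrict X) = X '' (B : Set (Fin N)) :=
    Set.range_restrict X (B : Set (Fin N))
  let bas : Module.Basis ↥(B : Set (Fin N)) ℝ (Fin r → ℝ) :=
    Module.Basis.mk hind (by rw [hrange, hspan])
  have hcardB : Module.finrank ℝ (Fin r → ℝ) = Fintype.card ↥(B : Set (Fin N)) :=
    Module.finrank_eq_card_basis bas
  set T : (Fin r → ℝ) →ₗ[ℝ] (↥(B : Set (Fin N)) → ℝ) :=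
    LinearMap.pi (fun b => dotL (X b.1)) with hT
  have hinj : Function.Injective T := by
    rw [← LinearMap.ker_eq_bot]
    apply (Submodule.eq_bot_iff _).mpr
    intro θ hθ
    rw [LinearMap.mem_ker] at hθ
    apply theta_unique X hspan
    intro b hb
    have := congrFun hθ ⟨b, hb⟩
    simpa [hT, dotL] using this
  have hdim : Module.finrank ℝ (Fin r → ℝ) = Module.finrank ℝ (↥(B : Set (Fin N)) → ℝ) := by
    rw [hcardB, Module.finrank_pi]
  let E := T.linearEquivOfInjective hinj hdim
  refine ⟨E.symm.toLinearMap ∘ₗ LinearMap.funLeft ℝ ℝ (fun b : ↥(B : Set (Fin N)) => b.1), ?_⟩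
  intro cc b hb
  have h1 : T (E.symm (fun b : ↥(B : Set (Fin N)) => cc b.1)) =
      (fun b : ↥(B : Set (Fin N)) => cc b.1) := by
    have h2 := LinearMap.linearEquivOfInjective_apply (f := T) hinj hdim
      (E.symm (fun b : ↥(B : Set (Fin N)) => cc b.1))
    rw [← h2]
    exact E.apply_symm_apply _
  have := congrFun h1 ⟨b, hb⟩
  simp [hT, dotL] at this ⊢
  exact this

/-- Existence of generic interpolation data. -/
lemma exists_theta (𝔅' : Set (Finset (Fin N))) (hsub : 𝔅' ⊆ basesOn X Finset.univ)
    [Fintype ↥𝔅'] :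
    ∃ (cc : Fin N → ℝ) (θs : ↥𝔅' → (Fin r → ℝ)), Function.Injective θs ∧
      ∀ i : ↥𝔅', ∀ b ∈ (i.1 : Finset (Fin N)), ∑ k, X b k * θs i k = cc b := by
  classical
  have hper : ∀ i : ↥𝔅', ∃ L : (Fin N → ℝ) →ₗ[ℝ] (Fin r → ℝ),
      ∀ cc : Fin N → ℝ, ∀ b ∈ i.1, ∑ k, X b k * (L cc) k = cc b :=
    fun i => exists_solveMap X (hsub i.2)
  choose L hL using hper
  -- pair functionals
  have hpair : ∀ p : ↥𝔅' × ↥𝔅', p.1 ≠ p.2 →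
      ∃ ψ : (Fin N → ℝ) →ₗ[ℝ] ℝ, ψ ≠ 0 ∧ ∀ cc, ψ cc ≠ 0 → L p.1 cc ≠ L p.2 cc := by
    rintro ⟨i, i'⟩ hne
    -- find b₀ ∈ B_i \ B_i'
    have hBne : (i.1 : Finset (Fin N)) ≠ i'.1 := fun h => hne (Subtype.ext h)
    have hcards : (i.1 : Finset (Fin N)).card = (i'.1 : Finset (Fin N)).card := by
      rw [card_of_mem_basesOn X (hsub i.2), card_of_mem_basesOn X (hsub i'.2)]
    have hnotsub : ¬ (i.1 : Finset (Fin N)) ⊆ i'.1 := by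
      intro hss
      exact hBne (Finset.eq_of_subset_of_card_le hss (le_of_eq hcards.symm))
    obtain ⟨b₀, hb₀i, hb₀i'⟩ := Finset.not_subset.mp hnotsub
    set c₀ : Fin N → ℝ := Pi.single b₀ 1 with hc₀
    have hLi' : L i' c₀ = 0 := by
      apply theta_unique X (hsub i'.2).2.2
      intro b hb
      rw [hL i' c₀ b hb, hc₀, Pi.single_eq_of_ne (fun hh : b = b₀ => hb₀i' (by rw [← hh]; exact hb)) 1]
    have hLi : L i c₀ ≠ 0 := by
      intro hcon
      have := hL i c₀ b₀ hb₀i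
      rw [hcon] at this
      simp only [Pi.zero_apply, mul_zero, Finset.sum_const_zero] at this
      rw [hc₀, Pi.single_eq_same] at this
      exact one_ne_zero this.symm
    have hdiff : L i c₀ - L i' c₀ ≠ 0 := by rw [hLi', sub_zero]; exact hLi
    obtain ⟨j, hj⟩ := Function.ne_iff.mp (fun hh : L i c₀ - L i' c₀ = (0 : Fin r → ℝ) => hdiff hh)
    refine ⟨(LinearMap.proj j) ∘ₗ (L i - L i'), ?_, ?_⟩
    · intro hzero
      apply hj
      have := LinearMap.congr_fun hzero c₀
      simpa using this
    · intro cc hcc hcon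
      apply hcc
      show (L i - L i') cc j = 0
      rw [LinearMap.sub_apply, hcon]
      simp
  set pairs : Finset (↥𝔅' × ↥𝔅') := Finset.univ.filter (fun p => p.1 ≠ p.2) with hpairs
  set φ : ↥𝔅' × ↥𝔅' → ((Fin N → ℝ) →ₗ[ℝ] ℝ) :=
    fun p => if h : p.1 ≠ p.2 then Classical.choose (hpair p h) else 0 with hφ
  obtain ⟨cc, hcc⟩ := avoid_functionals pairs φ (by
    intro p hp
    have hne : p.1 ≠ p.2 := (Finset.mem_filter.mp hp).2
    rw [hφ]
    simp only [dif_pos hne]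
    exact (Classical.choose_spec (hpair p hne)).1)
  refine ⟨cc, fun i => L i cc, ?_, fun i => hL i cc⟩
  intro i i' hii
  by_contra hne
  have hne' : i ≠ i' := hne
  have hp : (i, i') ∈ pairs := by
    rw [hpairs]
    exact Finset.mem_filter.mpr ⟨Finset.mem_univ _, hne'⟩
  have := hcc (i, i') hp
  rw [hφ] at this
  simp only [dif_pos hne'] at this
  exact (Classical.choose_spec (hpair (i, i') hne')).2 cc this hii

end Points

section Finiteness

variable {N : ℕ}

lemma exists_cocircuit_subset (𝔅' : Set (Finset (Fin N))) (Y : Finset (Fin N))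
    (hY : ∀ B ∈ 𝔅', ((Y ∩ B).Nonempty)) :
    ∃ C ⊆ Y, isCocircuitOn Finset.univ 𝔅' C := by
  classical
  induction Y using Finset.strongInductionOn with
  | _ Y ih =>
    by_cases hmin : ∀ C' ⊆ Y, (∀ B ∈ 𝔅', (C' ∩ B).Nonempty) → C' = Y
    · exact ⟨Y, Finset.Subset.refl Y, Finset.subset_univ _, hY, hmin⟩
    · push_neg at hmin
      obtain ⟨C', hC'sub, hC'cov, hC'ne⟩ := hmin
      obtain ⟨C, hCsub, hC⟩ := ih C' (Finset.ssubset_iff_subset_ne.mpr ⟨hC'sub, hC'ne⟩) hC'cov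
      exact ⟨C, hCsub.trans hC'sub, hC⟩

/-- coefficient-wise real part. -/
def reP (g : MvPolynomial (Fin r) ℂ) : MvPolynomial (Fin r) ℝ :=
  ∑ α ∈ g.support, monomial α ((g.coeff α).re)

lemma coeff_reP (g : MvPolynomial (Fin r) ℂ) (β : Fin r →₀ ℕ) :
    (reP g).coeff β = (g.coeff β).re := by
  unfold reP
  rw [MvPolynomial.coeff_sum]
  simp only [MvPolynomial.coeff_monomial]
  rw [Finset.sum_ite_eq' g.support β (fun α => (g.coeff α).re)]
  split_ifs with h
  · rfl
  · rw [MvPolynomial.notMem_support_iff.mp h, Complex.zero_re]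

lemma reP_add (g h : MvPolynomial (Fin r) ℂ) : reP (g + h) = reP g + reP h := by
  apply MvPolynomial.ext
  intro β
  rw [MvPolynomial.coeff_add, coeff_reP, coeff_reP, coeff_reP, MvPolynomial.coeff_add,
    Complex.add_re]

lemma reP_zero : reP (0 : MvPolynomial (Fin r) ℂ) = 0 := by
  apply MvPolynomial.ext
  intro β
  rw [coeff_reP, MvPolynomial.coeff_zero, MvPolynomial.coeff_zero, Complex.zero_re]

lemma reP_map_mul (h : MvPolynomial (Fin r) ℝ) (g : MvPolynomial (Fin r) ℂ) :
    reP (MvPolynomial.map (algebraMap ℝ ℂ) h * g) = h * reP g := by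
  apply MvPolynomial.ext
  intro β
  rw [coeff_reP, MvPolynomial.coeff_mul, MvPolynomial.coeff_mul, Complex.re_sum]
  apply Finset.sum_congr rfl
  rintro ⟨u, v⟩ _
  rw [MvPolynomial.coeff_map, coeff_reP]
  simp [Complex.coe_algebraMap, Complex.mul_re]

lemma reP_map (h : MvPolynomial (Fin r) ℝ) :
    reP (MvPolynomial.map (algebraMap ℝ ℂ) h) = h := by
  apply MvPolynomial.ext
  intro β
  rw [coeff_reP, MvPolynomial.coeff_map]
  simp

/-- coefficient-wise imaginary part. -/
def imP (g : MvPolynomial (Fin r) ℂ) : MvPolynomial (Fin r) ℝ :=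
  reP (MvPolynomial.C (-Complex.I) * g)

lemma coeff_imP (g : MvPolynomial (Fin r) ℂ) (β : Fin r →₀ ℕ) :
    (imP g).coeff β = (g.coeff β).im := by
  unfold imP
  rw [coeff_reP, MvPolynomial.coeff_C_mul]
  simp [Complex.mul_re]

lemma imP_map_mul (h : MvPolynomial (Fin r) ℝ) (g : MvPolynomial (Fin r) ℂ) :
    imP (MvPolynomial.map (algebraMap ℝ ℂ) h * g) = h * imP g := by
  unfold imP
  rw [mul_left_comm]
  exact reP_map_mul h _

lemma imP_map (h : MvPolynomial (Fin r) ℝ) :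
    imP (MvPolynomial.map (algebraMap ℝ ℂ) h) = 0 := by
  apply MvPolynomial.ext
  intro β
  rw [coeff_imP, MvPolynomial.coeff_map, MvPolynomial.coeff_zero]
  simp

lemma reP_C_I_mul (g : MvPolynomial (Fin r) ℂ) :
    reP (MvPolynomial.C Complex.I * g) = - imP g := by
  apply MvPolynomial.ext
  intro β
  rw [coeff_reP, MvPolynomial.coeff_C_mul, MvPolynomial.coeff_neg, coeff_imP]
  simp [Complex.mul_re]

lemma imP_C_I_mul (g : MvPolynomial (Fin r) ℂ) :
    imP (MvPolynomial.C Complex.I * g) = reP g := by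
  apply MvPolynomial.ext
  intro β
  rw [coeff_imP, MvPolynomial.coeff_C_mul, coeff_reP]
  simp [Complex.mul_im]

lemma decomposeC (g : MvPolynomial (Fin r) ℂ) :
    g = MvPolynomial.map (algebraMap ℝ ℂ) (reP g)
      + MvPolynomial.C Complex.I * MvPolynomial.map (algebraMap ℝ ℂ) (imP g) := by
  apply MvPolynomial.ext
  intro β
  rw [MvPolynomial.coeff_add, MvPolynomial.coeff_map, MvPolynomial.coeff_C_mul,
    MvPolynomial.coeff_map, coeff_reP, coeff_imP]
  apply Complex.ext <;> simp

/-- The "real-parts-in-J" ideal. -/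
def TI (J : Ideal (MvPolynomial (Fin r) ℝ)) : Ideal (MvPolynomial (Fin r) ℂ) where
  carrier := {g | reP g ∈ J ∧ imP g ∈ J}
  add_mem' := by
    rintro a b ⟨ha1, ha2⟩ ⟨hb1, hb2⟩
    constructor
    · rw [reP_add]; exact J.add_mem ha1 hb1
    · unfold imP
      rw [mul_add, reP_add]
      exact J.add_mem ha2 hb2
  zero_mem' := by
    constructor
    · rw [reP_zero]; exact J.zero_mem
    · unfold imP
      rw [mul_zero, reP_zero]
      exact J.zero_mem
  smul_mem' := by
    rintro u g ⟨hg1, hg2⟩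
    rw [smul_eq_mul]
    have hdec : u * g = MvPolynomial.map (algebraMap ℝ ℂ) (reP u) * g
        + MvPolynomial.C Complex.I * (MvPolynomial.map (algebraMap ℝ ℂ) (imP u) * g) := by
      conv_lhs => rw [decomposeC u]
      ring
    constructor
    · rw [hdec, reP_add, reP_map_mul, reP_C_I_mul, imP_map_mul]
      exact J.add_mem (J.mul_mem_left _ hg1) (J.neg_mem (J.mul_mem_left _ hg2))
    · unfold imP
      rw [hdec, mul_add, reP_add]
      show reP (MvPolynomial.C (-Complex.I) * (MvPolynomial.map (algebraMap ℝ ℂ) (reP u) * g))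
        + reP (MvPolynomial.C (-Complex.I)
          * (MvPolynomial.C Complex.I * (MvPolynomial.map (algebraMap ℝ ℂ) (imP u) * g))) ∈ J
      have h1 : reP (MvPolynomial.C (-Complex.I)
          * (MvPolynomial.map (algebraMap ℝ ℂ) (reP u) * g)) = (reP u) * imP g := by
        rw [mul_left_comm]
        rw [reP_map_mul]
        rfl
      have h2 : MvPolynomial.C (-Complex.I)
          * (MvPolynomial.C Complex.I * (MvPolynomial.map (algebraMap ℝ ℂ) (imP u) * g))
          = MvPolynomial.map (algebraMap ℝ ℂ) (imP u) * g := by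
        rw [← mul_assoc, ← MvPolynomial.C_mul]
        simp
      rw [h1, h2, reP_map_mul]
      exact J.add_mem (J.mul_mem_left _ hg2) (J.mul_mem_left _ hg1)

lemma map_le_TI (J : Ideal (MvPolynomial (Fin r) ℝ)) :
    Ideal.map (MvPolynomial.map (algebraMap ℝ ℂ)) J ≤ TI J := by
  rw [Ideal.map_le_iff_le_comap]
  intro h hh
  show reP _ ∈ J ∧ imP _ ∈ J
  rw [reP_map, imP_map]
  exact ⟨hh, J.zero_mem⟩

end Finiteness

section Nullstellensatz

variable {N : ℕ}

lemma eval_map_linPoly (u : Fin r → ℝ) (x : Fin r → ℂ) :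
    eval x (MvPolynomial.map (algebraMap ℝ ℂ) (linPoly u)) = ∑ k, (u k : ℂ) * x k := by
  unfold linPoly
  rw [map_sum (MvPolynomial.map (algebraMap ℝ ℂ)), map_sum (eval x)]
  apply Finset.sum_congr rfl
  intro k _
  rw [map_mul, MvPolynomial.map_C, MvPolynomial.map_X, map_mul,
    MvPolynomial.eval_C, MvPolynomial.eval_X]
  norm_num

lemma zeroLocus_Jc (X : Fin N → Fin r → ℝ) (𝔅' : Set (Finset (Fin N)))
    (hsub : 𝔅' ⊆ basesOn X Finset.univ) :
    ∀ x ∈ MvPolynomial.zeroLocus ℂ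
      (Ideal.map (MvPolynomial.map (algebraMap ℝ ℂ)) (Jideal X Finset.univ 𝔅')), x = 0 := by
  classical
  intro x hx
  by_contra hxne
  set Y : Finset (Fin N) :=
    Finset.univ.filter (fun j => (∑ k, (X j k : ℂ) * x k) ≠ 0) with hY
  have hYcov : ∀ B ∈ 𝔅', ((Y ∩ B).Nonempty) := by
    intro B hB
    by_contra hempty
    rw [Finset.not_nonempty_iff_eq_empty] at hempty
    have hall : ∀ b ∈ B, ∑ k, (X b k : ℂ) * x k = 0 := by
      intro b hb
      by_contra hbne
      have hbY : b ∈ Y := by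
        rw [hY]
        exact Finset.mem_filter.mpr ⟨Finset.mem_univ _, hbne⟩
      exact (Finset.eq_empty_iff_forall_notMem.mp hempty b)
        (Finset.mem_inter.mpr ⟨hbY, hb⟩)
    apply hxne
    -- the ℝ-linear functional v ↦ ∑ (v k : ℂ) * x k kills a spanning set
    set ψ : (Fin r → ℝ) →ₗ[ℝ] ℂ :=
      { toFun := fun v => ∑ k, (v k : ℂ) * x k
        map_add' := by
          intro a b
          rw [← Finset.sum_add_distrib]
          exact Finset.sum_congr rfl fun k _ => by
            simp only [Pi.add_apply, Complex.ofReal_add]; ring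
        map_smul' := by
          intro m a
          simp only [RingHom.id_apply]
          rw [Complex.real_smul, Finset.mul_sum]
          exact Finset.sum_congr rfl fun k _ => by
            simp only [Pi.smul_apply, smul_eq_mul, Complex.ofReal_mul]; ring } with hψ
    have hker : Submodule.span ℝ (X '' (B : Set (Fin N))) ≤ LinearMap.ker ψ := by
      rw [Submodule.span_le]
      rintro y ⟨b, hb, rfl⟩
      rw [SetLike.mem_coe, LinearMap.mem_ker]
      exact hall b hb
    rw [(hsub hB).2.2, top_le_iff, LinearMap.ker_eq_top] at hker
    funext k
    have h0 := LinearMap.congr_fun hker (Pi.single k 1)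
    simp only [LinearMap.zero_apply] at h0
    rw [hψ] at h0
    simp only [LinearMap.coe_mk, AddHom.coe_mk] at h0
    rw [Finset.sum_eq_single k (fun j _ hj => by
      rw [Pi.single_eq_of_ne hj, Complex.ofReal_zero, zero_mul])
      (fun hk => absurd (Finset.mem_univ k) hk)] at h0
    rw [Pi.single_eq_same, Complex.ofReal_one, one_mul] at h0
    exact h0
  obtain ⟨C, hCY, hCcoc⟩ := exists_cocircuit_subset 𝔅' Y hYcov
  have hmem : MvPolynomial.map (algebraMap ℝ ℂ) (prodPoly X C)
      ∈ Ideal.map (MvPolynomial.map (algebraMap ℝ ℂ)) (Jideal X Finset.univ 𝔅') :=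
    Ideal.mem_map_of_mem _ (Ideal.subset_span ⟨C, hCcoc, rfl⟩)
  have heval : eval x (MvPolynomial.map (algebraMap ℝ ℂ) (prodPoly X C)) = 0 :=
    (MvPolynomial.mem_zeroLocus_iff.mp hx) _ hmem
  have hevalprod : eval x (MvPolynomial.map (algebraMap ℝ ℂ) (prodPoly X C))
      = ∏ j ∈ C, ∑ k, (X j k : ℂ) * x k := by
    unfold prodPoly
    rw [map_prod (MvPolynomial.map (algebraMap ℝ ℂ)), map_prod (eval x)]
    exact Finset.prod_congr rfl fun j _ => eval_map_linPoly (X j) x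
  rw [hevalprod] at heval
  obtain ⟨j, hjC, hj0⟩ := Finset.prod_eq_zero_iff.mp heval
  have : j ∈ Y := hCY hjC
  rw [hY] at this
  exact (Finset.mem_filter.mp this).2 hj0

lemma pow_mem_J (X : Fin N → Fin r → ℝ) (𝔅' : Set (Finset (Fin N)))
    (hsub : 𝔅' ⊆ basesOn X Finset.univ) (i : Fin r) :
    ∃ n, (MvPolynomial.X i : MvPolynomial (Fin r) ℝ)^n ∈ Jideal X Finset.univ 𝔅' := by
  set J := Jideal X Finset.univ 𝔅' with hJ
  set Jc := Ideal.map (MvPolynomial.map (algebraMap ℝ ℂ)) J with hJc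
  have hXrad : (MvPolynomial.X i : MvPolynomial (Fin r) ℂ) ∈ Jc.radical := by
    rw [← MvPolynomial.vanishingIdeal_zeroLocus_eq_radical (K := ℂ)]
    rw [MvPolynomial.mem_vanishingIdeal_iff]
    intro x hxz
    rw [zeroLocus_Jc X 𝔅' hsub x hxz]
    simp
  obtain ⟨n, hn⟩ := hXrad
  refine ⟨n, ?_⟩
  have hmap : MvPolynomial.map (algebraMap ℝ ℂ)
      ((MvPolynomial.X i : MvPolynomial (Fin r) ℝ)^n)
      = (MvPolynomial.X i : MvPolynomial (Fin r) ℂ)^n := by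
    rw [map_pow, MvPolynomial.map_X]
  have hinTI : MvPolynomial.map (algebraMap ℝ ℂ)
      ((MvPolynomial.X i : MvPolynomial (Fin r) ℝ)^n) ∈ TI J := by
    apply map_le_TI J
    rw [hmap]
    exact hn
  have := hinTI.1
  rwa [reP_map] at this

/-- `𝒟(X,𝔅')` is finite dimensional. -/
lemma finiteDimensional_D (X : Fin N → Fin r → ℝ) (𝔅' : Set (Finset (Fin N)))
    (hsub : 𝔅' ⊆ basesOn X Finset.univ) :
    FiniteDimensional ℝ ↥(Dspace X Finset.univ 𝔅') := by
  classical
  choose n hn using pow_mem_J X 𝔅' hsub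
  set DD := ∑ i, n i with hDD
  have hle : Dspace X Finset.univ 𝔅' ≤ MvPolynomial.restrictTotalDegree (Fin r) ℝ DD := by
    intro f hf
    rw [MvPolynomial.mem_restrictTotalDegree]
    have hcoef : ∀ α ∈ f.support, ∀ i, α i < n i := by
      intro α hα i
      by_contra hge
      push_neg at hge
      have hsum : Finsupp.single i (n i) + (α - Finsupp.single i (n i)) = α := by
        ext j
        rcases eq_or_ne j i with rfl | hj
        · simp only [Finsupp.add_apply, Finsupp.tsub_apply, Finsupp.single_eq_same]
          omega
        · simp only [Finsupp.add_apply, Finsupp.tsub_apply,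
            Finsupp.single_eq_of_ne' (Ne.symm hj)]
          omega
      have hsplit : (monomial α (1:ℝ)) = (MvPolynomial.X i)^(n i)
          * monomial (α - Finsupp.single i (n i)) 1 := by
        rw [MvPolynomial.X_pow_eq_monomial, MvPolynomial.monomial_mul, one_mul, hsum]
      have hmono : (monomial α (1:ℝ)) ∈ Jideal X Finset.univ 𝔅' := by
        rw [hsplit]
        exact Ideal.mul_mem_right _ _ (hn i)
      have hz := hf _ hmono
      rw [pairing_eq_sum_of_subset (s := {α}) MvPolynomial.support_monomial_subset,
        Finset.sum_singleton, MvPolynomial.coeff_monomial, if_pos rfl, mul_one] at hz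
      exact (MvPolynomial.mem_support_iff.mp hα)
        ((mul_eq_zero.mp hz).resolve_left (fact_ne_zero α))
    apply Finset.sup_le
    intro α hα
    calc (α.sum fun _ e => e) = degA α := degA_sum α
      _ = ∑ i, α i := rfl
      _ ≤ ∑ i, n i := Finset.sum_le_sum fun i _ => le_of_lt (hcoef α hα i)
  exact Submodule.finiteDimensional_of_le hle

end Nullstellensatz

end S9

end S9aux

/-- `dim 𝒟(X,𝔅') ≥ |𝔅'|` for every nonempty `𝔅' ⊆ 𝔅(X)`. -/
theorem statement9 {r N : ℕ} (X : Fin N → Fin r → ℝ)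
    (hX : Submodule.span ℝ (Set.range X) = ⊤)
    (𝔅' : Set (Finset (Fin N))) (hne : 𝔅'.Nonempty)
    (hsub : 𝔅' ⊆ basesOn X Finset.univ) :
    𝔅'.ncard ≤ Module.finrank ℝ ↥(Dspace X Finset.univ 𝔅') := by
  classical
  haveI : Fintype ↥𝔅' := Fintype.ofFinite _
  obtain ⟨cc, θs, hinj, hθc⟩ := S9.exists_theta X 𝔅' hsub
  haveI := S9.finiteDimensional_D X 𝔅' hsub
  set m := Fintype.card ↥𝔅' with hm
  have hrank : Module.finrank ℝ (⊤ : Submodule ℝ (↥𝔅' → ℝ)) = m := by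
    rw [finrank_top, Module.finrank_pi]
  obtain ⟨f, hfind, hfmem, -⟩ := S9.core θs X cc 𝔅' (fun i => i.1) hθc (fun i => i.2)
    m ⊤ 0 hrank (fun a _ e he => absurd he (Nat.not_lt_zero e))
    (fun a _ hane => by
      by_contra hc
      push_neg at hc
      exact hane (S9.separation hinj a hc))
  set fD : Fin m → ↥(Dspace X Finset.univ 𝔅') := fun k => ⟨f k, hfmem k⟩ with hfD0
  have hfD : LinearIndependent ℝ fD := by
    apply LinearIndependent.of_comp (Dspace X Finset.univ 𝔅').subtype
    exact hfind
  have hcard := hfD.fintype_card_le_finrank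
  rw [Fintype.card_fin] at hcard
  have hncard : 𝔅'.ncard = m := by
    rw [← Nat.card_coe_set_eq, Nat.card_eq_fintype_card]
  rw [hncard]
  exact hcard
end
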